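/- arXiv:2101.11255 — 11 statements merged into one kernel-verified Lean document; each statement's English description precedes it below -/
import Mathlib

section
/- Suppose s > 1/2 and 0 < r ≤ (2s-1)/(2(1-s)). Then every traveling wave of the gene-drive frequency system with speed c ∈ ℝ is trivial, i.e., its profile P is identically zero on ℝ. -/
set_option maxHeartbeats 1000000

open Set Filter Real

/-- If `deriv f ≥ m` on `[a,b]`, then `f a + m*(b-a) ≤ f b`. -/
lemma grow (f : ℝ → ℝ) (hf : Differentiable ℝ f) (m a b : ℝ) (hab : a ≤ b)
    (hm : ∀ x ∈ Set.Icc a b, m ≤ deriv f x) : f a + m * (b - a) ≤ f b := by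
  have hgd : Differentiable ℝ (fun x => f x - m * x) := by fun_prop
  have hg : MonotoneOn (fun x => f x - m * x) (Set.Icc a b) := by
    apply monotoneOn_of_deriv_nonneg (convex_Icc a b)
      hgd.continuous.continuousOn
      (fun x _ => (hgd x).differentiableWithinAt)
    intro x hx
    rw [interior_Icc] at hx
    have hd : HasDerivAt (fun x => f x - m * x) (deriv f x - m) x :=
      (hf x).hasDerivAt.sub (by simpa using (hasDerivAt_id x).const_mul m)
    rw [hd.deriv]
    have := hm x ⟨hx.1.le, hx.2.le⟩
    linarith
  have := hg (Set.left_mem_Icc.mpr hab) (Set.right_mem_Icc.mpr hab) hab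
  simp only at this
  linarith

/-- If `s > 1/2` and `0 < r ≤ (2s-1)/(2(1-s))`, then every traveling wave
of the gene-drive frequency system with speed `c` is trivial, i.e. `P ≡ 0`. -/
theorem stmt0
    (s r c : ℝ) (hs : s ∈ Set.Ico (0 : ℝ) 1) (hr : 0 < r)
    (hs' : 1 / 2 < s) (hr' : r ≤ (2 * s - 1) / (2 * (1 - s)))
    (P N : ℝ → ℝ)
    (hP2 : ContDiff ℝ 2 P) (hN2 : ContDiff ℝ 2 N)
    (hNpos : ∀ x, 0 < N x)
    (hPbd : Bornology.IsBounded (Set.range P))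
    (hNbd : Bornology.IsBounded (Set.range N))
    (hPnn : ∀ x, 0 ≤ P x)
    (hPmono : Monotone P) (hNanti : StrictAnti N)
    (hPlim : Filter.Tendsto P Filter.atBot (nhds 0))
    (hNlim : Filter.Tendsto N Filter.atBot (nhds 1))
    (heqP : ∀ x, -deriv (deriv P) x - c * deriv P x - 2 * (deriv N x / N x) * deriv P x
      = (r * (1 - N x) + 1) * P x * (1 - P x) * (s * P x - (2 * s - 1)))
    (heqN : ∀ x, -deriv (deriv N) x - c * deriv N x
      = N x * ((1 - s + s * (1 - P x) ^ 2) * (r * (1 - N x) + 1) - 1)) :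
    ∀ x, P x = 0 := by
  have hs0 : 0 ≤ s := hs.1
  have hs1 : s < 1 := hs.2
  have h1s : 0 < 1 - s := by linarith
  -- the condition 2(1-s)(1+r) ≤ 1
  have hcond : 2 * (1 - s) * (r + 1) ≤ 1 := by
    have := (le_div_iff₀ (by positivity : (0:ℝ) < 2 * (1 - s))).mp hr'
    nlinarith
  -- differentiability
  have hPd : Differentiable ℝ P := hP2.differentiable (by norm_num)
  have hNd : Differentiable ℝ N := hN2.differentiable (by norm_num)
  have hP1d : Differentiable ℝ (deriv P) := by
    have h2 : ContDiff ℝ ((1:ℕ∞)+1) P := by exact_mod_cast hP2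
    exact (contDiff_succ_iff_deriv.mp h2).2.2.differentiable (by norm_num)
  have hN1d : Differentiable ℝ (deriv N) := by
    have h2 : ContDiff ℝ ((1:ℕ∞)+1) N := by exact_mod_cast hN2
    exact (contDiff_succ_iff_deriv.mp h2).2.2.differentiable (by norm_num)
  -- N < 1
  have hNlt1 : ∀ x, N x < 1 := by
    intro x
    have hle : ∀ y, N y ≤ 1 := by
      intro y
      refine ge_of_tendsto hNlim ?_
      filter_upwards [eventually_le_atBot (y - 1)] with z hz
      exact (hNanti (by linarith : z < y)).le
    exact lt_of_lt_of_le (hNanti (by linarith : x - 1 < x)) (hle (x - 1))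
  -- the combined function u = N * P
  set u : ℝ → ℝ := fun x => N x * P x with hu_def
  have hud : Differentiable ℝ u := hNd.mul hPd
  have hderu : deriv u = fun x => deriv N x * P x + N x * deriv P x :=
    funext fun x => deriv_mul (hNd x) (hPd x)
  have hu1d : Differentiable ℝ (deriv u) := by
    rw [hderu]
    exact (hN1d.mul hPd).add (hNd.mul hP1d)
  have hder2 : ∀ x, deriv (deriv u) x
      = deriv (deriv N) x * P x + 2 * (deriv N x * deriv P x) + N x * deriv (deriv P) x := by
    intro x
    rw [hderu, deriv_fun_add (f := fun y => deriv N y * P y) (g := fun y => N y * deriv P y) ((hN1d x).mul (hPd x)) ((hNd x).mul (hP1d x)),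
      deriv_fun_mul (hN1d x) (hPd x), deriv_fun_mul (hNd x) (hP1d x)]
    ring
  -- key identity
  have key : ∀ x, deriv (deriv u) x + c * deriv u x
      = u x * (1 - (1 - s) * (2 - P x) * (r * (1 - N x) + 1)) := by
    intro x
    have e1 := heqP x
    have e2 := heqN x
    have hN0 : N x ≠ 0 := (hNpos x).ne'
    rw [hder2 x, hderu]
    field_simp at e1
    simp only [hu_def]
    linear_combination (-(P x)) * e2 - e1
  -- positivity of u
  have hu0 : ∀ x, 0 ≤ u x := fun x => mul_nonneg (hNpos x).le (hPnn x)
  -- quantitative bracket bound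
  have hBq : ∀ x, min (P x / 2) 1 ≤ 1 - (1 - s) * (2 - P x) * (r * (1 - N x) + 1) := by
    intro x
    have hρ1 : r * (1 - N x) + 1 ≤ r + 1 := by nlinarith [hNpos x]
    have hρ0 : 0 < r * (1 - N x) + 1 := by nlinarith [hNlt1 x]
    rcases le_or_gt (P x) 2 with hP2' | hP2'
    · refine le_trans (min_le_left _ _) ?_
      nlinarith [mul_nonneg (mul_nonneg h1s.le (by linarith : (0:ℝ) ≤ 2 - P x)) hρ0.le,
        mul_le_mul_of_nonneg_left hρ1 (mul_nonneg h1s.le (by linarith : (0:ℝ) ≤ 2 - P x))]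
    · refine le_trans (min_le_right _ _) ?_
      nlinarith [mul_nonpos_of_nonpos_of_nonneg
        (by nlinarith : (1 - s) * (2 - P x) ≤ 0) hρ0.le]
  have hknn : ∀ x, 0 ≤ deriv (deriv u) x + c * deriv u x := by
    intro x
    rw [key x]
    exact mul_nonneg (hu0 x)
      (le_trans (le_min (by nlinarith [hPnn x]) (by norm_num)) (hBq x))
  -- the function φ = e^{cx} u'
  set φ : ℝ → ℝ := fun t => Real.exp (c * t) * deriv u t with hφdef
  have hexp : ∀ x : ℝ, HasDerivAt (fun y => Real.exp (c * y)) (c * Real.exp (c * x)) x := by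
    intro x
    have := ((hasDerivAt_id x).const_mul c).exp
    simpa [mul_comm] using this
  have hφD : ∀ x, HasDerivAt φ (Real.exp (c * x) * (deriv (deriv u) x + c * deriv u x)) x := by
    intro x
    have h : HasDerivAt (fun y => Real.exp (c * y) * deriv u y)
        (c * Real.exp (c * x) * deriv u x + Real.exp (c * x) * deriv (deriv u) x) x :=
      (hexp x).mul ((hu1d x).hasDerivAt)
    convert h using 1
    ring
  have hφd : Differentiable ℝ φ := fun x => (hφD x).differentiableAt
  have hφmono : Monotone φ := by
    apply monotone_of_deriv_nonneg hφd
    intro x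
    rw [(hφD x).deriv]
    exact mul_nonneg (Real.exp_pos _).le (hknn x)
  -- u tends to 0 at -∞
  have hulim : Filter.Tendsto u Filter.atBot (nhds 0) := by
    simpa using hNlim.mul hPlim
  -- u' ≥ 0
  have hu' : ∀ x, 0 ≤ deriv u x := by
    by_contra hcon
    push_neg at hcon
    obtain ⟨x1, hx1⟩ := hcon
    have hφ1 : φ x1 < 0 := mul_neg_of_pos_of_neg (Real.exp_pos _) hx1
    have hneg : ∀ x ≤ x1, deriv u x < 0 := by
      intro x hx
      have h1 : φ x ≤ φ x1 := hφmono hx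
      simp only [hφdef] at h1 hφ1
      nlinarith [Real.exp_pos (c * x)]
    have hSA : StrictAntiOn u (Set.Iic x1) := by
      apply strictAntiOn_of_deriv_neg (convex_Iic x1) hud.continuous.continuousOn
      intro x hx
      rw [interior_Iic] at hx
      exact hneg x hx.le
    have hge : u (x1 - 1) ≤ 0 := by
      refine ge_of_tendsto hulim ?_
      filter_upwards [eventually_le_atBot (x1 - 1)] with z hz
      rcases eq_or_lt_of_le hz with h | h
      · rw [h]
      · exact (hSA (Set.mem_Iic.mpr (by linarith)) (Set.mem_Iic.mpr (by linarith)) h).le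
    have h2 : u x1 < u (x1 - 1) :=
      hSA (Set.mem_Iic.mpr (by linarith)) (Set.mem_Iic.mpr le_rfl) (by linarith)
    have := hu0 x1
    linarith
  have humono : Monotone u := monotone_of_deriv_nonneg hud hu'
  -- upper bound on u
  obtain ⟨C, hCabs⟩ : ∃ C, ∀ x, |P x| ≤ C := by
    obtain ⟨C, hC⟩ := isBounded_iff_forall_norm_le.mp hPbd
    exact ⟨C, fun x => by simpa using hC _ (Set.mem_range_self x)⟩
  have hCnn : 0 ≤ C := le_trans (abs_nonneg _) (hCabs 0)
  have hC : ∀ x, u x ≤ C := by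
    intro x
    have h1 := abs_le.mp (hCabs x)
    simp only [hu_def]
    nlinarith [hNlt1 x, hNpos x, hPnn x, h1.2]
  -- the final unboundedness argument
  have final : ∀ m' a, 0 < m' → (∀ z, a ≤ z → m' ≤ deriv u z) → False := by
    intro m' a hm' hlow
    set b := a + (C + 1) / m' with hb_def
    have hab : a ≤ b := by
      have h0 : 0 ≤ (C + 1) / m' := div_nonneg (by linarith) hm'.le
      rw [hb_def]
      linarith
    have hgrow := grow u hud m' a b hab (fun w hw => hlow w hw.1)
    have heq : m' * (b - a) = C + 1 := by
      rw [hb_def]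
      field_simp
      ring
    have := hC b
    have := hu0 a
    linarith
  -- main argument
  intro x
  by_contra hPx
  have hp0 : 0 < P x := lt_of_le_of_ne (hPnn x) (Ne.symm hPx)
  have hδpos : 0 < min (P x / 2) 1 := lt_min (by linarith) one_pos
  have hu0x : 0 < u x := mul_pos (hNpos x) hp0
  set m := u x * min (P x / 2) 1 with hm_def
  have hmpos : 0 < m := mul_pos hu0x hδpos
  have hmlb : ∀ y, x ≤ y → m ≤ deriv (deriv u) y + c * deriv u y := by
    intro y hy
    rw [key y]
    have h1 : u x ≤ u y := humono hy
    have h2 : min (P x / 2) 1 ≤ 1 - (1 - s) * (2 - P y) * (r * (1 - N y) + 1) := by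
      refine le_trans ?_ (hBq y)
      exact min_le_min (by have := hPmono hy; linarith) le_rfl
    exact mul_le_mul h1 h2 hδpos.le (le_trans hu0x.le h1)
  rcases le_or_gt c 0 with hc | hc
  · -- c ≤ 0 : u'' ≥ m on [x,∞)
    have hd2 : ∀ y, x ≤ y → m ≤ deriv (deriv u) y := by
      intro y hy
      have h1 := hmlb y hy
      have h2 : c * deriv u y ≤ 0 := mul_nonpos_of_nonpos_of_nonneg hc (hu' y)
      linarith
    refine final m (x + 1) hmpos ?_
    intro z hz
    have hgrow := grow (deriv u) hu1d m x z (by linarith) (fun w hw => hd2 w hw.1)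
    nlinarith [hu' x]
  · -- c > 0 : use φ
    have hφx : 0 ≤ φ x := mul_nonneg (Real.exp_pos _).le (hu' x)
    have hφlb : ∀ y, x ≤ y → (m / c) * (Real.exp (c * y) - Real.exp (c * x)) ≤ φ y := by
      intro y hy
      have hgrow := grow (fun t => φ t - (m / c) * Real.exp (c * t))
        (by fun_prop)
        0 x y hy ?_
      · nlinarith
      · intro w hw
        have hD : HasDerivAt (fun t => φ t - (m / c) * Real.exp (c * t))
            (Real.exp (c * w) * (deriv (deriv u) w + c * deriv u w) - (m / c) * (c * Real.exp (c * w))) w :=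
          (hφD w).sub ((hexp w).const_mul _)
        rw [hD.deriv]
        have h1 := hmlb w hw.1
        have h2 : (m / c) * (c * Real.exp (c * w)) = m * Real.exp (c * w) := by
          field_simp
        rw [h2]
        nlinarith [Real.exp_pos (c * w)]
    set m2 := (m / c) * (1 - Real.exp (-c)) with hm2_def
    have hm2pos : 0 < m2 := by
      apply mul_pos (div_pos hmpos hc)
      have : Real.exp (-c) < 1 := Real.exp_lt_one_iff.mpr (by linarith)
      linarith
    refine final m2 (x + 1) hm2pos ?_
    intro z hz
    have hφz := hφlb z (by linarith)
    have h3 : Real.exp (c * z - c) = Real.exp (c * z) * Real.exp (-c) := by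
      rw [← Real.exp_add]; ring_nf
    have h4 : Real.exp (c * x) ≤ Real.exp (c * z - c) := by
      apply Real.exp_le_exp.mpr
      have h := mul_le_mul_of_nonneg_left (show x + 1 ≤ z by linarith) hc.le
      linarith [h]
    have h5 : m2 * Real.exp (c * z) ≤ φ z := by
      have hmc : 0 < m / c := div_pos hmpos hc
      calc m2 * Real.exp (c * z)
          = (m / c) * (Real.exp (c * z) - Real.exp (c * z) * Real.exp (-c)) := by
            rw [hm2_def]; ring
        _ ≤ (m / c) * (Real.exp (c * z) - Real.exp (c * x)) := by
            have h6 : Real.exp (c * z) * Real.exp (-c) ≥ Real.exp (c * x) := by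
              rw [← h3]; exact h4
            nlinarith [hmc, h6]
        _ ≤ φ z := hφz
    simp only [hφdef] at h5
    nlinarith [Real.exp_pos (c * z)]
end

section
/- Let s ∈ (1/2, 1) and 0 < r ≤ (2s-1)/(2(1-s)). Let (n_D, n_O) be a classical solution of the gene-drive reaction–diffusion system on (0,∞) × ℝ such that n_D is bounded and the per-capita birth rate stays nonnegative, i.e., n_D(t,x) + n_O(t,x) ≤ 1 + 1/r for all (t,x). Then n_D goes extinct spatially uniformly: sup_{x ∈ ℝ} n_D(t,x) → 0 as t → +∞. -/
open Set Filter Topology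

/-- Key pointwise inequality: under the parameter assumptions, the per-capita
growth rate of the drive is at most `-(r/(2(r+1))) * a`. -/
private lemma key_ineq (s r a b : ℝ) (hs : 1 / 2 < s) (hs1 : s < 1) (hr : 0 < r)
    (hr' : r ≤ (2 * s - 1) / (2 * (1 - s))) (ha : 0 ≤ a) (hb : 0 < b)
    (hsum : a + b ≤ 1 + 1 / r) :
    (1 - s) * (1 + b / (a + b)) * (r * (1 - a - b) + 1) - 1 ≤ -(r / (2 * (r + 1))) * a := by
  have hN : 0 < a + b := by linarith
  have h1s : 0 < 1 - s := by linarith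
  have hrs : (1 - s) * (r + 1) ≤ 1 / 2 := by
    rw [le_div_iff₀ (by linarith : (0:ℝ) < 2 * (1 - s))] at hr'
    nlinarith
  have hb' : r * (a + b) ≤ r + 1 := by
    have h1 := mul_le_mul_of_nonneg_left hsum hr.le
    have h0 : r * (1 + 1 / r) = r + 1 := by field_simp
    linarith
  have hB0 : 0 ≤ r * (1 - a - b) + 1 := by nlinarith
  have hB1 : r * (1 - a - b) + 1 ≤ r + 1 := by nlinarith
  have hfr : 1 + b / (a + b) = 2 - a / (a + b) := by field_simp; ring
  have hq0 : 0 ≤ a / (a + b) := div_nonneg ha hN.le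
  have hq1 : a / (a + b) ≤ 1 := by rw [div_le_one hN]; linarith
  have hqa : r / (r + 1) * a ≤ a / (a + b) := by
    rw [div_mul_eq_mul_div, div_le_div_iff₀ (by linarith) hN]
    nlinarith
  rw [hfr]
  have step1 : (1 - s) * (2 - a / (a + b)) * (r * (1 - a - b) + 1)
      ≤ (1 - s) * (2 - a / (a + b)) * (r + 1) :=
    mul_le_mul_of_nonneg_left hB1 (by nlinarith)
  have step2 : (1 - s) * (2 - a / (a + b)) * (r + 1) ≤ 1 / 2 * (2 - a / (a + b)) := by
    nlinarith
  have step3 : -(r / (2 * (r + 1))) * a = -(1 / 2) * (r / (r + 1) * a) := by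
    field_simp
  linarith

/-- If `φ` has derivative `g` everywhere, `g` is differentiable at a global maximum point
`x₀` of `φ`, then the second derivative of `φ` at `x₀` is nonpositive. -/
private lemma secondDeriv_nonpos {φ g : ℝ → ℝ} {x₀ d : ℝ}
    (hφ : ∀ x, HasDerivAt φ (g x) x) (hg : HasDerivAt g d x₀)
    (hmax : ∀ x, φ x ≤ φ x₀) : d ≤ 0 := by
  by_contra hcon
  push_neg at hcon
  have hg0 : g x₀ = 0 := by
    have hloc : IsLocalMax φ x₀ := Filter.Eventually.of_forall hmax
    exact hloc.hasDerivAt_eq_zero (hφ x₀)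
  have hslope := hasDerivAt_iff_tendsto_slope.mp hg
  have hmono : 𝓝[>] x₀ ≤ 𝓝[≠] x₀ :=
    nhdsWithin_mono x₀ (fun y hy => ne_of_gt hy)
  have hev : ∀ᶠ y in 𝓝[>] x₀, 0 < slope g x₀ y :=
    (hslope.mono_left hmono).eventually (eventually_gt_nhds hcon)
  obtain ⟨u, hu, hsub⟩ := mem_nhdsGT_iff_exists_Ioo_subset.mp hev
  have hu' : x₀ < u := hu
  have hgpos : ∀ y ∈ Ioo x₀ u, 0 < g y := by
    intro y hy
    have h1 : 0 < slope g x₀ y := hsub hy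
    rw [slope_def_field, hg0, sub_zero] at h1
    have h2 : 0 < y - x₀ := sub_pos.mpr hy.1
    rcases div_pos_iff.mp h1 with ⟨h3, _⟩ | ⟨_, h4⟩
    · exact h3
    · linarith
  set m : ℝ := (x₀ + u) / 2 with hm
  have hmlt : x₀ < m := by rw [hm]; linarith
  have hmu : m < u := by rw [hm]; linarith
  obtain ⟨ξ, hξ, hξeq⟩ := exists_hasDerivAt_eq_slope φ g hmlt
    (fun y _ => (hφ y).continuousAt.continuousWithinAt) (fun y _ => hφ y)
  have hgξ : 0 < g ξ := hgpos ξ ⟨hξ.1, lt_trans hξ.2 hmu⟩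
  rw [hξeq] at hgξ
  have h2 : 0 < m - x₀ := sub_pos.mpr hmlt
  have hφm : φ m ≤ φ x₀ := hmax m
  rcases div_pos_iff.mp hgξ with ⟨h3, _⟩ | ⟨_, h4⟩
  · linarith
  · linarith

/-- If `θ` is differentiable at `t₀ ∈ (0,T]` and `t₀` is a maximum point of `θ` on `(0,T]`,
then the derivative at `t₀` is nonnegative (left-sided slope argument). -/
private lemma left_deriv_nonneg {θ : ℝ → ℝ} {t₀ T d : ℝ}
    (hd : HasDerivAt θ d t₀) (h0 : 0 < t₀) (hT : t₀ ≤ T)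
    (hmax : ∀ t ∈ Ioc (0:ℝ) T, θ t ≤ θ t₀) : 0 ≤ d := by
  have hslope := hasDerivAt_iff_tendsto_slope.mp hd
  have hmono : 𝓝[<] t₀ ≤ 𝓝[≠] t₀ := nhdsWithin_mono t₀ (fun y hy => ne_of_lt hy)
  refine ge_of_tendsto (hslope.mono_left hmono) ?_
  filter_upwards [Ioo_mem_nhdsLT_of_mem (⟨h0, le_rfl⟩ : t₀ ∈ Ioc 0 t₀)] with t ht
  rw [slope_def_field]
  have h1 : θ t ≤ θ t₀ := hmax t ⟨ht.1, le_trans ht.2.le hT⟩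
  have h2 : t - t₀ < 0 := sub_neg.mpr ht.2
  exact div_nonneg_iff.mpr (Or.inr ⟨by linarith, h2.le⟩)

set_option maxHeartbeats 1000000 in
/-- If `s ∈ (1/2, 1)` and `0 < r ≤ (2s-1)/(2(1-s))`, then for any bounded
classical solution of the gene-drive reaction–diffusion system on `(0,∞) × ℝ` whose
per-capita birth rate stays nonnegative (`n_D + n_O ≤ 1 + 1/r`), the drive density
`n_D` goes extinct spatially uniformly: `sup_x n_D(t,x) → 0` as `t → +∞`. -/
theorem stmt2
    (s r : ℝ) (hs : 1 / 2 < s) (hs1 : s < 1)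
    (hr : 0 < r) (hr' : r ≤ (2 * s - 1) / (2 * (1 - s)))
    (nD nO : ℝ → ℝ → ℝ)
    (hDcont : ContinuousOn (fun q : ℝ × ℝ => nD q.1 q.2) (Set.Ici 0 ×ˢ Set.univ))
    (hOcont : ContinuousOn (fun q : ℝ × ℝ => nO q.1 q.2) (Set.Ici 0 ×ˢ Set.univ))
    (hDt : ∀ x : ℝ, ContDiffOn ℝ 1 (fun t => nD t x) (Set.Ioi 0))
    (hOt : ∀ x : ℝ, ContDiffOn ℝ 1 (fun t => nO t x) (Set.Ioi 0))
    (hDx : ∀ t > (0 : ℝ), ContDiff ℝ 2 (fun x => nD t x))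
    (hOx : ∀ t > (0 : ℝ), ContDiff ℝ 2 (fun x => nO t x))
    (hDnn : ∀ t ≥ (0 : ℝ), ∀ x, 0 ≤ nD t x)
    (hOpos : ∀ t ≥ (0 : ℝ), ∀ x, 0 < nO t x)
    (hDbd : ∃ M : ℝ, ∀ t ≥ (0 : ℝ), ∀ x, nD t x ≤ M)
    (hbirth : ∀ t ≥ (0 : ℝ), ∀ x, nD t x + nO t x ≤ 1 + 1 / r)
    (heqD : ∀ t > (0 : ℝ), ∀ x,
      deriv (fun τ => nD τ x) t - deriv (deriv (fun y => nD t y)) x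
        = nD t x * ((1 - s) * (1 + nO t x / (nD t x + nO t x))
            * (r * (1 - nD t x - nO t x) + 1) - 1))
    (heqO : ∀ t > (0 : ℝ), ∀ x,
      deriv (fun τ => nO τ x) t - deriv (deriv (fun y => nO t y)) x
        = nO t x * ((nO t x / (nD t x + nO t x))
            * (r * (1 - nD t x - nO t x) + 1) - 1)) :
    Filter.Tendsto (fun t : ℝ => ⨆ x : ℝ, nD t x) Filter.atTop (nhds 0) := by
  classical
  obtain ⟨M₀, hM₀⟩ := hDbd
  set M : ℝ := max M₀ 1 with hMdef
  have hMpos : (0:ℝ) < M := lt_of_lt_of_le one_pos (le_max_right _ _)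
  have hMb : ∀ t ≥ (0:ℝ), ∀ x, nD t x ≤ M := fun t ht x => (hM₀ t ht x).trans (le_max_left _ _)
  set c : ℝ := r / (2 * (r + 1)) with hcdef
  have hc : 0 < c := div_pos hr (by linarith)
  have hkey : ∀ t ≥ (0:ℝ), ∀ x,
      (1 - s) * (1 + nO t x / (nD t x + nO t x)) * (r * (1 - nD t x - nO t x) + 1) - 1
        ≤ -c * nD t x := by
    intro t ht x
    rw [hcdef]
    exact key_ineq s r (nD t x) (nO t x) hs hs1 hr hr' (hDnn t ht x) (hOpos t ht x)
      (hbirth t ht x)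
  have hdenpos : ∀ t : ℝ, 0 ≤ t → 0 < 1 + c * M * t := by
    intro t ht
    nlinarith [mul_nonneg (mul_nonneg hc.le hMpos.le) ht]
  -- the epsilon claim
  have claim : ∀ ε > (0:ℝ), ∀ T > (0:ℝ), ∀ t ∈ Icc (0:ℝ) T, ∀ x : ℝ,
      nD t x - M / (1 + c * M * t) - ε * (x ^ 2 + 3 * t) ≤ 0 := by
    intro ε hε T hT
    by_contra hcon
    push_neg at hcon
    obtain ⟨t₁, ht₁, x₁, hx₁⟩ := hcon
    set R : ℝ := Real.sqrt (M / ε) + |x₁| with hRdef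
    have hRx : |x₁| ≤ R := le_add_of_nonneg_left (Real.sqrt_nonneg _)
    have hR0 : 0 ≤ R := (abs_nonneg _).trans hRx
    have hMR : M ≤ ε * R ^ 2 := by
      have h1 : Real.sqrt (M / ε) ≤ R := le_add_of_nonneg_right (abs_nonneg _)
      have h2 : M / ε ≤ R ^ 2 := by
        have h3 := Real.sq_sqrt (le_of_lt (div_pos hMpos hε))
        nlinarith [Real.sqrt_nonneg (M / ε)]
      calc M = ε * (M / ε) := by field_simp
        _ ≤ ε * R ^ 2 := mul_le_mul_of_nonneg_left h2 hε.le
    have hout : ∀ t ∈ Icc (0:ℝ) T, ∀ x : ℝ, R ≤ |x| →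
        nD t x - M / (1 + c * M * t) - ε * (x ^ 2 + 3 * t) ≤ 0 := by
      intro t ht x hx
      have h1 : nD t x ≤ M := hMb t ht.1 x
      have h2 : 0 < M / (1 + c * M * t) := div_pos hMpos (hdenpos t ht.1)
      have h3 : R ^ 2 ≤ x ^ 2 := by
        have h5 := sq_abs x
        nlinarith [hR0, hx]
      have h4 : ε * R ^ 2 ≤ ε * x ^ 2 := mul_le_mul_of_nonneg_left h3 hε.le
      have h5 : 0 ≤ ε * (3 * t) := mul_nonneg hε.le (by linarith [ht.1])
      have h6 : ε * (x ^ 2 + 3 * t) = ε * x ^ 2 + ε * (3 * t) := by ring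
      linarith
    set K : Set (ℝ × ℝ) := Icc (0:ℝ) T ×ˢ Icc (-R) R with hKdef
    have hKc : IsCompact K := isCompact_Icc.prod isCompact_Icc
    have hmem₁ : ((t₁, x₁) : ℝ × ℝ) ∈ K :=
      Set.mem_prod.mpr ⟨ht₁, Set.mem_Icc.mpr (abs_le.mp hRx)⟩
    have hcontH : ContinuousOn
        (fun q : ℝ × ℝ => nD q.1 q.2 - M / (1 + c * M * q.1) - ε * (q.2 ^ 2 + 3 * q.1)) K := by
      refine ContinuousOn.sub (ContinuousOn.sub ?_ ?_) ?_
      · exact hDcont.mono (fun q hq => ⟨hq.1.1, trivial⟩)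
      · refine ContinuousOn.div continuousOn_const (by fun_prop) ?_
        intro q hq
        exact (hdenpos q.1 hq.1.1).ne'
      · exact (by fun_prop : Continuous fun q : ℝ × ℝ => ε * (q.2 ^ 2 + 3 * q.1)).continuousOn
    obtain ⟨⟨t₀, x₀⟩, hp₀K, hp₀max⟩ := hKc.exists_isMaxOn ⟨(t₁, x₁), hmem₁⟩ hcontH
    have hpos₀ : 0 < nD t₀ x₀ - M / (1 + c * M * t₀) - ε * (x₀ ^ 2 + 3 * t₀) :=
      lt_of_lt_of_le hx₁ (hp₀max hmem₁)
    have ht₀Icc : t₀ ∈ Icc (0:ℝ) T := hp₀K.1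
    have hglob : ∀ t ∈ Icc (0:ℝ) T, ∀ x : ℝ,
        nD t x - M / (1 + c * M * t) - ε * (x ^ 2 + 3 * t)
          ≤ nD t₀ x₀ - M / (1 + c * M * t₀) - ε * (x₀ ^ 2 + 3 * t₀) := by
      intro t ht x
      by_cases hx : |x| ≤ R
      · exact hp₀max (show (t, x) ∈ K from Set.mem_prod.mpr ⟨ht, Set.mem_Icc.mpr (abs_le.mp hx)⟩)
      · exact le_trans (hout t ht x (le_of_not_ge hx)) hpos₀.le
    have ht₀pos : 0 < t₀ := by
      rcases ht₀Icc.1.lt_or_eq with h | h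
      · exact h
      · exfalso
        have h1 : nD t₀ x₀ ≤ M := hMb t₀ ht₀Icc.1 x₀
        have h2 : M / (1 + c * M * t₀) = M := by rw [← h]; simp
        have h5 : 0 ≤ ε * (x₀ ^ 2 + 3 * t₀) := by
          rw [← h]; positivity
        linarith
    -- space direction: second derivative at the max is ≤ 2ε
    have hC2 : ContDiff ℝ 2 (fun y => nD t₀ y) := hDx t₀ ht₀pos
    have hdiffD : Differentiable ℝ (fun y => nD t₀ y) := hC2.differentiable (by norm_num)
    have hC1 : ContDiff ℝ 1 (deriv fun y => nD t₀ y) := by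
      have h2 : ContDiff ℝ ((1:WithTop ℕ∞) + 1) (fun y => nD t₀ y) := by
        rw [one_add_one_eq_two]; exact hC2
      exact (contDiff_succ_iff_deriv.mp h2).2.2
    have hx2 : ∀ x : ℝ, HasDerivAt (fun y : ℝ => ε * (y ^ 2 + 3 * t₀)) (ε * (2 * x)) x := by
      intro x
      have h1 : HasDerivAt (fun y : ℝ => y ^ 2 + 3 * t₀) (2 * x) x := by
        simpa using (hasDerivAt_pow 2 x).add_const (3 * t₀)
      exact h1.const_mul ε
    have hφ' : ∀ x : ℝ, HasDerivAt
        (fun y => nD t₀ y - M / (1 + c * M * t₀) - ε * (y ^ 2 + 3 * t₀))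
        (deriv (fun y => nD t₀ y) x - ε * (2 * x)) x := by
      intro x
      exact (((hdiffD x).hasDerivAt).sub_const _).sub (hx2 x)
    have hg' : HasDerivAt (fun x : ℝ => deriv (fun y => nD t₀ y) x - ε * (2 * x))
        (deriv (deriv fun y => nD t₀ y) x₀ - ε * 2) x₀ := by
      have h1 : HasDerivAt (deriv fun y => nD t₀ y) (deriv (deriv fun y => nD t₀ y) x₀) x₀ :=
        (hC1.differentiable (by norm_num) x₀).hasDerivAt
      have h2 : HasDerivAt (fun x : ℝ => ε * (2 * x)) (ε * 2) x₀ := by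
        simpa using ((hasDerivAt_id x₀).const_mul (2:ℝ)).const_mul ε
      exact h1.sub h2
    have hD2le : deriv (deriv fun y => nD t₀ y) x₀ - ε * 2 ≤ 0 :=
      secondDeriv_nonpos hφ' hg' (fun x => hglob t₀ ht₀Icc x)
    -- time direction: derivative at the max is ≥ 0
    have hdDt : HasDerivAt (fun τ => nD τ x₀) (deriv (fun τ => nD τ x₀) t₀) t₀ := by
      have h1 : ContDiffAt ℝ 1 (fun τ => nD τ x₀) t₀ :=
        (hDt x₀).contDiffAt (isOpen_Ioi.mem_nhds ht₀pos)
      exact (h1.differentiableAt (by norm_num)).hasDerivAt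
    have hden₀ : (0:ℝ) < 1 + c * M * t₀ := hdenpos t₀ ht₀Icc.1
    have hψ' : HasDerivAt (fun t : ℝ => M / (1 + c * M * t))
        (-(c * (M / (1 + c * M * t₀)) ^ 2)) t₀ := by
      have h1 : HasDerivAt (fun t : ℝ => 1 + c * M * t) (c * M) t₀ := by
        simpa using ((hasDerivAt_id t₀).const_mul (c * M)).const_add (1:ℝ)
      have h2 := (hasDerivAt_const t₀ M).div h1 hden₀.ne'
      refine h2.congr_deriv ?_
      rw [div_pow]
      ring
    have hlin : HasDerivAt (fun t : ℝ => ε * (x₀ ^ 2 + 3 * t)) (ε * 3) t₀ := by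
      have h1 : HasDerivAt (fun t : ℝ => x₀ ^ 2 + 3 * t) (3:ℝ) t₀ := by
        simpa using ((hasDerivAt_id t₀).const_mul (3:ℝ)).const_add (x₀ ^ 2)
      simpa using h1.const_mul ε
    have hθ' : HasDerivAt
        (fun t => nD t x₀ - M / (1 + c * M * t) - ε * (x₀ ^ 2 + 3 * t))
        (deriv (fun τ => nD τ x₀) t₀ - (-(c * (M / (1 + c * M * t₀)) ^ 2)) - ε * 3) t₀ :=
      (hdDt.sub hψ').sub hlin
    have hdle : 0 ≤ deriv (fun τ => nD τ x₀) t₀ - (-(c * (M / (1 + c * M * t₀)) ^ 2)) - ε * 3 :=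
      left_deriv_nonneg hθ' ht₀pos ht₀Icc.2 (fun t ht => hglob t ⟨ht.1.le, ht.2⟩ x₀)
    -- plug in the PDE and the key inequality
    have hpde := heqD t₀ ht₀pos x₀
    have hk := hkey t₀ ht₀Icc.1 x₀
    have hnn := hDnn t₀ ht₀Icc.1 x₀
    have hmul : nD t₀ x₀ * ((1 - s) * (1 + nO t₀ x₀ / (nD t₀ x₀ + nO t₀ x₀))
          * (r * (1 - nD t₀ x₀ - nO t₀ x₀) + 1) - 1) ≤ nD t₀ x₀ * (-c * nD t₀ x₀) :=
      mul_le_mul_of_nonneg_left hk hnn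
    have hψpos : 0 < M / (1 + c * M * t₀) := div_pos hMpos hden₀
    have hεnn : 0 ≤ ε * (x₀ ^ 2 + 3 * t₀) :=
      mul_nonneg hε.le (by nlinarith [sq_nonneg x₀, ht₀pos.le])
    have hlt : M / (1 + c * M * t₀) < nD t₀ x₀ := by linarith
    have hsq : (M / (1 + c * M * t₀)) ^ 2 ≤ nD t₀ x₀ ^ 2 := by nlinarith [hψpos.le, hlt.le]
    have hcsq : c * (M / (1 + c * M * t₀)) ^ 2 ≤ c * nD t₀ x₀ ^ 2 :=
      mul_le_mul_of_nonneg_left hsq hc.le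
    have hfinal : deriv (fun τ => nD τ x₀) t₀ - deriv (deriv fun y => nD t₀ y) x₀
        ≤ -(c * nD t₀ x₀ ^ 2) := by
      rw [hpde]
      exact hmul.trans (le_of_eq (by ring))
    linarith
  -- pass to the limit ε → 0
  have hbound : ∀ t ≥ (0:ℝ), ∀ x : ℝ, nD t x ≤ M / (1 + c * M * t) := by
    intro t ht x
    have hC : (0:ℝ) < x ^ 2 + 3 * t + 1 := by nlinarith [sq_nonneg x]
    refine le_of_forall_pos_le_add ?_
    intro ε hε
    have h1 := claim (ε / (x ^ 2 + 3 * t + 1)) (div_pos hε hC) (t + 1) (by linarith)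
      t ⟨ht, by linarith⟩ x
    have h2 : ε / (x ^ 2 + 3 * t + 1) * (x ^ 2 + 3 * t) ≤ ε := by
      rw [div_mul_eq_mul_div, div_le_iff₀ hC]
      nlinarith [sq_nonneg x, hε.le]
    linarith
  -- conclude with a squeeze
  have hψ0 : Tendsto (fun t : ℝ => M / (1 + c * M * t)) atTop (𝓝 0) := by
    have h1 : Tendsto (fun t : ℝ => 1 + c * M * t) atTop atTop := by
      apply tendsto_atTop_add_const_left
      exact Tendsto.const_mul_atTop (by positivity) tendsto_id
    have h3 := h1.inv_tendsto_atTop.const_mul M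
    simpa [div_eq_mul_inv, Function.comp] using h3
  apply squeeze_zero' ?_ ?_ hψ0
  · filter_upwards [eventually_ge_atTop (0:ℝ)] with t ht
    have hBdd : BddAbove (Set.range fun x => nD t x) := by
      refine ⟨M, ?_⟩
      rintro y ⟨x, rfl⟩
      exact hMb t ht x
    exact le_trans (hDnn t ht 0) (le_ciSup hBdd 0)
  · filter_upwards [eventually_ge_atTop (0:ℝ)] with t ht
    exact ciSup_le fun x => hbound t ht x
end

section
/- Let s ∈ [0,1) and r > (2s-1)/(2(1-s)) with r > 0. Let (n_D, n_O) be a classical solution of the gene-drive reaction–diffusion system on (0,∞) × ℝ such that n_D is bounded, n_D(0,·) is compactly supported, and the per-capita birth rate stays nonnegative, i.e., n_D(t,x) + n_O(t,x) ≤ 1 + 1/r for all (t,x). Then n_D spreads at most at speed 2√(2(1-s)(r+1) - 1): for every c' > 2√(2(1-s)(r+1) - 1), sup_{|x| ≥ c'·t} n_D(t,x) → 0 as t → +∞. -/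
open Set Filter Real Topology

lemma deriv_nonneg_of_max_upper {g : ℝ → ℝ} {t₀ d : ℝ} (ht : 0 < t₀)
    (hd : HasDerivAt g d t₀) (hmax : ∀ τ ∈ Set.Icc 0 t₀, g τ ≤ g t₀) : 0 ≤ d := by
  have h : HasDerivWithinAt g d (Set.Iio t₀) t₀ := hd.hasDerivWithinAt
  rw [hasDerivWithinAt_iff_tendsto_slope] at h
  rw [Set.diff_singleton_eq_self (by simp)] at h
  have hne : (𝓝[<] t₀).NeBot := nhdsLT_neBot t₀
  refine ge_of_tendsto h ?_
  filter_upwards [Ioo_mem_nhdsLT ht] with y hy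
  have h1 : g y ≤ g t₀ := hmax y ⟨le_of_lt hy.1, le_of_lt hy.2⟩
  rw [slope_def_field]
  exact div_nonneg_of_nonpos (by linarith) (by linarith [hy.2])

lemma deriv2_nonpos_of_max {h : ℝ → ℝ} {x₀ : ℝ} (hC : ContDiff ℝ 2 h)
    (hmax : ∀ y, h y ≤ h x₀) : deriv (deriv h) x₀ ≤ 0 := by
  by_contra hlt
  push_neg at hlt
  have h2 : ContDiff ℝ 1 (deriv h) := by
    have := (contDiff_succ_iff_deriv (n := 1)).mp (by norm_num at hC ⊢; exact hC)
    exact this.2.2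
  have hcont2 : Continuous (deriv (deriv h)) := by
    have := (contDiff_succ_iff_deriv (n := 0)).mp h2
    exact this.2.2.continuous
  have hd0 : deriv h x₀ = 0 :=
    IsLocalMax.deriv_eq_zero (Filter.Eventually.of_forall hmax)
  have hev : ∀ᶠ y in 𝓝 x₀, 0 < deriv (deriv h) y :=
    continuousAt_const.eventually_lt hcont2.continuousAt hlt
  obtain ⟨δ, hδ, hball⟩ := Metric.eventually_nhds_iff_ball.mp hev
  -- deriv h strictly mono on Icc x₀ (x₀+δ/2)
  have hmono : StrictMonoOn (deriv h) (Set.Icc x₀ (x₀ + δ/2)) := by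
    apply strictMonoOn_of_deriv_pos (convex_Icc _ _) (h2.continuous.continuousOn)
    intro y hy
    rw [interior_Icc] at hy
    apply hball
    rw [Real.ball_eq_Ioo]
    constructor <;> [linarith [hy.1]; linarith [hy.2]]
  have hpos : ∀ y ∈ Set.Ioo x₀ (x₀ + δ/2), 0 < deriv h y := by
    intro y hy
    have := hmono ⟨le_refl _, by linarith [hy.2]⟩ ⟨le_of_lt hy.1, le_of_lt hy.2⟩ hy.1
    rw [hd0] at this; exact this
  have hmono2 : StrictMonoOn h (Set.Icc x₀ (x₀ + δ/2)) := by
    apply strictMonoOn_of_deriv_pos (convex_Icc _ _) (hC.continuous.continuousOn)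
    intro y hy; rw [interior_Icc] at hy; exact hpos y hy
  have := hmono2 ⟨le_refl _, by linarith⟩ ⟨by linarith, le_refl _⟩ (by linarith)
  exact absurd (hmax (x₀ + δ/2)) (by linarith)
lemma max_principle {L M0 : ℝ} (hL : 0 ≤ L) (u : ℝ → ℝ → ℝ)
    (hcont : ContinuousOn (fun q : ℝ × ℝ => u q.1 q.2) (Set.Ici 0 ×ˢ Set.univ))
    (hdt : ∀ x : ℝ, ∀ t > (0:ℝ), DifferentiableAt ℝ (fun τ => u τ x) t)
    (hdx : ∀ t > (0:ℝ), ContDiff ℝ 2 (fun x => u t x))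
    (hbd : ∀ t ≥ (0:ℝ), ∀ x, u t x ≤ M0)
    (h0 : ∀ x, u 0 x ≤ 0)
    (hineq : ∀ t > (0:ℝ), ∀ x,
      deriv (fun τ => u τ x) t - deriv (deriv (fun y => u t y)) x ≤ L * u t x) :
    ∀ t ≥ (0:ℝ), ∀ x, u t x ≤ 0 := by
  -- main claim
  have key : ∀ ε > (0:ℝ), ∀ T > (0:ℝ), ∀ t ∈ Set.Icc 0 T, ∀ x : ℝ,
      u t x * Real.exp (-(L+1)*t) - ε * (x^2 + 2*t) ≤ 0 := by
    intro ε hε T hT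
    by_contra hcon
    push_neg at hcon
    obtain ⟨tp, htp, xp, hp⟩ := hcon
    set F : ℝ × ℝ → ℝ := fun q => u q.1 q.2 * Real.exp (-(L+1)*q.1) - ε * (q.2^2 + 2*q.1)
      with hF
    have hM0' : ∀ t ∈ Set.Icc (0:ℝ) T, ∀ x : ℝ, u t x * Real.exp (-(L+1)*t) ≤ max M0 0 := by
      intro t ht x
      have he1 : Real.exp (-(L+1)*t) ≤ 1 := by
        rw [Real.exp_le_one_iff]
        nlinarith [ht.1]
      have he0 : (0:ℝ) < Real.exp (-(L+1)*t) := Real.exp_pos _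
      rcases le_or_gt (u t x) 0 with h | h
      · exact le_trans (mul_nonpos_of_nonpos_of_nonneg h he0.le) (le_max_right _ _)
      · have := hbd t ht.1 x
        calc u t x * Real.exp (-(L+1)*t) ≤ u t x * 1 := by nlinarith
          _ ≤ max M0 0 := by rw [mul_one]; exact le_trans this (le_max_left _ _)
    set M' := max M0 0 with hM'
    have hM'0 : 0 ≤ M' := le_max_right _ _
    set K := Real.sqrt (M'/ε) + 1 with hK
    have hK0 : 0 < K := by positivity
    have hKsq : M' < ε * K^2 := by
      have h1 : Real.sqrt (M'/ε) ^ 2 = M'/ε := Real.sq_sqrt (by positivity)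
      have h2 : 0 ≤ Real.sqrt (M'/ε) := Real.sqrt_nonneg _
      have : M'/ε < K^2 := by nlinarith
      calc M' = (M'/ε) * ε := by field_simp
        _ < K^2 * ε := by nlinarith
        _ = ε * K^2 := by ring
    -- points with F ≥ F p have |x| < K
    have hloc : ∀ t ∈ Set.Icc (0:ℝ) T, ∀ x : ℝ, 0 < F (t, x) → x ∈ Set.Ioo (-K) K := by
      intro t ht x hFx
      have h1 : F (t,x) ≤ M' - ε * x^2 := by
        have := hM0' t ht x
        simp only [hF]
        nlinarith [ht.1, hε]
      have h2 : ε * x^2 < M' := by nlinarith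
      have h3 : x^2 < K^2 := by nlinarith
      have habs : |x| < K := by
        by_contra hc
        push_neg at hc
        nlinarith [sq_abs x, abs_nonneg x]
      exact ⟨(abs_lt.mp habs).1, (abs_lt.mp habs).2⟩
    -- maximum over compact set
    have hScomp : IsCompact (Set.Icc (0:ℝ) T ×ˢ Set.Icc (-K) K) :=
      (isCompact_Icc).prod (isCompact_Icc)
    have hSsub : Set.Icc (0:ℝ) T ×ˢ Set.Icc (-K) K ⊆ Set.Ici 0 ×ˢ (Set.univ : Set ℝ) := by
      intro q hq
      exact ⟨hq.1.1, trivial⟩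
    have hFcont : ContinuousOn F (Set.Icc (0:ℝ) T ×ˢ Set.Icc (-K) K) := by
      apply ContinuousOn.sub
      · exact (hcont.mono hSsub).mul (by fun_prop)
      · fun_prop
    have hpK : xp ∈ Set.Ioo (-K) K := hloc tp htp xp hp
    have hpmem : (tp, xp) ∈ Set.Icc (0:ℝ) T ×ˢ Set.Icc (-K) K :=
      ⟨htp, hpK.1.le, hpK.2.le⟩
    obtain ⟨q₀, hq₀mem, hq₀max⟩ := hScomp.exists_isMaxOn ⟨_, hpmem⟩ hFcont
    obtain ⟨t₀, x₀⟩ := q₀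
    have ht₀ : t₀ ∈ Set.Icc (0:ℝ) T := hq₀mem.1
    have hFq₀ : 0 < F (t₀, x₀) := lt_of_lt_of_le hp (hq₀max hpmem)
    have hx₀ : x₀ ∈ Set.Ioo (-K) K := hloc t₀ ht₀ x₀ hFq₀
    -- global max over x and over t ∈ [0, t₀]
    have hglob : ∀ t ∈ Set.Icc (0:ℝ) T, ∀ x : ℝ, F (t, x) ≤ F (t₀, x₀) := by
      intro t ht x
      rcases le_or_gt (F (t,x)) 0 with h | h
      · linarith
      · exact hq₀max ⟨ht, (hloc t ht x h).1.le, (hloc t ht x h).2.le⟩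
    have ht₀pos : 0 < t₀ := by
      rcases ht₀.1.lt_or_eq with h | h
      · exact h
      · exfalso
        have : F (t₀, x₀) = u 0 x₀ - ε * (x₀^2 + 2*0) := by
          simp only [hF, ← h]
          norm_num
        have h2 := h0 x₀
        simp only [hF] at hFq₀
        rw [← h] at hFq₀
        norm_num at hFq₀
        nlinarith [sq_nonneg x₀, h0 x₀]
    -- time derivative
    set c := Real.exp (-(L+1)*t₀) with hc
    have hcpos : 0 < c := Real.exp_pos _
    set A := deriv (fun τ => u τ x₀) t₀ with hA
    set B := deriv (deriv (fun y => u t₀ y)) x₀ with hB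
    have hgderiv : HasDerivAt (fun τ => u τ x₀ * Real.exp (-(L+1)*τ) - ε * (x₀^2 + 2*τ))
        (A * c + u t₀ x₀ * (c * (-(L+1))) - ε * 2) t₀ := by
      have h1 : HasDerivAt (fun τ => u τ x₀) A t₀ := (hdt x₀ t₀ ht₀pos).hasDerivAt
      have h2 : HasDerivAt (fun τ : ℝ => -(L+1)*τ) (-(L+1)) t₀ := by
        simpa using (hasDerivAt_id t₀).const_mul (-(L+1))
      have h3 : HasDerivAt (fun τ => Real.exp (-(L+1)*τ)) (c * (-(L+1))) t₀ := h2.exp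
      have h4 : HasDerivAt (fun τ : ℝ => ε * (x₀^2 + 2*τ)) (ε * 2) t₀ := by
        simpa using (((hasDerivAt_id t₀).const_mul 2).const_add (x₀^2)).const_mul ε
      exact (h1.mul h3).sub h4
    have hgpos : 0 ≤ A * c + u t₀ x₀ * (c * (-(L+1))) - ε * 2 := by
      apply deriv_nonneg_of_max_upper ht₀pos hgderiv
      intro τ hτ
      have := hglob τ ⟨hτ.1, le_trans hτ.2 ht₀.2⟩ x₀
      simp only [hF, ← hc] at this
      linarith
    -- space derivative
    have hhC : ContDiff ℝ 2 (fun y => u t₀ y * c - ε * (y^2 + 2*t₀)) := by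
      exact ((hdx t₀ ht₀pos).mul contDiff_const).sub (by fun_prop)
    have hhmax : ∀ y : ℝ, u t₀ y * c - ε * (y^2 + 2*t₀) ≤ u t₀ x₀ * c - ε * (x₀^2 + 2*t₀) := by
      intro y
      have := hglob t₀ ht₀ y
      simp only [hF, ← hc] at this
      linarith
    have hh2 := deriv2_nonpos_of_max hhC hhmax
    -- compute second derivative
    have hud : Differentiable ℝ (fun y => u t₀ y) := (hdx t₀ ht₀pos).differentiable (by norm_num)
    have hud2 : Differentiable ℝ (deriv (fun y => u t₀ y)) := by
      have := (contDiff_succ_iff_deriv (n := 1)).mp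
        (by norm_num at hdx ⊢; exact hdx t₀ ht₀pos)
      exact this.2.2.differentiable (by norm_num)
    have hderiv1 : deriv (fun y => u t₀ y * c - ε * (y^2 + 2*t₀))
        = fun y => deriv (fun y => u t₀ y) y * c - ε * (2*y) := by
      funext y
      have h1 : HasDerivAt (fun y => u t₀ y * c - ε * (y^2 + 2*t₀))
          (deriv (fun y => u t₀ y) y * c - ε * (2*y)) y := by
        have ha : HasDerivAt (fun y => u t₀ y) (deriv (fun y => u t₀ y) y) y :=
          (hud y).hasDerivAt
        have hb : HasDerivAt (fun y : ℝ => ε * (y^2 + 2*t₀)) (ε * (2*y)) y := by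
          have : HasDerivAt (fun y : ℝ => y^2 + 2*t₀) (2*y) y := by
            simpa using (hasDerivAt_pow 2 y).add_const (2*t₀)
          simpa using this.const_mul ε
        exact (ha.mul_const c).sub hb
      exact h1.deriv
    have hderiv2 : deriv (deriv (fun y => u t₀ y * c - ε * (y^2 + 2*t₀))) x₀
        = B * c - ε * 2 := by
      rw [hderiv1]
      have h1 : HasDerivAt (fun y => deriv (fun y => u t₀ y) y * c - ε * (2*y))
          (B * c - ε * 2) x₀ := by
        have ha : HasDerivAt (fun y => deriv (fun y => u t₀ y) y) B x₀ :=
          (hud2 x₀).hasDerivAt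
        have hb : HasDerivAt (fun y : ℝ => ε * (2*y)) (ε * 2) x₀ := by
          simpa [mul_comm] using ((hasDerivAt_id x₀).const_mul 2).const_mul ε
        exact (ha.mul_const c).sub hb
      exact h1.deriv
    rw [hderiv2] at hh2
    -- PDE inequality at the max point
    have hpde := hineq t₀ ht₀pos x₀
    rw [← hA, ← hB] at hpde
    have hUc : 0 < u t₀ x₀ * c := by
      simp only [hF] at hFq₀
      nlinarith [sq_nonneg x₀, ht₀pos]
    nlinarith [mul_le_mul_of_nonneg_right hpde hcpos.le]
  -- conclude
  intro t ht x
  rcases ht.lt_or_eq with h | h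
  · by_contra hc
    push_neg at hc
    set C := (x^2 + 2*t) * Real.exp ((L+1)*t) with hC
    have hCpos : 0 < C := by
      have : 0 < x^2 + 2*t := by nlinarith [sq_nonneg x]
      positivity
    have hkey : ∀ ε > (0:ℝ), u t x ≤ ε * C := by
      intro ε hε
      have := key ε hε t h t ⟨le_of_lt h, le_refl t⟩ x
      have hexp : Real.exp (-(L+1)*t) * Real.exp ((L+1)*t) = 1 := by
        rw [← Real.exp_add]; ring_nf; exact Real.exp_zero
      have h2 : u t x * Real.exp (-(L+1)*t) ≤ ε * (x^2 + 2*t) := by linarith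
      calc u t x = u t x * Real.exp (-(L+1)*t) * Real.exp ((L+1)*t) := by
            rw [mul_assoc, hexp, mul_one]
        _ ≤ ε * (x^2 + 2*t) * Real.exp ((L+1)*t) := by
            apply mul_le_mul_of_nonneg_right h2 (Real.exp_pos _).le
        _ = ε * C := by rw [hC]; ring
    have := hkey (u t x / (2*C)) (by positivity)
    rw [div_mul_eq_mul_div] at this
    have h2 : u t x * C / (2*C) = u t x / 2 := by
      field_simp
    rw [h2] at this
    linarith
  · rw [← h]; exact h0 x



set_option maxHeartbeats 1000000 in
/-- If `s ∈ [0,1)` and `r > (2s-1)/(2(1-s))`, `r > 0`, then for any bounded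
classical solution of the gene-drive reaction–diffusion system on `(0,∞) × ℝ` with
compactly supported initial drive density and nonnegative per-capita birth rate
(`n_D + n_O ≤ 1 + 1/r`), the drive spreads at most at speed `2√(2(1-s)(r+1) - 1)`:
for every `c' > 2√(2(1-s)(r+1) - 1)`, `sup_{|x| ≥ c' t} n_D(t,x) → 0` as `t → +∞`. -/
theorem stmt3
    (s r : ℝ) (hs : s ∈ Set.Ico (0 : ℝ) 1)
    (hr : 0 < r) (hr' : (2 * s - 1) / (2 * (1 - s)) < r)
    (nD nO : ℝ → ℝ → ℝ)
    (hDcont : ContinuousOn (fun q : ℝ × ℝ => nD q.1 q.2) (Set.Ici 0 ×ˢ Set.univ))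
    (hOcont : ContinuousOn (fun q : ℝ × ℝ => nO q.1 q.2) (Set.Ici 0 ×ˢ Set.univ))
    (hDt : ∀ x : ℝ, ContDiffOn ℝ 1 (fun t => nD t x) (Set.Ioi 0))
    (hOt : ∀ x : ℝ, ContDiffOn ℝ 1 (fun t => nO t x) (Set.Ioi 0))
    (hDx : ∀ t > (0 : ℝ), ContDiff ℝ 2 (fun x => nD t x))
    (hOx : ∀ t > (0 : ℝ), ContDiff ℝ 2 (fun x => nO t x))
    (hDnn : ∀ t ≥ (0 : ℝ), ∀ x, 0 ≤ nD t x)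
    (hOpos : ∀ t ≥ (0 : ℝ), ∀ x, 0 < nO t x)
    (hDbd : ∃ M : ℝ, ∀ t ≥ (0 : ℝ), ∀ x, nD t x ≤ M)
    (hD0supp : HasCompactSupport (fun x => nD 0 x))
    (hbirth : ∀ t ≥ (0 : ℝ), ∀ x, nD t x + nO t x ≤ 1 + 1 / r)
    (heqD : ∀ t > (0 : ℝ), ∀ x,
      deriv (fun τ => nD τ x) t - deriv (deriv (fun y => nD t y)) x
        = nD t x * ((1 - s) * (1 + nO t x / (nD t x + nO t x))
            * (r * (1 - nD t x - nO t x) + 1) - 1))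
    (heqO : ∀ t > (0 : ℝ), ∀ x,
      deriv (fun τ => nO τ x) t - deriv (deriv (fun y => nO t y)) x
        = nO t x * ((nO t x / (nD t x + nO t x))
            * (r * (1 - nD t x - nO t x) + 1) - 1)) :
    ∀ c' : ℝ, 2 * Real.sqrt (2 * (1 - s) * (r + 1) - 1) < c' →
      Filter.Tendsto
        (fun t : ℝ => sSup ((fun x => nD t x) '' {x : ℝ | c' * t ≤ |x|}))
        Filter.atTop (nhds 0) := by
  obtain ⟨hs0, hs1⟩ := hs
  set L : ℝ := 2*(1-s)*(r+1) - 1 with hLdef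
  have h1s : 0 < 1 - s := by linarith
  have hL : 0 < L := by
    rw [div_lt_iff₀ (by positivity)] at hr'
    simp only [hLdef]
    nlinarith
  obtain ⟨M, hM⟩ := hDbd
  set M' : ℝ := max M 1 with hM'def
  have hM'1 : (1:ℝ) ≤ M' := le_max_right _ _
  have hMle : ∀ t ≥ (0:ℝ), ∀ x, nD t x ≤ M' := fun t ht x => le_trans (hM t ht x) (le_max_left _ _)
  -- support radius
  obtain ⟨R, hR⟩ := hD0supp.isBounded.subset_closedBall 0
  set R' : ℝ := max R 0 with hR'def
  have hR'0 : 0 ≤ R' := le_max_right _ _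
  have hsupp : ∀ x : ℝ, R' < |x| → nD 0 x = 0 := by
    intro x hx
    by_contra hne
    have hmem : x ∈ tsupport (fun x => nD 0 x) := subset_tsupport _ hne
    have := hR hmem
    rw [Metric.mem_closedBall, Real.dist_eq, sub_zero] at this
    have : |x| ≤ R' := le_trans this (le_max_left _ _)
    linarith
  set q : ℝ := Real.sqrt L with hqdef
  have hq : 0 < q := Real.sqrt_pos.mpr hL
  have hq2 : q^2 = L := Real.sq_sqrt hL.le
  -- pointwise bound on the reaction term
  have hRHS : ∀ t > (0:ℝ), ∀ x,
      deriv (fun τ => nD τ x) t - deriv (deriv (fun y => nD t y)) x ≤ L * nD t x := by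
    intro t ht x
    rw [heqD t ht x]
    have htnn := le_of_lt ht
    have hDx0 := hDnn t htnn x
    have hOx0 := hOpos t htnn x
    have hsum : 0 < nD t x + nO t x := by linarith
    have hρ1 : nO t x / (nD t x + nO t x) ≤ 1 := div_le_one_of_le₀ (by linarith) hsum.le
    have hρ0 : 0 ≤ nO t x / (nD t x + nO t x) := div_nonneg hOx0.le hsum.le
    have hf0 : 0 ≤ r * (1 - nD t x - nO t x) + 1 := by
      have hb := hbirth t htnn x
      have h1r : r * (1/r) = 1 := mul_one_div_cancel (ne_of_gt hr)
      nlinarith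
    have hf1 : r * (1 - nD t x - nO t x) + 1 ≤ r + 1 := by nlinarith
    have hfac : (1-s) * (1 + nO t x / (nD t x + nO t x))
        * (r * (1 - nD t x - nO t x) + 1) - 1 ≤ L := by
      have hmm := mul_le_mul
        (show (1-s) * (1 + nO t x / (nD t x + nO t x)) ≤ 2*(1-s) by nlinarith)
        hf1 hf0 (by positivity)
      simp only [hLdef]
      nlinarith
    calc nD t x * ((1-s) * (1 + nO t x / (nD t x + nO t x))
          * (r * (1 - nD t x - nO t x) + 1) - 1)
        ≤ nD t x * L := mul_le_mul_of_nonneg_left hfac hDx0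
      _ = L * nD t x := mul_comm _ _
  -- comparison with exponential supersolutions
  have hcomp : ∀ b : ℝ, |b| = q → ∀ t ≥ (0:ℝ), ∀ x,
      nD t x ≤ M' * Real.exp (2*L*t + (b*x + q*R')) := by
    intro b hb
    have hb2 : b^2 = L := by rw [← sq_abs, hb]; exact hq2
    have hmp := max_principle (L := L) (M0 := M')
      (u := fun t x => nD t x - M' * Real.exp (2*L*t + (b*x + q*R'))) hL.le
      ?_ ?_ ?_ ?_ ?_ ?_
    · intro t ht x
      have h2 : nD t x - M' * Real.exp (2*L*t + (b*x + q*R')) ≤ 0 := hmp t ht x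
      linarith
    · -- continuity
      apply hDcont.sub
      apply Continuous.continuousOn
      fun_prop
    · -- time differentiability
      intro x t ht
      apply DifferentiableAt.sub
      · exact ((hDt x).differentiableOn one_ne_zero).differentiableAt (Ioi_mem_nhds ht)
      · fun_prop
    · -- space regularity
      intro t ht
      exact (hDx t ht).sub (by fun_prop)
    · -- bounded above
      intro t ht x
      have := hMle t ht x
      show nD t x - M' * Real.exp (2*L*t + (b*x + q*R')) ≤ M'
      nlinarith [Real.exp_pos (2*L*t + (b*x + q*R')), hM'1]
    · -- initial condition
      intro x
      show nD 0 x - M' * Real.exp (2*L*0 + (b*x + q*R')) ≤ 0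
      rcases le_or_gt |x| R' with h | h
      · have harg : 0 ≤ 2*L*0 + (b*x + q*R') := by
          have h1 : -(q*R') ≤ b*x := by
            have h2 : |b*x| ≤ q*R' := by
              rw [abs_mul, hb]
              exact mul_le_mul_of_nonneg_left h hq.le
            linarith [neg_abs_le (b*x)]
          linarith
        have : (1:ℝ) ≤ Real.exp (2*L*0 + (b*x + q*R')) := by
          rw [← Real.exp_zero]
          exact Real.exp_le_exp.mpr harg
        nlinarith [hMle 0 le_rfl x]
      · rw [hsupp x h]
        nlinarith [Real.exp_pos (2*L*0 + (b*x + q*R')), hM'1]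
    · -- differential inequality
      intro t ht x
      show deriv (fun τ => nD τ x - M' * Real.exp (2*L*τ + (b*x + q*R'))) t
          - deriv (deriv (fun y => nD t y - M' * Real.exp (2*L*t + (b*y + q*R')))) x
          ≤ L * (nD t x - M' * Real.exp (2*L*t + (b*x + q*R')))
      have hDdiff : DifferentiableAt ℝ (fun τ => nD τ x) t :=
        ((hDt x).differentiableOn one_ne_zero).differentiableAt (Ioi_mem_nhds ht)
      set C := b*x + q*R' with hCdef
      have hw_t : HasDerivAt (fun τ => M' * Real.exp (2*L*τ + C))
          (M' * (Real.exp (2*L*t + C) * (2*L))) t := by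
        have h1 : HasDerivAt (fun τ : ℝ => 2*L*τ + C) (2*L) t := by
          simpa using ((hasDerivAt_id t).const_mul (2*L)).add_const C
        exact (h1.exp).const_mul M'
      have hdt_eq : deriv (fun τ => nD τ x - M' * Real.exp (2*L*τ + C)) t
          = deriv (fun τ => nD τ x) t - M' * (Real.exp (2*L*t + C) * (2*L)) := by
        rw [deriv_fun_sub hDdiff hw_t.differentiableAt, hw_t.deriv]
      have hud : Differentiable ℝ (fun y => nD t y) :=
        (hDx t ht).differentiable (by norm_num)
      have hud2 : Differentiable ℝ (deriv (fun y => nD t y)) := by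
        have h2 := (contDiff_succ_iff_deriv (n := 1)).mp
          (by norm_num at hDx ⊢; exact hDx t ht)
        exact h2.2.2.differentiable (by norm_num)
      have hdx1 : deriv (fun y => nD t y - M' * Real.exp (2*L*t + (b*y + q*R')))
          = fun y => deriv (fun y => nD t y) y - M' * (Real.exp (2*L*t + (b*y + q*R')) * b) := by
        funext y
        have hw : HasDerivAt (fun y : ℝ => M' * Real.exp (2*L*t + (b*y + q*R')))
            (M' * (Real.exp (2*L*t + (b*y + q*R')) * b)) y := by
          have h1 : HasDerivAt (fun y : ℝ => 2*L*t + (b*y + q*R')) b y := by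
            simpa using (((hasDerivAt_id y).const_mul b).add_const (q*R')).const_add (2*L*t)
          exact (h1.exp).const_mul M'
        exact ((hud y).hasDerivAt.sub hw).deriv
      have hdx2 : deriv (deriv (fun y => nD t y - M' * Real.exp (2*L*t + (b*y + q*R')))) x
          = deriv (deriv (fun y => nD t y)) x - M' * (Real.exp (2*L*t + (b*x + q*R')) * b * b) := by
        rw [hdx1]
        have hw : HasDerivAt (fun y : ℝ => M' * (Real.exp (2*L*t + (b*y + q*R')) * b))
            (M' * (Real.exp (2*L*t + (b*x + q*R')) * b * b)) x := by
          have h1 : HasDerivAt (fun y : ℝ => 2*L*t + (b*y + q*R')) b x := by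
            simpa using (((hasDerivAt_id x).const_mul b).add_const (q*R')).const_add (2*L*t)
          exact ((h1.exp).mul_const b).const_mul M'
        exact (((hud2 x).hasDerivAt.sub hw)).deriv
      rw [hdt_eq, hdx2]
      have hpde := hRHS t ht x
      have hE : Real.exp (2*L*t + (b*x + q*R')) = Real.exp (2*L*t + C) := by rw [hCdef]
      rw [hE]
      have hbb : b*b = L := by rw [← hb2]; ring
      have h5 : M' * (Real.exp (2*L*t + C) * b * b) = L * (M' * Real.exp (2*L*t + C)) := by
        rw [mul_assoc (Real.exp (2*L*t + C)) b b, hbb]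
        ring
      linarith [h5, hpde]
  -- conclusion
  intro c' hc'
  have hc'q : 2*q < c' := by
    simpa [hqdef, hLdef] using hc'
  set B : ℝ → ℝ := fun t => M' * Real.exp (q*R') * Real.exp ((2*L - q*c')*t) with hBdef
  have hbound : ∀ t ≥ (0:ℝ), ∀ x, c'*t ≤ |x| → nD t x ≤ B t := by
    intro t ht x hx
    have hBt : B t = M' * Real.exp (2*L*t - q*(c'*t) + q*R') := by
      simp only [hBdef]
      rw [mul_assoc, ← Real.exp_add]
      ring_nf
    rcases le_or_gt 0 x with h | h
    · have hxval : x = |x| := (abs_of_nonneg h).symm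
      have h1 := hcomp (-q) (by rw [abs_neg, abs_of_pos hq]) t ht x
      refine le_trans h1 ?_
      rw [hBt]
      apply mul_le_mul_of_nonneg_left _ (by linarith : (0:ℝ) ≤ M')
      apply Real.exp_le_exp.mpr
      have : q * (c'*t) ≤ q * x := by
        apply mul_le_mul_of_nonneg_left _ hq.le
        rw [hxval]; exact hx
      linarith
    · have hxval : -x = |x| := (abs_of_neg h).symm
      have h1 := hcomp q (abs_of_pos hq) t ht x
      refine le_trans h1 ?_
      rw [hBt]
      apply mul_le_mul_of_nonneg_left _ (by linarith : (0:ℝ) ≤ M')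
      apply Real.exp_le_exp.mpr
      have : q * (c'*t) ≤ q * (-x) := by
        apply mul_le_mul_of_nonneg_left _ hq.le
        rw [hxval]; exact hx
      linarith
  have htendB : Filter.Tendsto B Filter.atTop (nhds 0) := by
    have hk : 2*L - q*c' < 0 := by nlinarith
    have h1 : Filter.Tendsto (fun t : ℝ => (2*L - q*c')*t) Filter.atTop Filter.atBot :=
      Filter.Tendsto.const_mul_atTop_of_neg hk Filter.tendsto_id
    have h2 : Filter.Tendsto (fun t : ℝ => Real.exp ((2*L - q*c')*t)) Filter.atTop (nhds 0) :=
      Real.tendsto_exp_atBot.comp h1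
    have h3 := h2.const_mul (M' * Real.exp (q*R'))
    simpa [hBdef, mul_assoc] using h3
  apply tendsto_of_tendsto_of_tendsto_of_le_of_le' tendsto_const_nhds htendB
  · filter_upwards [Filter.eventually_ge_atTop (0:ℝ)] with t ht
    apply Real.sSup_nonneg
    rintro y ⟨x, hx, rfl⟩
    exact hDnn t ht x
  · filter_upwards [Filter.eventually_ge_atTop (0:ℝ)] with t ht
    apply Real.sSup_le
    · rintro y ⟨x, hx, rfl⟩
      exact hbound t ht x hx
    · have : (0:ℝ) < M' := by linarith
      positivity
end

section
/- Let s ∈ [0,1), r > 0, c ∈ ℝ, and let (N_D, N_O) be a traveling-wave profile of the gene-drive density system with speed c such that N_D(x) > 0 and N_O(x) ≥ 0 for all x, (N_D(x), N_O(x)) → (0, 1) as x → -∞, liminf_{x→-∞} N_D''(x)/N_D(x) > 0, and liminf_{x→-∞} N_D'(x)/N_D(x) > 0. If c ≥ 0, then s ≥ 1/2; equivalently, if s < 1/2 then necessarily c < 0. -/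
open Filter

lemma liminf_pos_exists (f : ℝ → ℝ) (h : 0 < Filter.liminf f Filter.atBot) :
    ∃ a > 0, ∀ᶠ x in Filter.atBot, a ≤ f x := by
  rw [Filter.liminf_eq] at h
  by_contra hcon
  push_neg at hcon
  have : sSup {a | ∀ᶠ x in Filter.atBot, a ≤ f x} ≤ 0 := by
    apply Real.sSup_le _ le_rfl
    intro b hb
    by_contra hb0
    exact hcon b (lt_of_not_ge hb0) (hb.mono fun x hx => not_lt.mpr hx)
  linarith

/-- For a traveling-wave profile `(N_D, N_O)` of the gene-drive density
system with `N_D > 0`, `N_O ≥ 0`, `(N_D, N_O) → (0,1)` at `-∞`, and positive liminf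
at `-∞` of both `N_D''/N_D` and `N_D'/N_D`: if `c ≥ 0` then `s ≥ 1/2`; equivalently,
if `s < 1/2` then `c < 0`. -/
theorem stmt4
    (s r c : ℝ) (hs : s ∈ Set.Ico (0 : ℝ) 1) (hr : 0 < r)
    (ND NO : ℝ → ℝ)
    (hD2 : ContDiff ℝ 2 ND) (hO2 : ContDiff ℝ 2 NO)
    (hsum : ∀ x, 0 < ND x + NO x)
    (hDpos : ∀ x, 0 < ND x) (hOnn : ∀ x, 0 ≤ NO x)
    (hlim : Filter.Tendsto (fun x => (ND x, NO x)) Filter.atBot (nhds (0, 1)))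
    (hliminf2 : 0 < Filter.liminf (fun x => deriv (deriv ND) x / ND x) Filter.atBot)
    (hliminf1 : 0 < Filter.liminf (fun x => deriv ND x / ND x) Filter.atBot)
    (heqD : ∀ x, -deriv (deriv ND) x - c * deriv ND x
      = ND x * ((1 - s) * (1 + NO x / (ND x + NO x))
          * (r * (1 - ND x - NO x) + 1) - 1))
    (heqO : ∀ x, -deriv (deriv NO) x - c * deriv NO x
      = NO x * ((NO x / (ND x + NO x)) * (r * (1 - ND x - NO x) + 1) - 1)) :
    (0 ≤ c → 1 / 2 ≤ s) ∧ (s < 1 / 2 → c < 0) := by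
  have main : 0 ≤ c → 1 / 2 ≤ s := by
    intro hc
    -- extract eventual lower bounds from the liminf hypotheses
    obtain ⟨a2, ha2, hev2⟩ := liminf_pos_exists _ hliminf2
    obtain ⟨a1, ha1, hev1⟩ := liminf_pos_exists _ hliminf1
    -- componentwise limits
    have hND : Tendsto ND atBot (nhds 0) := by
      have := (Continuous.tendsto continuous_fst ((0:ℝ),(1:ℝ))).comp hlim
      simpa [Function.comp_def] using this
    have hNO : Tendsto NO atBot (nhds 1) := by
      have := (Continuous.tendsto continuous_snd ((0:ℝ),(1:ℝ))).comp hlim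
      simpa [Function.comp_def] using this
    set g : ℝ → ℝ := fun x => (1 - s) * (1 + NO x / (ND x + NO x))
          * (r * (1 - ND x - NO x) + 1) - 1 with hgdef
    have hden : Tendsto (fun x => ND x + NO x) atBot (nhds 1) := by
      simpa using hND.add hNO
    have hratio : Tendsto (fun x => NO x / (ND x + NO x)) atBot (nhds 1) := by
      have := hNO.div hden one_ne_zero
      simpa only [div_one, Pi.div_def] using this
    have hlog : Tendsto (fun x => r * (1 - ND x - NO x) + 1) atBot (nhds 1) := by
      have h0 : Tendsto (fun x => 1 - ND x - NO x) atBot (nhds 0) := by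
        have := ((tendsto_const_nhds (x := (1:ℝ)) (f := atBot)).sub hND).sub hNO
        simpa using this
      have := ((tendsto_const_nhds (x := r) (f := atBot)).mul h0).add
        (tendsto_const_nhds (x := (1:ℝ)) (f := atBot))
      simpa using this
    have h2 : Tendsto (fun x => 1 + NO x / (ND x + NO x)) atBot (nhds 2) := by
      have := (tendsto_const_nhds (x := (1:ℝ)) (f := atBot)).add hratio
      norm_num at this
      exact this
    have hg : Tendsto g atBot (nhds (1 - 2 * s)) := by
      have := (((tendsto_const_nhds (x := 1 - s) (f := atBot)).mul h2).mul hlog).sub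
        (tendsto_const_nhds (x := (1:ℝ)) (f := atBot))
      have heq : (1:ℝ) - 2 * s = (1 - s) * 2 * 1 - 1 := by ring
      rw [heq]
      exact this
    -- eventually g x ≤ -a2
    have hevg : ∀ᶠ x in atBot, g x ≤ -a2 := by
      filter_upwards [hev1, hev2] with x h1 h2x
      have hN : 0 < ND x := hDpos x
      have hd : a1 * ND x ≤ deriv ND x := (le_div_iff₀ hN).mp h1
      have hdd : a2 * ND x ≤ deriv (deriv ND) x := (le_div_iff₀ hN).mp h2x
      have hx := heqD x
      have hdpos : 0 < deriv ND x := lt_of_lt_of_le (mul_pos ha1 hN) hd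
      have hcd : 0 ≤ c * deriv ND x := mul_nonneg hc hdpos.le
      -- ND x * g x = -dd - c*d ≤ -a2 * ND x
      have hkey : ND x * g x ≤ -a2 * ND x := by
        rw [← hx]; linarith
      nlinarith [hkey, hN]
    have hle : 1 - 2 * s ≤ -a2 := le_of_tendsto hg hevg
    linarith
  exact ⟨main, fun hs' => by
    by_contra hcneg
    push_neg at hcneg
    linarith [main hcneg]⟩
end

section
/- Let s ∈ [0,1), r > 0, c ∈ ℝ, and let (N_D, N_O) be a traveling-wave profile of the gene-drive density system with speed c such that N_D(x) > 0 and N_O(x) ≥ 0 for all x and (N_D(x), N_O(x)) → (0, 1) as x → -∞. Suppose there exists λ > 0 such that N_D''(x)/N_D(x) → λ² and N_D'(x)/N_D(x) → λ as x → -∞. Then λ² + c·λ + (1 - 2s) = 0; in particular, if s ≤ 1/2 then c ≤ -2√(1-2s). -/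
/-- For a traveling-wave profile `(N_D, N_O)` of the gene-drive density
system with `N_D > 0`, `N_O ≥ 0`, `(N_D, N_O) → (0,1)` at `-∞`, if there exists
`λ > 0` with `N_D''/N_D → λ²` and `N_D'/N_D → λ` at `-∞`, then
`λ² + cλ + (1-2s) = 0`; in particular, if `s ≤ 1/2` then `c ≤ -2√(1-2s)`. -/
theorem stmt5
    (s r c : ℝ) (hs : s ∈ Set.Ico (0 : ℝ) 1) (hr : 0 < r)
    (ND NO : ℝ → ℝ)
    (hD2 : ContDiff ℝ 2 ND) (hO2 : ContDiff ℝ 2 NO)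
    (hsum : ∀ x, 0 < ND x + NO x)
    (hDpos : ∀ x, 0 < ND x) (hOnn : ∀ x, 0 ≤ NO x)
    (hlim : Filter.Tendsto (fun x => (ND x, NO x)) Filter.atBot (nhds (0, 1)))
    (lam : ℝ) (hlam : 0 < lam)
    (hlim2 : Filter.Tendsto (fun x => deriv (deriv ND) x / ND x) Filter.atBot
      (nhds (lam ^ 2)))
    (hlim1 : Filter.Tendsto (fun x => deriv ND x / ND x) Filter.atBot (nhds lam))
    (heqD : ∀ x, -deriv (deriv ND) x - c * deriv ND x
      = ND x * ((1 - s) * (1 + NO x / (ND x + NO x))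
          * (r * (1 - ND x - NO x) + 1) - 1))
    (heqO : ∀ x, -deriv (deriv NO) x - c * deriv NO x
      = NO x * ((NO x / (ND x + NO x)) * (r * (1 - ND x - NO x) + 1) - 1)) :
    lam ^ 2 + c * lam + (1 - 2 * s) = 0 ∧
      (s ≤ 1 / 2 → c ≤ -2 * Real.sqrt (1 - 2 * s)) := by
  have hDlim : Filter.Tendsto ND Filter.atBot (nhds 0) :=
    (continuous_fst.tendsto _).comp hlim
  have hOlim : Filter.Tendsto NO Filter.atBot (nhds 1) :=
    (continuous_snd.tendsto _).comp hlim
  -- limit of RHS factor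
  have hrhs : Filter.Tendsto
      (fun x => (1 - s) * (1 + NO x / (ND x + NO x)) * (r * (1 - ND x - NO x) + 1) - 1)
      Filter.atBot (nhds ((1 - s) * (1 + 1 / (0 + 1)) * (r * (1 - 0 - 1) + 1) - 1)) := by
    apply Filter.Tendsto.sub_const
    apply Filter.Tendsto.mul
    · apply Filter.Tendsto.const_mul
      exact (tendsto_const_nhds.add (hOlim.div (hDlim.add hOlim) (by norm_num)))
    · exact ((tendsto_const_nhds.sub hDlim).sub hOlim).const_mul r |>.add_const 1
  -- LHS equals this factor pointwise after division
  have heq' : ∀ x, -(deriv (deriv ND) x / ND x) - c * (deriv ND x / ND x)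
      = (1 - s) * (1 + NO x / (ND x + NO x)) * (r * (1 - ND x - NO x) + 1) - 1 := by
    intro x
    have hne := (hDpos x).ne'
    have h1 : -(deriv (deriv ND) x / ND x) - c * (deriv ND x / ND x)
        = (-deriv (deriv ND) x - c * deriv ND x) / ND x := by
      field_simp
    rw [h1, heqD x, mul_div_assoc, mul_comm, div_mul_cancel₀ _ hne]
  have hlhs : Filter.Tendsto
      (fun x => (1 - s) * (1 + NO x / (ND x + NO x)) * (r * (1 - ND x - NO x) + 1) - 1)
      Filter.atBot (nhds (-(lam ^ 2) - c * lam)) := by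
    have : Filter.Tendsto
        (fun x => -(deriv (deriv ND) x / ND x) - c * (deriv ND x / ND x))
        Filter.atBot (nhds (-(lam ^ 2) - c * lam)) :=
      (hlim2.neg).sub (hlim1.const_mul c)
    exact this.congr (fun x => heq' x)
  have key : -(lam ^ 2) - c * lam = (1 - s) * (1 + 1 / (0 + 1)) * (r * (1 - 0 - 1) + 1) - 1 :=
    tendsto_nhds_unique hlhs hrhs
  have heq0 : lam ^ 2 + c * lam + (1 - 2 * s) = 0 := by
    have : (1 - s) * (1 + 1 / ((0:ℝ) + 1)) * (r * (1 - 0 - 1) + 1) - 1 = 1 - 2 * s := by ring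
    linarith [key, this]
  refine ⟨heq0, fun hs2 => ?_⟩
  have h1 : (0:ℝ) ≤ 1 - 2 * s := by linarith
  have hsq : Real.sqrt (1 - 2 * s) ^ 2 = 1 - 2 * s := Real.sq_sqrt h1
  nlinarith [sq_nonneg (lam - Real.sqrt (1 - 2 * s)), Real.sqrt_nonneg (1 - 2 * s), hlam]
end

section
/- Let s ∈ [0, 1/2], r > 0, c ∈ ℝ, and let (P, N) be a nontrivial traveling wave of the gene-drive frequency system with speed c whose profile P is strictly increasing. Then c < 0. -/
/-- For `s ∈ [0, 1/2]`, a nontrivial traveling wave of the gene-drive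
frequency system with strictly increasing `P` has speed `c < 0`. -/
theorem stmt6
    (s r c : ℝ) (hs0 : 0 ≤ s) (hs : s ≤ 1 / 2) (hr : 0 < r)
    (P N : ℝ → ℝ)
    (hP2 : ContDiff ℝ 2 P) (hN2 : ContDiff ℝ 2 N)
    (hNpos : ∀ x, 0 < N x)
    (hPbd : Bornology.IsBounded (Set.range P))
    (hNbd : Bornology.IsBounded (Set.range N))
    (hPnn : ∀ x, 0 ≤ P x)
    (hPmono : StrictMono P) (hNanti : StrictAnti N)
    (hPlim : Filter.Tendsto P Filter.atBot (nhds 0))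
    (hNlim : Filter.Tendsto N Filter.atBot (nhds 1))
    (heqP : ∀ x, -deriv (deriv P) x - c * deriv P x - 2 * (deriv N x / N x) * deriv P x
      = (r * (1 - N x) + 1) * P x * (1 - P x) * (s * P x - (2 * s - 1)))
    (heqN : ∀ x, -deriv (deriv N) x - c * deriv N x
      = N x * ((1 - s + s * (1 - P x) ^ 2) * (r * (1 - N x) + 1) - 1))
    (hnontriv : ∃ x, P x ≠ 0) :
    c < 0 := by
  by_contra hc
  push_neg at hc
  -- basic differentiability
  have hPdiff : Differentiable ℝ P := hP2.differentiable (by norm_num)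
  have hNdiff : Differentiable ℝ N := hN2.differentiable (by norm_num)
  have hP'cd : ContDiff ℝ 1 (deriv P) := by
    rw [show (2 : WithTop ℕ∞) = 1 + 1 from by norm_num] at hP2
    exact (contDiff_succ_iff_deriv.mp hP2).2.2
  have hP'diff : Differentiable ℝ (deriv P) := hP'cd.differentiable (by norm_num)
  -- N ≤ 1 everywhere
  have hNle : ∀ x, N x ≤ 1 := by
    intro x
    have h1 : ∀ᶠ y in Filter.atBot, N x ≤ N y := by
      filter_upwards [Filter.eventually_lt_atBot x] with y hy
      exact (hNanti hy).le
    exact ge_of_tendsto hNlim h1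
  -- deriv P ≥ 0 everywhere
  have hP'nn : ∀ x, 0 ≤ deriv P x := by
    intro x
    have h := (hPdiff x).hasDerivAt
    rw [hasDerivAt_iff_tendsto_slope] at h
    have h2 : Filter.Tendsto (slope P x) (nhdsWithin x (Set.Ioi x)) (nhds (deriv P x)) :=
      h.mono_left (nhdsWithin_mono x fun y hy => ne_of_gt hy)
    refine ge_of_tendsto h2 ?_
    filter_upwards [self_mem_nhdsWithin] with y hy
    have hy' : x < y := hy
    have h3 : 0 ≤ P y - P x := sub_nonneg.mpr (hPmono hy').le
    rw [slope_def_field]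
    exact div_nonneg h3 (by linarith)
  -- find ξ with deriv P ξ > 0 and P ξ < 1
  obtain ⟨b, hb⟩ : ∃ b, P b < 1 := by
    have := hPlim.eventually (eventually_lt_nhds (by norm_num : (0:ℝ) < 1))
    exact this.exists
  obtain ⟨ξ, hξmem, hξ⟩ := exists_deriv_eq_slope P (by linarith : b - 1 < b)
    (hPdiff.continuous.continuousOn) (hPdiff.differentiableOn)
  have hξb : ξ < b := hξmem.2
  have hPξlt : P ξ < 1 := lt_trans (hPmono hξb) hb
  have hslope : 0 < deriv P ξ := by
    rw [hξ]
    have h1 : P (b - 1) < P b := hPmono (by linarith)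
    have h2 : (0:ℝ) < b - (b - 1) := by norm_num
    exact div_pos (by linarith) h2
  -- Q = N² · P'
  set Q : ℝ → ℝ := fun x => (N x) ^ 2 * deriv P x with hQdef
  have hQderiv : ∀ x, HasDerivAt Q
      (2 * N x ^ 1 * deriv N x * deriv P x + N x ^ 2 * deriv (deriv P) x) x := by
    intro x
    exact ((hNdiff x).hasDerivAt.pow 2).mul (hP'diff x).hasDerivAt
  have hQdiff : Differentiable ℝ Q := fun x => (hQderiv x).differentiableAt
  -- Q is antitone on Iic ξ
  have hQanti : AntitoneOn Q (Set.Iic ξ) := by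
    apply antitoneOn_of_deriv_nonpos (convex_Iic ξ) hQdiff.continuous.continuousOn
      hQdiff.differentiableOn
    intro x hx
    rw [interior_Iic] at hx
    have hxξ : x < ξ := hx
    rw [(hQderiv x).deriv]
    have hNx := hNpos x
    have hNne : N x ≠ 0 := ne_of_gt hNx
    -- reaction term is nonnegative
    have hPx1 : P x < 1 := lt_trans (hPmono hxξ) hPξlt
    have hg : 0 ≤ (r * (1 - N x) + 1) * P x * (1 - P x) * (s * P x - (2 * s - 1)) := by
      have h1 : 0 ≤ r * (1 - N x) + 1 := by nlinarith [hNle x, hr.le]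
      have h2 : 0 ≤ s * P x - (2 * s - 1) := by nlinarith [hPnn x]
      have h3 : 0 ≤ 1 - P x := by linarith
      exact mul_nonneg (mul_nonneg (mul_nonneg h1 (hPnn x)) h3) h2
    have heq := heqP x
    have hdiv : N x ^ 2 * (deriv N x / N x) = N x * deriv N x := by
      field_simp
    -- deriv of deriv P from the equation
    have hA : deriv (deriv P) x = -c * deriv P x - 2 * (deriv N x / N x) * deriv P x
        - (r * (1 - N x) + 1) * P x * (1 - P x) * (s * P x - (2 * s - 1)) := by
      linarith [heqP x]
    rw [hA]
    have expand : 2 * N x ^ 1 * deriv N x * deriv P x +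
        N x ^ 2 * (-c * deriv P x - 2 * (deriv N x / N x) * deriv P x
          - (r * (1 - N x) + 1) * P x * (1 - P x) * (s * P x - (2 * s - 1)))
        = -c * (N x ^ 2 * deriv P x)
          - N x ^ 2 * ((r * (1 - N x) + 1) * P x * (1 - P x) * (s * P x - (2 * s - 1))) := by
      field_simp
      ring
    rw [expand]
    have h4 : 0 ≤ N x ^ 2 * deriv P x := mul_nonneg (sq_nonneg _) (hP'nn x)
    have h5 : 0 ≤ N x ^ 2 * ((r * (1 - N x) + 1) * P x * (1 - P x) * (s * P x - (2 * s - 1))) :=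
      mul_nonneg (sq_nonneg _) hg
    nlinarith [mul_nonneg hc h4]
  have hQξpos : 0 < Q ξ := mul_pos (pow_pos (hNpos ξ) 2) hslope
  -- deriv P x ≥ Q ξ for x ≤ ξ
  have hP'ge : ∀ x ≤ ξ, Q ξ ≤ deriv P x := by
    intro x hx
    have h1 : Q ξ ≤ Q x := hQanti hx Set.self_mem_Iic hx
    have h2 : Q x ≤ deriv P x := by
      have hN1 : N x ^ 2 ≤ 1 := by nlinarith [hNpos x, hNle x]
      have := mul_le_of_le_one_left (hP'nn x) hN1
      simpa [hQdef] using this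
    linarith
  -- then P decays linearly going left, contradiction with P ≥ 0
  set R : ℝ → ℝ := fun x => P x - Q ξ * x with hRdef
  have hRmono : MonotoneOn R (Set.Iic ξ) := by
    have hRdiff : Differentiable ℝ R := hPdiff.sub (differentiable_id.const_mul (Q ξ))
    apply monotoneOn_of_deriv_nonneg (convex_Iic ξ) hRdiff.continuous.continuousOn
    · exact hRdiff.differentiableOn
    · intro x hx
      rw [interior_Iic] at hx
      have : deriv R x = deriv P x - Q ξ := by
        have h1 : HasDerivAt R (deriv P x - Q ξ * 1) x :=
          (hPdiff x).hasDerivAt.sub ((hasDerivAt_id x).const_mul (Q ξ))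
        simpa using h1.deriv
      rw [this]
      have := hP'ge x (le_of_lt hx)
      linarith
  set x₀ : ℝ := ξ - (P ξ + 1) / Q ξ with hx₀def
  have hx₀le : x₀ ≤ ξ := by
    have : 0 < (P ξ + 1) / Q ξ := div_pos (by linarith [hPnn ξ]) hQξpos
    simp only [hx₀def]; linarith
  have hR := hRmono (Set.mem_Iic.mpr hx₀le) Set.self_mem_Iic hx₀le
  have hPx₀ : P x₀ ≤ P ξ - Q ξ * (ξ - x₀) := by
    simp only [hRdef] at hR
    nlinarith
  have hξx₀ : Q ξ * (ξ - x₀) = P ξ + 1 := by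
    simp only [hx₀def]
    field_simp
    ring
  rw [hξx₀] at hPx₀
  linarith [hPnn x₀]
end

section
/- Let s ∈ [1/2, 2/3], r > s/(1-s), c ∈ ℝ, and let (P, N) be a nontrivial traveling wave of the gene-drive frequency system with speed c such that P is strictly increasing and (P(x), N(x)) → (1, (1/r)(r - s/(1-s))) as x → +∞. If (1 - s/(r(1-s)))⁴·(2 - 3s) ≥ (r + 1 - (1 - s/(r(1-s)))⁴)·((2s-1)/s)³, then c < 0. -/
open Filter Set intervalIntegral

/-- Antiderivative of `u ↦ u*(1-u)*(s*u-(2*s-1))`. -/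
noncomputable def gdG (s u : ℝ) : ℝ := -(s*u^4)/4 + (3*s-1)*u^3/3 - (2*s-1)*u^2/2

lemma gdG_hasDeriv (s u : ℝ) : HasDerivAt (gdG s) (u*(1-u)*(s*u-(2*s-1))) u := by
  have h4 : HasDerivAt (fun u:ℝ => u^4) (4*u^3) u := by simpa using hasDerivAt_pow 4 u
  have h3 : HasDerivAt (fun u:ℝ => u^3) (3*u^2) u := by simpa using hasDerivAt_pow 3 u
  have h2 : HasDerivAt (fun u:ℝ => u^2) (2*u) u := by simpa using hasDerivAt_pow 2 u
  have h : HasDerivAt (gdG s)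
      (-(s*(4*u^3))/4 + (3*s-1)*(3*u^2)/3 - (2*s-1)*(2*u)/2) u := by
    unfold gdG
    exact (((h4.const_mul s).neg.div_const 4).add
      ((h3.const_mul (3*s-1)).div_const 3)).sub ((h2.const_mul (2*s-1)).div_const 2)
  convert h using 1
  ring

lemma gdG_continuous (s : ℝ) : Continuous (gdG s) := by
  unfold gdG
  continuity

set_option maxHeartbeats 4000000 in
/-- For `s ∈ [1/2, 2/3]`, `r > s/(1-s)`, and a nontrivial traveling wave
of the gene-drive frequency system with strictly increasing `P` converging at `+∞`
to `(1, (1/r)(r - s/(1-s)))`: if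
`(1 - s/(r(1-s)))⁴ (2-3s) ≥ (r + 1 - (1 - s/(r(1-s)))⁴) ((2s-1)/s)³`, then `c < 0`. -/
theorem stmt7
    (s r c : ℝ) (hs0 : 1 / 2 ≤ s) (hs : s ≤ 2 / 3)
    (hr0 : 0 < r) (hr : s / (1 - s) < r)
    (P N : ℝ → ℝ)
    (hP2 : ContDiff ℝ 2 P) (hN2 : ContDiff ℝ 2 N)
    (hNpos : ∀ x, 0 < N x)
    (hPbd : Bornology.IsBounded (Set.range P))
    (hNbd : Bornology.IsBounded (Set.range N))
    (hPnn : ∀ x, 0 ≤ P x)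
    (hPmono : StrictMono P) (hNanti : StrictAnti N)
    (hPlim : Filter.Tendsto P Filter.atBot (nhds 0))
    (hNlim : Filter.Tendsto N Filter.atBot (nhds 1))
    (hPlim' : Filter.Tendsto P Filter.atTop (nhds 1))
    (hNlim' : Filter.Tendsto N Filter.atTop (nhds ((1 / r) * (r - s / (1 - s)))))
    (heqP : ∀ x, -deriv (deriv P) x - c * deriv P x - 2 * (deriv N x / N x) * deriv P x
      = (r * (1 - N x) + 1) * P x * (1 - P x) * (s * P x - (2 * s - 1)))
    (heqN : ∀ x, -deriv (deriv N) x - c * deriv N x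
      = N x * ((1 - s + s * (1 - P x) ^ 2) * (r * (1 - N x) + 1) - 1))
    (hnontriv : ∃ x, P x ≠ 0)
    (hineq : (1 - s / (r * (1 - s))) ^ 4 * (2 - 3 * s)
      ≥ (r + 1 - (1 - s / (r * (1 - s))) ^ 4) * ((2 * s - 1) / s) ^ 3) :
    c < 0 := by
  by_contra hc0
  push_neg at hc0
  -- basic scalar facts
  have hs1 : s < 1 := lt_of_le_of_lt hs (by norm_num)
  have hsp : (0:ℝ) < s := lt_of_lt_of_le (by norm_num) hs0
  have h1s : (0:ℝ) < 1 - s := by linarith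
  obtain ⟨θ, hθdef⟩ : ∃ y : ℝ, y = (2*s-1)/s := ⟨_, rfl⟩
  have hsθ : s * θ = 2*s-1 := by rw [hθdef]; field_simp
  have hθ0 : 0 ≤ θ := by rw [hθdef]; exact div_nonneg (by linarith) hsp.le
  have hθhalf : θ ≤ 1/2 := by rw [hθdef, div_le_iff₀ hsp]; linarith
  obtain ⟨A, hAdef⟩ : ∃ y : ℝ, y = 1 - s/(r*(1-s)) := ⟨_, rfl⟩
  have hineqA : A ^ 4 * (2 - 3*s) ≥ (r + 1 - A ^ 4) * θ ^ 3 := by rw [hAdef, hθdef]; exact hineq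
  have hA1 : A < 1 := by
    have h := div_pos hsp (mul_pos hr0 h1s)
    rw [hAdef]; linarith
  have hA0 : 0 < A := by
    have h2 : s/(r*(1-s)) < 1 := by
      rw [div_lt_one (mul_pos hr0 h1s)]
      calc s = (s/(1-s))*(1-s) := by field_simp
      _ < r*(1-s) := mul_lt_mul_of_pos_right hr h1s
    rw [hAdef]; linarith
  have hNlimA : Tendsto N atTop (nhds A) := by
    have h : (1/r)*(r - s/(1-s)) = A := by
      rw [hAdef]; field_simp
    rwa [h] at hNlim'
  -- bounds on P and N
  have hPlt1 : ∀ x, P x < 1 := fun x =>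
    lt_of_lt_of_le (hPmono (lt_add_one x))
      (ge_of_tendsto hPlim' (by
        filter_upwards [eventually_ge_atTop (x+1)] with y hy
        exact hPmono.monotone hy))
  have hPpos : ∀ x, 0 < P x := fun x =>
    lt_of_le_of_lt (hPnn (x-1)) (hPmono (by linarith))
  have hNlt1 : ∀ x, N x < 1 := fun x =>
    lt_of_lt_of_le (hNanti (show x-1 < x by linarith))
      (ge_of_tendsto hNlim (by
        filter_upwards [eventually_le_atBot (x-1)] with y hy
        exact hNanti.antitone hy))
  have hNgtA : ∀ x, A < N x := fun x =>
    lt_of_le_of_lt (le_of_tendsto hNlimA (by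
      filter_upwards [eventually_ge_atTop (x+1)] with y hy
      exact hNanti.antitone hy)) (hNanti (lt_add_one x))
  -- smoothness
  have hPd : Differentiable ℝ P := hP2.differentiable (by norm_num)
  have hNd : Differentiable ℝ N := hN2.differentiable (by norm_num)
  have hP2' : ContDiff ℝ ((1:ℕ∞)+1) P := by exact_mod_cast hP2
  rw [contDiff_succ_iff_deriv] at hP2'
  have hP'd : Differentiable ℝ (deriv P) := hP2'.2.2.differentiable (by simp)
  have hP'c : Continuous (deriv P) := hP'd.continuous
  have hN2' : ContDiff ℝ ((1:ℕ∞)+1) N := by exact_mod_cast hN2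
  rw [contDiff_succ_iff_deriv] at hN2'
  have hN'd : Differentiable ℝ (deriv N) := hN2'.2.2.differentiable (by simp)
  have hN'c : Continuous (deriv N) := hN'd.continuous
  have hPc : Continuous P := hPd.continuous
  have hNc : Continuous N := hNd.continuous
  -- nonnegativity of deriv P
  have hP'nn : ∀ x, 0 ≤ deriv P x := by
    intro x
    refine ge_of_tendsto (hasDerivAt_iff_tendsto_slope.mp (hPd x).hasDerivAt) ?_
    filter_upwards [self_mem_nhdsWithin] with y hy
    have hy' : y ≠ x := hy
    rw [slope_def_field]
    rcases lt_or_gt_of_ne hy' with h|h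
    · rw [div_nonneg_iff]
      right
      constructor
      · have := hPmono h; linarith
      · linarith
    · rw [div_nonneg_iff]
      left
      constructor
      · have := hPmono h; linarith
      · linarith
  -- continuity of integrands
  have hΦc : Continuous (fun x => N x^4 * ((r*(1-N x)+1) * P x * (1-P x) * (s*P x-(2*s-1)) * deriv P x)) := by
    fun_prop
  have hqc : Continuous (fun x => P x * (1-P x) * (s*P x-(2*s-1)) * deriv P x) := by
    fun_prop
  have hvc : Continuous (fun x => c * (N x^4 * deriv P x^2)) := by fun_prop
  -- derivative of the energy
  have hGd : ∀ x, HasDerivAt (fun y => (N y^2 * deriv P y)^2/2)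
      (-(c * (N x^4 * deriv P x^2) +
        N x^4 * ((r*(1-N x)+1) * P x * (1-P x) * (s*P x-(2*s-1)) * deriv P x))) x := by
    intro x
    have hN1x : HasDerivAt N (deriv N x) x := (hNd x).hasDerivAt
    have hP'x : HasDerivAt (deriv P) (deriv (deriv P) x) x := (hP'd x).hasDerivAt
    have hin : HasDerivAt (fun y => N y^2 * deriv P y)
        (2*N x*deriv N x*deriv P x + N x^2 * deriv (deriv P) x) x := by
      have h : HasDerivAt (fun y => N y^2 * deriv P y) _ x := (hN1x.pow 2).mul hP'x
      convert h using 1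
      push_cast
      simp only [Pi.pow_apply]
      ring
    have hsq : HasDerivAt (fun y => (N y^2 * deriv P y)^2/2)
        ((N x^2*deriv P x) * (2*N x*deriv N x*deriv P x + N x^2 * deriv (deriv P) x)) x := by
      have h : HasDerivAt (fun y => (N y^2 * deriv P y)^2/2) _ x := (hin.pow 2).div_const 2
      convert h using 1
      push_cast
      ring
    convert hsq using 1
    have heq := heqP x
    have hNx : N x ≠ 0 := (hNpos x).ne'
    have hdd : deriv (deriv P) x = -(c * deriv P x) - 2*(deriv N x / N x)*deriv P x
        - (r*(1-N x)+1) * P x * (1-P x) * (s*P x-(2*s-1)) := by linarith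
    rw [hdd]
    field_simp
    ring
  -- FTC upper bound (uses c ≥ 0)
  have key : ∀ a b, a ≤ b →
      (∫ x in a..b, N x^4 * ((r*(1-N x)+1) * P x * (1-P x) * (s*P x-(2*s-1)) * deriv P x))
        ≤ (N a^2 * deriv P a)^2/2 := by
    intro a b hab
    have hFTC := integral_eq_sub_of_hasDerivAt (fun x _ => hGd x)
      (((hvc.add hΦc).neg).intervalIntegrable a b)
    rw [intervalIntegral.integral_neg] at hFTC
    have hadd := intervalIntegral.integral_add (μ := MeasureTheory.volume) (hvc.intervalIntegrable a b) (hΦc.intervalIntegrable a b)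
    have hv0 : 0 ≤ ∫ x in a..b, c * (N x^4 * deriv P x^2) :=
      intervalIntegral.integral_nonneg hab (fun u _ => mul_nonneg hc0 (by positivity))
    have hGb : (0:ℝ) ≤ (N b^2 * deriv P b)^2/2 := by positivity
    have h2 : (∫ x in a..b, (c * (N x^4 * deriv P x^2) +
        N x^4 * ((r*(1-N x)+1) * P x * (1-P x) * (s*P x-(2*s-1)) * deriv P x)))
        = (N a^2 * deriv P a)^2/2 - (N b^2 * deriv P b)^2/2 := by linarith
    rw [hadd] at h2
    linarith
  -- FTC for gdG ∘ P
  have hFTCg : ∀ a b, (∫ x in a..b, P x * (1-P x) * (s*P x-(2*s-1)) * deriv P x)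
      = gdG s (P b) - gdG s (P a) := by
    intro a b
    refine integral_eq_sub_of_hasDerivAt (f := fun x => gdG s (P x)) (fun x _ => ?_)
      (hqc.intervalIntegrable a b)
    have h := (gdG_hasDeriv s (P x)).comp x (hPd x).hasDerivAt
    exact h
  have hFTCP : ∀ a b, (∫ x in a..b, deriv P x) = P b - P a := fun a b =>
    integral_eq_sub_of_hasDerivAt (fun x _ => (hPd x).hasDerivAt) (hP'c.intervalIntegrable a b)
  -- auxiliary pointwise facts
  have hm1 : ∀ x, 1 ≤ r*(1-N x)+1 := fun x => by nlinarith [hNlt1 x]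
  have hmr : ∀ x, r*(1-N x)+1 ≤ r+1 := fun x => by nlinarith [hNpos x]
  have hN4le1 : ∀ x, N x^4 ≤ 1 := fun x => pow_le_one₀ (hNpos x).le (hNlt1 x).le
  have hA4le : ∀ x, A^4 ≤ N x^4 := fun x => pow_le_pow_left₀ hA0.le (hNgtA x).le 4
  -- pointwise bound on the region P ≤ θ
  have pieceA : ∀ x, P x ≤ θ →
      (r+1) * (P x * (1-P x) * (s*P x-(2*s-1)) * deriv P x)
        ≤ N x^4 * ((r*(1-N x)+1) * P x * (1-P x) * (s*P x-(2*s-1)) * deriv P x) := by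
    intro x hx
    have hw : s*P x - (2*s-1) ≤ 0 := by
      have h := mul_le_mul_of_nonneg_left hx hsp.le
      linarith [hsθ]
    have hq : P x * (1-P x) * (s*P x-(2*s-1)) * deriv P x ≤ 0 := by
      have h1 : 0 ≤ P x * (1-P x) := mul_nonneg (hPpos x).le (by linarith [hPlt1 x])
      have h2 : P x * (1-P x) * (s*P x-(2*s-1)) ≤ 0 := mul_nonpos_of_nonneg_of_nonpos h1 hw
      exact mul_nonpos_of_nonpos_of_nonneg h2 (hP'nn x)
    have hmN : N x^4 * (r*(1-N x)+1) ≤ r+1 := by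
      calc N x^4 * (r*(1-N x)+1) ≤ r*(1-N x)+1 :=
            mul_le_of_le_one_left (by linarith [hm1 x]) (hN4le1 x)
        _ ≤ r+1 := hmr x
    calc (r+1) * (P x * (1-P x) * (s*P x-(2*s-1)) * deriv P x)
        ≤ (N x^4 * (r*(1-N x)+1)) * (P x * (1-P x) * (s*P x-(2*s-1)) * deriv P x) :=
          mul_le_mul_of_nonpos_right hmN hq
      _ = N x^4 * ((r*(1-N x)+1) * P x * (1-P x) * (s*P x-(2*s-1)) * deriv P x) := by ring
  -- pointwise bound on the region θ ≤ P
  have pieceB : ∀ x, θ ≤ P x →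
      A^4 * (P x * (1-P x) * (s*P x-(2*s-1)) * deriv P x)
        ≤ N x^4 * ((r*(1-N x)+1) * P x * (1-P x) * (s*P x-(2*s-1)) * deriv P x) := by
    intro x hx
    have hw : 0 ≤ s*P x - (2*s-1) := by
      have h := mul_le_mul_of_nonneg_left hx hsp.le
      linarith [hsθ]
    have hq : 0 ≤ P x * (1-P x) * (s*P x-(2*s-1)) * deriv P x := by
      have h1 : 0 ≤ P x * (1-P x) := mul_nonneg (hPpos x).le (by linarith [hPlt1 x])
      exact mul_nonneg (mul_nonneg h1 hw) (hP'nn x)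
    have hmN : A^4 ≤ N x^4 * (r*(1-N x)+1) := by
      calc A^4 ≤ N x^4 := hA4le x
        _ ≤ N x^4 * (r*(1-N x)+1) := le_mul_of_one_le_right (pow_nonneg (hNpos x).le 4) (hm1 x)
    calc A^4 * (P x * (1-P x) * (s*P x-(2*s-1)) * deriv P x)
        ≤ (N x^4 * (r*(1-N x)+1)) * (P x * (1-P x) * (s*P x-(2*s-1)) * deriv P x) :=
          mul_le_mul_of_nonneg_right hmN hq
      _ = N x^4 * ((r*(1-N x)+1) * P x * (1-P x) * (s*P x-(2*s-1)) * deriv P x) := by ring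
  -- choose x₁ with P x₁ > 1/2 ≥ θ
  obtain ⟨x₁, hx₁⟩ : ∃ x₁, 1/2 < P x₁ :=
    (hPlim'.eventually (eventually_gt_nhds (by norm_num : (1:ℝ)/2 < 1))).exists
  obtain ⟨x₂, hx₂def⟩ : ∃ y : ℝ, y = x₁ + 1 := ⟨_, rfl⟩
  have hx₁x₂ : x₁ < x₂ := by rw [hx₂def]; exact lt_add_one x₁
  have hPθ₁ : θ < P x₁ := lt_of_le_of_lt hθhalf hx₁
  have hP12 : P x₁ < P x₂ := hPmono hx₁x₂
  obtain ⟨ε, hεdef⟩ : ∃ y : ℝ, y = N x₂^4 - A^4 := ⟨_, rfl⟩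
  have hεpos : 0 < ε := by
    have := pow_lt_pow_left₀ (hNgtA x₂) hA0.le (by norm_num : 4 ≠ 0)
    rw [hεdef]; linarith
  obtain ⟨gmin, hgmindef⟩ : ∃ y : ℝ, y = P x₁ * (1 - P x₂) * (s*P x₁ - (2*s-1)) := ⟨_, rfl⟩
  have hgminpos : 0 < gmin := by
    have h1 : 0 < s*P x₁ - (2*s-1) := by
      linarith [hsθ, mul_lt_mul_of_pos_left hPθ₁ hsp]
    rw [hgmindef]
    exact mul_pos (mul_pos (hPpos x₁) (by linarith [hPlt1 x₂])) h1
  obtain ⟨ε₀, hε₀def⟩ : ∃ y : ℝ, y = ε * gmin * (P x₂ - P x₁) := ⟨_, rfl⟩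
  have hε₀pos : 0 < ε₀ := by rw [hε₀def]; exact mul_pos (mul_pos hεpos hgminpos) (by linarith)
  -- pointwise bound on [x₁, x₂]
  have pieceC : ∀ x ∈ Icc x₁ x₂,
      A^4 * (P x * (1-P x) * (s*P x-(2*s-1)) * deriv P x) + ε * gmin * deriv P x
        ≤ N x^4 * ((r*(1-N x)+1) * P x * (1-P x) * (s*P x-(2*s-1)) * deriv P x) := by
    intro x hx
    have hPl : P x₁ ≤ P x := hPmono.monotone hx.1
    have hPu : P x ≤ P x₂ := hPmono.monotone hx.2
    have hw : 0 < s*P x - (2*s-1) := by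
      have h := mul_lt_mul_of_pos_left (lt_of_lt_of_le hPθ₁ hPl) hsp
      linarith [hsθ]
    have hw1 : 0 < s*P x₁ - (2*s-1) := by
      have h := mul_lt_mul_of_pos_left hPθ₁ hsp
      linarith [hsθ]
    have h2 : (0:ℝ) < 1 - P x₂ := by linarith [hPlt1 x₂]
    have h3 : s*P x₁ - (2*s-1) ≤ s*P x - (2*s-1) := by
      have := mul_le_mul_of_nonneg_left hPl hsp.le
      linarith
    have hqnn : 0 ≤ P x * (1-P x) := mul_nonneg (hPpos x).le (by linarith [hPlt1 x])
    have hqg : gmin ≤ P x * (1-P x) * (s*P x-(2*s-1)) := by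
      rw [hgmindef]
      exact mul_le_mul (mul_le_mul hPl (by linarith) h2.le (hPpos x).le) h3 hw1.le hqnn
    have hNl : N x₂ ≤ N x := hNanti.antitone hx.2
    have hNX : A^4 + ε ≤ N x^4 * (r*(1-N x)+1) := by
      have h1 : N x₂^4 ≤ N x^4 := pow_le_pow_left₀ (hNpos x₂).le hNl 4
      calc A^4 + ε = N x₂^4 := by rw [hεdef]; ring
        _ ≤ N x^4 := h1
        _ ≤ N x^4 * (r*(1-N x)+1) := le_mul_of_one_le_right (pow_nonneg (hNpos x).le 4) (hm1 x)
    have hQP : 0 ≤ P x * (1-P x) * (s*P x-(2*s-1)) * deriv P x :=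
      mul_nonneg (mul_nonneg hqnn hw.le) (hP'nn x)
    have hh1 := mul_le_mul_of_nonneg_right hNX hQP
    have hh2 : ε * (gmin * deriv P x) ≤ ε * (P x * (1-P x) * (s*P x-(2*s-1)) * deriv P x) :=
      mul_le_mul_of_nonneg_left (mul_le_mul_of_nonneg_right hqg (hP'nn x)) hεpos.le
    nlinarith [hh1, hh2]
  -- integrability shorthands
  have hΦI : ∀ a b : ℝ, IntervalIntegrable (fun x => N x^4 * ((r*(1-N x)+1) * P x * (1-P x) * (s*P x-(2*s-1)) * deriv P x)) MeasureTheory.volume a b :=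
    fun a b => hΦc.intervalIntegrable a b
  -- integral bounds on monotone regions
  have intA : ∀ a b : ℝ, a ≤ b → (∀ x ∈ Icc a b, P x ≤ θ) →
      (r+1) * (gdG s (P b) - gdG s (P a))
        ≤ ∫ x in a..b, N x^4 * ((r*(1-N x)+1) * P x * (1-P x) * (s*P x-(2*s-1)) * deriv P x) := by
    intro a b hab hreg
    have h := intervalIntegral.integral_mono_on (μ := MeasureTheory.volume) hab
      ((continuous_const.mul hqc).intervalIntegrable a b) (hΦI a b)
      (fun x hx => pieceA x (hreg x hx))
    simp only [Pi.mul_apply] at h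
    rwa [intervalIntegral.integral_const_mul, hFTCg] at h
  have intB : ∀ a b : ℝ, a ≤ b → (∀ x ∈ Icc a b, θ ≤ P x) →
      A^4 * (gdG s (P b) - gdG s (P a))
        ≤ ∫ x in a..b, N x^4 * ((r*(1-N x)+1) * P x * (1-P x) * (s*P x-(2*s-1)) * deriv P x) := by
    intro a b hab hreg
    have h := intervalIntegral.integral_mono_on (μ := MeasureTheory.volume) hab
      ((continuous_const.mul hqc).intervalIntegrable a b) (hΦI a b)
      (fun x hx => pieceB x (hreg x hx))
    simp only [Pi.mul_apply] at h
    rwa [intervalIntegral.integral_const_mul, hFTCg] at h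
  have intC : A^4 * (gdG s (P x₂) - gdG s (P x₁)) + ε₀
      ≤ ∫ x in x₁..x₂, N x^4 * ((r*(1-N x)+1) * P x * (1-P x) * (s*P x-(2*s-1)) * deriv P x) := by
    have hfc1 : Continuous (fun x => A^4 * (P x * (1-P x) * (s*P x-(2*s-1)) * deriv P x)) :=
      continuous_const.mul hqc
    have hfc2 : Continuous (fun x => ε * gmin * deriv P x) := continuous_const.mul hP'c
    have h := intervalIntegral.integral_mono_on (μ := MeasureTheory.volume) hx₁x₂.le
      ((hfc1.add hfc2).intervalIntegrable x₁ x₂) (hΦI x₁ x₂) pieceC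
    simp only [Pi.add_apply] at h
    rw [intervalIntegral.integral_add (hfc1.intervalIntegrable x₁ x₂) (hfc2.intervalIntegrable x₁ x₂),
      intervalIntegral.integral_const_mul, intervalIntegral.integral_const_mul, hFTCg, hFTCP] at h
    have he : ε₀ = ε * gmin * (P x₂ - P x₁) := hε₀def
    linarith [h]
  -- unified lower bound
  have hlow : ∃ x₀, x₀ ≤ x₁ ∧ ∀ a, a ≤ x₀ → ∀ b, x₂ ≤ b →
      (r+1) * (gdG s θ - gdG s (P a)) + A^4 * (gdG s (P b) - gdG s θ) + ε₀
        ≤ ∫ x in a..b, N x^4 * ((r*(1-N x)+1) * P x * (1-P x) * (s*P x-(2*s-1)) * deriv P x) := by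
    rcases hθ0.lt_or_eq with hθpos | hθzero
    · obtain ⟨a', ha'⟩ : ∃ a', P a' < θ := (hPlim.eventually (eventually_lt_nhds hθpos)).exists
      have hale : min a' x₁ ≤ x₁ := min_le_right _ _
      have hPmin : P (min a' x₁) ≤ P a' := hPmono.monotone (min_le_left _ _)
      obtain ⟨x₀, hx₀mem, hx₀⟩ := intermediate_value_Icc hale hPc.continuousOn
        (⟨by linarith, hPθ₁.le⟩ : θ ∈ Icc (P (min a' x₁)) (P x₁))
      refine ⟨x₀, hx₀mem.2, ?_⟩
      intro a ha b hb
      have h01 : x₀ ≤ x₁ := hx₀mem.2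
      have hA1' := intA a x₀ ha (fun x hx => by rw [← hx₀]; exact hPmono.monotone hx.2)
      have hB1 := intB x₀ x₁ h01 (fun x hx => by rw [← hx₀]; exact hPmono.monotone hx.1)
      have hB2 := intB x₂ b hb (fun x hx =>
        le_trans (le_trans hPθ₁.le hP12.le) (hPmono.monotone hx.1))
      have hadd1 := intervalIntegral.integral_add_adjacent_intervals (hΦI a x₀) (hΦI x₀ x₁)
      have hadd2 := intervalIntegral.integral_add_adjacent_intervals (hΦI a x₁) (hΦI x₁ x₂)
      have hadd3 := intervalIntegral.integral_add_adjacent_intervals (hΦI a x₂) (hΦI x₂ b)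
      rw [hx₀] at hA1' hB1
      linarith [intC]
    · refine ⟨x₁, le_rfl, ?_⟩
      intro a ha b hb
      have hB1 := intB a x₁ ha (fun x _ => by rw [← hθzero]; exact (hPpos x).le)
      have hB2 := intB x₂ b hb (fun x hx =>
        le_trans (le_trans hPθ₁.le hP12.le) (hPmono.monotone hx.1))
      have hadd2 := intervalIntegral.integral_add_adjacent_intervals (hΦI a x₁) (hΦI x₁ x₂)
      have hadd3 := intervalIntegral.integral_add_adjacent_intervals (hΦI a x₂) (hΦI x₂ b)
      have hs2 : s = 1/2 := by
        have h0 : 2*s-1 = 0 := by rw [← hsθ, ← hθzero]; ring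
        linarith
      have hga : 0 ≤ gdG s (P a) := by
        unfold gdG
        rw [hs2]
        nlinarith [mul_nonneg (pow_nonneg (hPnn a) 3) (sub_nonneg.mpr (hPlt1 a).le),
          pow_nonneg (hPnn a) 4]
      have hgθ : gdG s θ = 0 := by rw [← hθzero]; unfold gdG; norm_num
      have hA41 : A^4 ≤ 1 := pow_le_one₀ hA0.le hA1.le
      rw [hgθ]
      linarith [hB1, hB2, intC, hadd2, hadd3,
        mul_le_mul_of_nonneg_right (show A^4 ≤ r+1 by linarith) hga]
  obtain ⟨x₀, hx₀x₁, hlowf⟩ := hlow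
  -- a sequence going to -∞ along which deriv P is small
  have hseq : ∀ n : ℕ, ∃ a, a ≤ min (-(n:ℝ)) x₀ ∧ deriv P a < 1/((n:ℝ)+1) := by
    intro n
    by_contra hcon
    push_neg at hcon
    obtain ⟨M, hMdef⟩ : ∃ y : ℝ, y = min (-(n:ℝ)) x₀ := ⟨_, rfl⟩
    have hnn : (0:ℝ) < (n:ℝ)+1 := by positivity
    have hab : M - 2*((n:ℝ)+1) ≤ M := by linarith
    have hmono := intervalIntegral.integral_mono_on (μ := MeasureTheory.volume) hab
      intervalIntegrable_const (hP'c.intervalIntegrable _ _)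
      (fun x hx => hcon x (le_trans hx.2 (le_of_eq hMdef)))
    rw [intervalIntegral.integral_const, hFTCP] at hmono
    have h1 : M - (M - 2*((n:ℝ)+1)) = 2*((n:ℝ)+1) := by ring
    rw [h1, smul_eq_mul] at hmono
    have h2 : 2*((n:ℝ)+1) * (1/((n:ℝ)+1)) = 2 := by field_simp
    rw [h2] at hmono
    linarith [hPpos (M - 2*((n:ℝ)+1)), hPlt1 M]
  choose a ha1 ha2 using hseq
  -- the contradiction chain
  have hchain : ∀ n : ℕ,
      (r+1) * (gdG s θ - gdG s (P (a n))) + A^4 * (gdG s (P (max (n:ℝ) x₂)) - gdG s θ) + ε₀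
        ≤ (1/((n:ℝ)+1))^2/2 := by
    intro n
    have hax₀ : a n ≤ x₀ := le_trans (ha1 n) (min_le_right _ _)
    have h1 := hlowf (a n) hax₀ (max (n:ℝ) x₂) (le_max_right _ _)
    have hab : a n ≤ max (n:ℝ) x₂ :=
      le_trans hax₀ (le_trans hx₀x₁ (le_trans hx₁x₂.le (le_max_right _ _)))
    have h2 := key (a n) (max (n:ℝ) x₂) hab
    have h4 : 0 ≤ N (a n)^2 * deriv P (a n) := mul_nonneg (sq_nonneg _) (hP'nn _)
    have h5 : N (a n)^2 * deriv P (a n) ≤ deriv P (a n) := by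
      have h6 : N (a n)^2 ≤ 1 := pow_le_one₀ (hNpos _).le (hNlt1 _).le
      nlinarith [hP'nn (a n)]
    have h6 : N (a n)^2 * deriv P (a n) < 1/((n:ℝ)+1) := lt_of_le_of_lt h5 (ha2 n)
    have h7 := pow_lt_pow_left₀ h6 h4 (by norm_num : 2 ≠ 0)
    linarith
  -- limits
  have hta : Tendsto a atTop atBot := by
    apply tendsto_atBot_mono (fun n => le_trans (ha1 n) (min_le_left _ _))
    exact tendsto_neg_atBot_iff.mpr tendsto_natCast_atTop_atTop
  have htb : Tendsto (fun n : ℕ => max (n:ℝ) x₂) atTop atTop :=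
    tendsto_atTop_mono (fun n => le_max_left _ _) tendsto_natCast_atTop_atTop
  have hPa : Tendsto (fun n => P (a n)) atTop (nhds 0) := hPlim.comp hta
  have hPb : Tendsto (fun n : ℕ => P (max (n:ℝ) x₂)) atTop (nhds 1) := hPlim'.comp htb
  have hGa : Tendsto (fun n => gdG s (P (a n))) atTop (nhds (gdG s 0)) :=
    ((gdG_continuous s).tendsto 0).comp hPa
  have hGb : Tendsto (fun n : ℕ => gdG s (P (max (n:ℝ) x₂))) atTop (nhds (gdG s 1)) :=
    ((gdG_continuous s).tendsto 1).comp hPb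
  have hLHS : Tendsto (fun n : ℕ =>
      (r+1) * (gdG s θ - gdG s (P (a n))) + A^4 * (gdG s (P (max (n:ℝ) x₂)) - gdG s θ) + ε₀)
      atTop (nhds ((r+1) * (gdG s θ - gdG s 0) + A^4 * (gdG s 1 - gdG s θ) + ε₀)) :=
    (((tendsto_const_nhds.sub hGa).const_mul (r+1)).add
      ((hGb.sub tendsto_const_nhds).const_mul (A^4))).add tendsto_const_nhds
  have hRHS : Tendsto (fun n : ℕ => (1/((n:ℝ)+1))^2/2) atTop (nhds 0) := by
    have h := tendsto_one_div_add_atTop_nhds_zero_nat (𝕜 := ℝ)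
    have h2 := (h.pow 2).div_const 2
    simpa using h2
  have hfin := le_of_tendsto_of_tendsto' hLHS hRHS hchain
  have hg0 : gdG s 0 = 0 := by unfold gdG; norm_num
  have hg1 : gdG s 1 = (2-3*s)/12 := by unfold gdG; ring
  have hgθ2 : gdG s θ = -θ^3/12 := by
    unfold gdG
    rw [hθdef]
    field_simp
    ring
  rw [hg0, hg1, hgθ2] at hfin
  linarith [hineqA, hε₀pos, hfin]
end

section
/- Let s ∈ [1/2, 2/3], set θ = (2s-1)/s, let r > s/(1-s), c ∈ ℝ, and let (P, N) be a nontrivial traveling wave of the gene-drive frequency system with speed c such that P is strictly increasing and (P(x), N(x)) → (1, (1/r)(r - s/(1-s))) as x → +∞. If r ≤ 4, 1 - ((1-s)·θ³/(2 - 3s + θ³))^(1/4) > 0, and r·(1 - ((1-s)·θ³/(2 - 3s + θ³))^(1/4)) ≥ s/(1-s), then c < 0. -/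
open Set Filter intervalIntegral

noncomputable def gdF (s p : ℝ) : ℝ := -(s*p^4)/4 + (3*s-1)*p^3/3 - (2*s-1)*p^2/2

noncomputable def gdf (s p : ℝ) : ℝ := p*(1-p)*(s*p-(2*s-1))

lemma gdF_cont (s : ℝ) : Continuous (gdF s) := by unfold gdF; fun_prop

lemma gdf_cont (s : ℝ) : Continuous (gdf s) := by unfold gdf; fun_prop

lemma gdf_deriv (s p : ℝ) : HasDerivAt (fun q => gdF s q) (gdf s p) p := by
  have heq : (fun q => gdF s q)
      = fun q : ℝ => (-(s)/4)*q^4 + ((3*s-1)/3)*q^3 - ((2*s-1)/2)*q^2 := by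
    funext q; unfold gdF; ring
  rw [heq]
  have H := (((hasDerivAt_pow 4 p).const_mul (-(s)/4)).add
      ((hasDerivAt_pow 3 p).const_mul ((3*s-1)/3))).sub
      ((hasDerivAt_pow 2 p).const_mul ((2*s-1)/2))
  refine H.congr_deriv ?_
  unfold gdf; push_cast; ring

lemma gdF_half_le (p : ℝ) (h0 : 0 ≤ p) (h1 : p ≤ 1) : gdF (1/2) p ≤ p := by
  unfold gdF
  nlinarith [mul_nonneg (mul_nonneg h0 (by linarith : (0:ℝ) ≤ 1-p))
    (by linarith : (0:ℝ) ≤ 1+p), pow_nonneg h0 4]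

lemma aux_deriv_nonneg {f : ℝ → ℝ} (hf : Monotone f) {d x : ℝ} (h : HasDerivAt f d x) : 0 ≤ d := by
  have h1 : Tendsto (slope f x) (nhdsWithin x (Ioi x)) (nhds d) :=
    (hasDerivAt_iff_tendsto_slope.mp h).mono_left
      (nhdsWithin_mono x (fun y hy => ne_of_gt hy))
  refine ge_of_tendsto h1 ?_
  filter_upwards [self_mem_nhdsWithin] with y hy
  have h2 : (0:ℝ) < y - x := sub_pos.mpr hy
  have h3 := hf (le_of_lt hy)
  simp only [slope_def_field]
  exact div_nonneg (by linarith) h2.le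

lemma aux_hmono {r : ℝ} (hr0 : 0 < r) (hr4 : r ≤ 4) :
    StrictMonoOn (fun t : ℝ => t ^ 4 * (r * (1 - t) + 1)) (Icc 0 1) := by
  have hfe : (fun t : ℝ => t ^ 4 * (r * (1 - t) + 1)) = fun t : ℝ => (1 + r) * t ^ 4 - r * t ^ 5 := by
    funext t; ring
  rw [hfe]
  apply strictMonoOn_of_deriv_pos (convex_Icc 0 1)
  · fun_prop
  · intro x hx
    rw [interior_Icc, mem_Ioo] at hx
    have hD : HasDerivAt (fun t : ℝ => (1 + r) * t ^ 4 - r * t ^ 5)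
        ((1 + r) * (4 * x ^ 3) - r * (5 * x ^ 4)) x := by
      have := ((hasDerivAt_pow 4 x).const_mul (1 + r)).sub ((hasDerivAt_pow 5 x).const_mul r)
      exact this.congr_deriv (by norm_num)
    rw [hD.deriv]
    have e1 : 0 < r * (x ^ 3 * (1 - x)) :=
      mul_pos hr0 (mul_pos (pow_pos hx.1 3) (sub_pos.mpr hx.2))
    have e2 : 0 ≤ (4 - r) * x ^ 3 := mul_nonneg (by linarith) (pow_pos hx.1 3).le
    nlinarith [e1, e2]

set_option maxHeartbeats 1000000 in
/-- For `s ∈ [1/2, 2/3]`, `θ = (2s-1)/s`, `r > s/(1-s)`, and a nontrivial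
traveling wave of the gene-drive frequency system with strictly increasing `P`
converging at `+∞` to `(1, (1/r)(r - s/(1-s)))`: if `r ≤ 4`,
`1 - ((1-s)θ³/(2-3s+θ³))^(1/4) > 0` and `r (1 - ((1-s)θ³/(2-3s+θ³))^(1/4)) ≥ s/(1-s)`,
then `c < 0`. -/
theorem stmt8
    (s r c : ℝ) (hs0 : 1 / 2 ≤ s) (hs : s ≤ 2 / 3)
    (hr0 : 0 < r) (hr : s / (1 - s) < r)
    (P N : ℝ → ℝ)
    (hP2 : ContDiff ℝ 2 P) (hN2 : ContDiff ℝ 2 N)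
    (hNpos : ∀ x, 0 < N x)
    (hPbd : Bornology.IsBounded (Set.range P))
    (hNbd : Bornology.IsBounded (Set.range N))
    (hPnn : ∀ x, 0 ≤ P x)
    (hPmono : StrictMono P) (hNanti : StrictAnti N)
    (hPlim : Filter.Tendsto P Filter.atBot (nhds 0))
    (hNlim : Filter.Tendsto N Filter.atBot (nhds 1))
    (hPlim' : Filter.Tendsto P Filter.atTop (nhds 1))
    (hNlim' : Filter.Tendsto N Filter.atTop (nhds ((1 / r) * (r - s / (1 - s)))))
    (heqP : ∀ x, -deriv (deriv P) x - c * deriv P x - 2 * (deriv N x / N x) * deriv P x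
      = (r * (1 - N x) + 1) * P x * (1 - P x) * (s * P x - (2 * s - 1)))
    (heqN : ∀ x, -deriv (deriv N) x - c * deriv N x
      = N x * ((1 - s + s * (1 - P x) ^ 2) * (r * (1 - N x) + 1) - 1))
    (hnontriv : ∃ x, P x ≠ 0)
    (hr4 : r ≤ 4)
    (hpos : 0 < 1 - ((1 - s) * ((2 * s - 1) / s) ^ 3
        / (2 - 3 * s + ((2 * s - 1) / s) ^ 3)) ^ ((1 : ℝ) / 4))
    (hineq : s / (1 - s) ≤ r * (1 - ((1 - s) * ((2 * s - 1) / s) ^ 3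
        / (2 - 3 * s + ((2 * s - 1) / s) ^ 3)) ^ ((1 : ℝ) / 4))) :
    c < 0 := by
  by_contra hcneg
  push_neg at hcneg
  -- basic positivity
  have hs2 : (0:ℝ) < s := by linarith
  have hs1 : (0:ℝ) < 1 - s := by linarith
  set θ : ℝ := (2*s-1)/s with hθdef
  clear_value θ
  have hθ0 : 0 ≤ θ := by rw [hθdef]; exact div_nonneg (by linarith) hs2.le
  have hθs : s * θ = 2*s - 1 := by rw [hθdef]; field_simp
  have hθh : θ ≤ 1/2 := by rw [hθdef, div_le_iff₀ hs2]; linarith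
  -- differentiability facts
  have hPd : Differentiable ℝ P := hP2.differentiable (by norm_num)
  have hNd : Differentiable ℝ N := hN2.differentiable (by norm_num)
  have hPc : Continuous P := hPd.continuous
  have hNc : Continuous N := hNd.continuous
  have hPc1 : Continuous (deriv P) := hP2.continuous_deriv one_le_two
  have hPd2 : Differentiable ℝ (deriv P) := by
    have h2 : ContDiff ℝ ((1 : WithTop ℕ∞) + 1) P := by convert hP2 using 2; exact one_add_one_eq_two
    exact (contDiff_succ_iff_deriv.mp h2).2.2.differentiable one_ne_zero
  -- N∞
  set Ninf : ℝ := (1/r) * (r - s/(1-s)) with hNinfdef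
  clear_value Ninf
  have hNinfpos : 0 < Ninf := by
    rw [hNinfdef]
    exact mul_pos (by positivity) (by linarith)
  have hgNinf : r * (1 - Ninf) = s/(1-s) := by
    rw [hNinfdef]; field_simp; ring
  have hNinflt1 : Ninf < 1 := by
    have h1 : 0 < s/(1-s) := by positivity
    nlinarith [hgNinf]
  -- pointwise bounds on N and P
  have hNlt1 : ∀ x, N x < 1 := by
    intro x
    have h1 : N x < N (x-1) := hNanti (by linarith)
    have h2 : N (x-1) ≤ 1 := by
      refine ge_of_tendsto hNlim ?_
      filter_upwards [eventually_le_atBot (x-2)] with y hy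
      exact hNanti.antitone (by linarith)
    linarith
  have hNgt : ∀ x, Ninf < N x := by
    intro x
    have h1 : N (x+1) < N x := hNanti (by linarith)
    have h2 : Ninf ≤ N (x+1) := by
      refine le_of_tendsto hNlim' ?_
      filter_upwards [eventually_ge_atTop (x+1)] with y hy
      exact hNanti.antitone hy
    linarith
  have hPlt1 : ∀ x, P x < 1 := by
    intro x
    have h1 : P x < P (x+1) := hPmono (by linarith)
    have h2 : P (x+1) ≤ 1 := by
      refine ge_of_tendsto hPlim' ?_
      filter_upwards [eventually_ge_atTop (x+1)] with y hy
      exact hPmono.monotone hy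
    linarith
  have hPpos : ∀ x, 0 < P x := by
    intro x
    have h1 : P (x-1) < P x := hPmono (by linarith)
    exact lt_of_le_of_lt (hPnn (x-1)) h1
  have hPderiv0 : ∀ x, 0 ≤ deriv P x := fun x =>
    aux_deriv_nonneg hPmono.monotone (hPd x).hasDerivAt
  -- the weight k(x) = N^4 (r(1-N)+1) and its bounds
  set m : ℝ := Ninf^4 * (r*(1-Ninf)+1) with hmdef
  clear_value m
  have hm0 : 0 ≤ m := by
    rw [hmdef]
    have h1 : 0 < s/(1-s) := by positivity
    have h2 : 0 ≤ r*(1-Ninf)+1 := by rw [hgNinf]; linarith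
    exact mul_nonneg (by positivity) h2
  have hNmem : ∀ x, N x ∈ Icc (0:ℝ) 1 := fun x => ⟨(hNpos x).le, (hNlt1 x).le⟩
  have hNinfmem : Ninf ∈ Icc (0:ℝ) 1 := ⟨hNinfpos.le, hNinflt1.le⟩
  have h1mem : (1:ℝ) ∈ Icc (0:ℝ) 1 := ⟨zero_le_one, le_refl 1⟩
  have hk_le1 : ∀ x, (N x)^4 * (r*(1-N x)+1) ≤ 1 := by
    intro x
    have h1 := aux_hmono hr0 hr4 (hNmem x) h1mem (hNlt1 x)
    simp only at h1
    nlinarith [h1]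
  have hk_gem : ∀ x, m ≤ (N x)^4 * (r*(1-N x)+1) := by
    intro x
    have h1 := aux_hmono hr0 hr4 hNinfmem (hNmem x) (hNgt x)
    simp only at h1
    rw [hmdef]; linarith
  have hk_ge0 : ∀ x, 0 ≤ (N x)^4 * (r*(1-N x)+1) := by
    intro x
    have h1 := hNlt1 x; have h2 := hNpos x
    have h3 : 0 ≤ r*(1-N x)+1 := by nlinarith
    positivity
  -- sign facts for gdf
  have hgdf_nonpos : ∀ p : ℝ, 0 ≤ p → p ≤ θ → gdf s p ≤ 0 := by
    intro p hp0 hpθ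
    unfold gdf
    have h1 : s*p ≤ 2*s-1 := by
      have := mul_le_mul_of_nonneg_left hpθ hs2.le
      linarith [hθs]
    have h2 : p ≤ 1 := by linarith
    have hprod : 0 ≤ p*(1-p)*((2*s-1) - s*p) :=
      mul_nonneg (mul_nonneg hp0 (by linarith)) (by linarith)
    linarith [hprod]
  have hgdf_nonneg : ∀ p : ℝ, θ ≤ p → p ≤ 1 → 0 ≤ gdf s p := by
    intro p hpθ hp1
    unfold gdf
    have h1 : 2*s-1 ≤ s*p := by
      have := mul_le_mul_of_nonneg_left hpθ hs2.le
      linarith [hθs]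
    have h0 : 0 ≤ p := le_trans hθ0 hpθ
    have hprod : 0 ≤ p*(1-p)*(s*p - (2*s-1)) :=
      mul_nonneg (mul_nonneg h0 (by linarith)) (by linarith)
    linarith [hprod]
  have hgdf_pos : ∀ p : ℝ, θ < p → p < 1 → 0 < gdf s p := by
    intro p hpθ hp1
    unfold gdf
    have h1 : 2*s-1 < s*p := by
      have := mul_lt_mul_of_pos_left hpθ hs2
      linarith [hθs]
    have h0 : 0 < p := lt_of_le_of_lt hθ0 hpθ
    exact mul_pos (mul_pos h0 (by linarith)) (by linarith)
  -- J and the energy identity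
  set J : ℝ → ℝ := fun x => (N x)^4 * (r*(1-N x)+1) * gdf s (P x) * deriv P x with hJdef
  clear_value J
  have hgdfPc : Continuous (fun x => gdf s (P x)) := (gdf_cont s).comp hPc
  have hJc : Continuous J := by
    rw [hJdef]; fun_prop
  have hw : ∀ x, HasDerivAt (fun y => (N y)^2 * deriv P y)
      (-c * ((N x)^2 * deriv P x) - (N x)^2 * ((r*(1-N x)+1) * gdf s (P x))) x := by
    intro x
    have h1 : HasDerivAt (fun y => (N y)^2 * deriv P y)
        ((2 * N x ^ 1 * deriv N x) * deriv P x + (N x)^2 * deriv (deriv P) x) x :=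
      (((hNd x).hasDerivAt.pow 2)).mul (hPd2 x).hasDerivAt
    convert h1 using 1
    have e := heqP x
    have hNx : N x ≠ 0 := (hNpos x).ne'
    have e2 : deriv (deriv P) x = -c * deriv P x - 2 * (deriv N x / N x) * deriv P x
        - (r * (1 - N x) + 1) * P x * (1 - P x) * (s * P x - (2 * s - 1)) := by linarith
    unfold gdf
    rw [e2, div_eq_mul_inv]
    linear_combination ((2:ℝ) * N x * deriv N x * deriv P x) * (mul_inv_cancel₀ hNx)
  have hE : ∀ x, HasDerivAt (fun y => ((N y)^2 * deriv P y)^2)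
      (-2*c*((N x)^2*deriv P x)^2 - 2 * J x) x := by
    intro x
    have h1 := (hw x).pow 2
    refine h1.congr_deriv ?_
    rw [hJdef]
    push_cast
    ring
  have hEintc : Continuous (fun x => -2*c*((N x)^2*deriv P x)^2 - 2 * J x) := by
    have := hJc; fun_prop
  -- upper bound on ∫ J over [a,b], using c ≥ 0
  have hUpper : ∀ a b : ℝ, a ≤ b → (∫ x in a..b, J x) ≤ (deriv P a)^2 / 2 := by
    intro a b hab
    have hFTC : (∫ x in a..b, (-2*c*((N x)^2*deriv P x)^2 - 2 * J x))
        = ((N b)^2 * deriv P b)^2 - ((N a)^2 * deriv P a)^2 :=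
      integral_eq_sub_of_hasDerivAt (fun x _ => hE x) (hEintc.intervalIntegrable a b)
    have hc1 : Continuous fun x => -2*c*((N x)^2*deriv P x)^2 := by fun_prop
    have hsplit : (∫ x in a..b, (-2*c*((N x)^2*deriv P x)^2 - 2 * J x))
        = (∫ x in a..b, -2*c*((N x)^2*deriv P x)^2) - 2 * (∫ x in a..b, J x) := by
      rw [intervalIntegral.integral_sub (g := fun x => 2 * J x) (hc1.intervalIntegrable a b)
        ((continuous_const.mul hJc).intervalIntegrable a b)]
      congr 1
      exact intervalIntegral.integral_const_mul 2 J
    have hneg : (∫ x in a..b, -2*c*((N x)^2*deriv P x)^2) ≤ 0 := by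
      have h0 : (∫ x in a..b, -2*c*((N x)^2*deriv P x)^2)
          = -(∫ x in a..b, 2*c*((N x)^2*deriv P x)^2) := by
        rw [← intervalIntegral.integral_neg]
        congr 1
        funext x
        ring
      rw [h0, neg_nonpos]
      apply intervalIntegral.integral_nonneg hab
      intro u _
      positivity
    have hEa : ((N a)^2 * deriv P a)^2 ≤ (deriv P a)^2 := by
      have h1 : (N a)^2 ≤ 1 := by nlinarith [hNlt1 a, (hNpos a).le]
      have h2 : (0:ℝ) ≤ (N a)^2 := sq_nonneg _
      have h3 : (0:ℝ) ≤ (deriv P a)^2 := sq_nonneg _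
      have h4 : ((N a)^2)^2 ≤ 1 := by nlinarith
      calc ((N a)^2 * deriv P a)^2 = ((N a)^2)^2 * (deriv P a)^2 := by ring
        _ ≤ 1 * (deriv P a)^2 := mul_le_mul_of_nonneg_right h4 h3
        _ = (deriv P a)^2 := by ring
    have hEb : (0:ℝ) ≤ ((N b)^2 * deriv P b)^2 := sq_nonneg _
    linarith [hFTC, hsplit, hneg, hEa, hEb]
  -- lower bound building block
  have hPiece : ∀ u v κ : ℝ, u ≤ v → (∀ x, x ∈ Icc u v → κ * (gdf s (P x) * deriv P x) ≤ J x) →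
      κ * (gdF s (P v) - gdF s (P u)) ≤ ∫ x in u..v, J x := by
    intro u v κ huv hpt
    have hcont : Continuous (fun x => κ * (gdf s (P x) * deriv P x)) := by fun_prop
    have hcont2 : Continuous (fun x => gdf s (P x) * deriv P x) := by fun_prop
    have h1 : (∫ x in u..v, κ * (gdf s (P x) * deriv P x)) = κ * (gdF s (P v) - gdF s (P u)) := by
      rw [intervalIntegral.integral_const_mul]
      congr 1
      have h2 : ∀ x ∈ uIcc u v, HasDerivAt (fun y => gdF s (P y)) (gdf s (P x) * deriv P x) x := by
        intro x _
        exact HasDerivAt.comp x (gdf_deriv s (P x)) (hPd x).hasDerivAt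
      exact integral_eq_sub_of_hasDerivAt h2 (hcont2.intervalIntegrable u v)
    rw [← h1]
    exact intervalIntegral.integral_mono_on huv (hcont.intervalIntegrable u v)
      (hJc.intervalIntegrable u v) hpt
  -- pointwise comparisons
  have hpt_neg : ∀ x, P x ≤ θ → 1 * (gdf s (P x) * deriv P x) ≤ J x := by
    intro x hx
    have h1 : gdf s (P x) ≤ 0 := hgdf_nonpos (P x) (hPnn x) hx
    have h2 := hPderiv0 x
    have h3 := hk_le1 x; have h4 := hk_ge0 x
    simp only [hJdef]
    nlinarith [mul_nonneg (mul_nonneg (sub_nonneg.mpr h3) (neg_nonneg.mpr h1)) h2]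
  have hpt_pos : ∀ (k : ℝ) (x : ℝ), 0 ≤ k → k ≤ (N x)^4*(r*(1-N x)+1) → θ ≤ P x →
      k * (gdf s (P x) * deriv P x) ≤ J x := by
    intro k x hk hkle hx
    have h1 : 0 ≤ gdf s (P x) := hgdf_nonneg (P x) hx (hPlt1 x).le
    have h2 := hPderiv0 x
    simp only [hJdef]
    nlinarith [mul_nonneg (mul_nonneg (sub_nonneg.mpr hkle) h1) h2]
  -- key algebraic inequality from hineq
  have hden : (0:ℝ) < 2 - 3*s + θ^3 := by
    have h1 : 2*s-1 ≤ θ := by rw [hθdef, le_div_iff₀ hs2]; nlinarith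
    have h2 : (2*s-1)^3 ≤ θ^3 := by
      apply pow_le_pow_left₀ (by linarith) h1
    nlinarith [h2, mul_nonneg (sub_nonneg.mpr hs) (sub_nonneg.mpr hs0),
      mul_nonneg (mul_nonneg (sub_nonneg.mpr hs) (sub_nonneg.mpr hs)) (sub_nonneg.mpr hs),
      mul_nonneg (mul_nonneg (sub_nonneg.mpr hs) (sub_nonneg.mpr hs)) (sub_nonneg.mpr hs0)]
  have hbase0 : (0:ℝ) ≤ (1-s)*θ^3/(2-3*s+θ^3) :=
    div_nonneg (mul_nonneg hs1.le (pow_nonneg hθ0 3)) hden.le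
  have hA4 : (1-s)*θ^3/(2-3*s+θ^3) ≤ Ninf^4 := by
    set A : ℝ := ((1-s)*θ^3/(2-3*s+θ^3)) ^ ((1:ℝ)/4) with hAdef
    have hAnn : 0 ≤ A := Real.rpow_nonneg hbase0 _
    have hALE : A ≤ Ninf := by
      have h1 : r * A ≤ r - s/(1-s) := by nlinarith [hineq]
      have h2 : A ≤ (r - s/(1-s))/r := by
        rw [le_div_iff₀ hr0]
        nlinarith [h1]
      have h3 : (1/r)*(r - s/(1-s)) = (r - s/(1-s))/r := by ring
      rw [hNinfdef, h3]
      exact h2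
    have hA4eq : A ^ (4:ℕ) = (1-s)*θ^3/(2-3*s+θ^3) := by
      rw [hAdef, ← Real.rpow_natCast (((1-s)*θ^3/(2-3*s+θ^3)) ^ ((1:ℝ)/4)) 4,
        ← Real.rpow_mul hbase0]
      norm_num
    calc (1-s)*θ^3/(2-3*s+θ^3) = A ^ (4:ℕ) := hA4eq.symm
      _ ≤ Ninf ^ (4:ℕ) := pow_le_pow_left₀ hAnn hALE 4
  have hA4' : (1-s)*θ^3 ≤ Ninf^4 * (2-3*s+θ^3) := by
    rw [div_le_iff₀ hden] at hA4
    linarith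
  have hgdFθ : gdF s θ = -(θ^3)/12 := by
    unfold gdF
    rw [hθdef]
    field_simp
    ring
  have hgdF1 : gdF s 1 = (2-3*s)/12 := by unfold gdF; ring
  have hkey : 0 ≤ gdF s θ + m * (gdF s 1 - gdF s θ) := by
    rw [hgdFθ, hgdF1, hmdef, hgNinf]
    have heq : -(θ^3)/12 + Ninf^4*(s/(1-s)+1) * ((2-3*s)/12 - -(θ^3)/12)
        = (Ninf^4*(2-3*s+θ^3) - (1-s)*θ^3) / (12*(1-s)) := by
      field_simp
      ring
    rw [heq]
    apply div_nonneg (by linarith) (by linarith)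
  -- selection of left points with small derivative
  have hsel : ∀ z η η' : ℝ, 0 < η → 0 < η' → ∃ a, a < z ∧ P a < η' ∧ deriv P a < η := by
    intro z η η' hη hη'
    have hev : ∀ᶠ y in atBot, P y < min η η' := hPlim.eventually_lt_const (lt_min hη hη')
    obtain ⟨y, hy1, hy2⟩ := (hev.and (eventually_le_atBot z)).exists
    obtain ⟨a, ha, hda⟩ := exists_hasDerivAt_eq_slope P (deriv P) (by linarith : y - 1 < y)
      hPc.continuousOn (fun x _ => (hPd x).hasDerivAt)
    refine ⟨a, by linarith [ha.2], ?_, ?_⟩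
    · have := hPmono ha.2
      exact lt_of_lt_of_le this (le_of_lt (lt_of_lt_of_le hy1 (min_le_right _ _)))
    · rw [hda]
      have h1 : P y - P (y-1) ≤ P y := by linarith [hPnn (y-1)]
      have h2 : y - (y-1) = 1 := by ring
      rw [h2]
      have := lt_of_lt_of_le hy1 (min_le_left _ _)
      simp only [div_one]
      linarith
  -- selection of right point
  have hbsel : ∀ v' η : ℝ, 0 < η → ∃ b, v' ≤ b ∧ gdF s 1 - η < gdF s (P b) := by
    intro v' η hη
    have h1 : Tendsto (fun y => gdF s (P y)) atTop (nhds (gdF s 1)) :=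
      ((gdF_cont s).tendsto 1).comp hPlim'
    have h2 : ∀ᶠ y in atTop, gdF s 1 - η < gdF s (P y) :=
      h1.eventually_const_lt (by linarith)
    obtain ⟨b, hb1, hb2⟩ := (h2.and (eventually_ge_atTop v')).exists
    exact ⟨b, hb2, hb1⟩
  
  -- gdF is nonpositive on [0, θ]
  have hgdF_nonpos : ∀ p : ℝ, 0 ≤ p → p ≤ θ → gdF s p ≤ 0 := by
    intro p hp0 hpθ
    have h1 : s*p ≤ 2*s-1 := by
      have := mul_le_mul_of_nonneg_left hpθ hs2.le
      linarith [hθs]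
    have hp12 : p ≤ 1/2 := le_trans hpθ hθh
    have key : 0 ≤ 4*((2*s-1) - s*p) + 2*(2*s-1)*(1-2*p) + 3*s*p^2 := by
      have k1 : 0 ≤ (2*s-1) - s*p := by linarith
      have k2 : 0 ≤ (2*s-1)*(1-2*p) := mul_nonneg (by linarith) (by linarith)
      have k3 : 0 ≤ s*p^2 := mul_nonneg hs2.le (sq_nonneg p)
      linarith
    unfold gdF
    nlinarith [mul_nonneg (sq_nonneg p) key]
  -- case split on θ
  rcases eq_or_lt_of_le hθ0 with hθz | hθpos
  · -- θ = 0, i.e. s = 1/2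
    have hshalf : s = 1/2 := by
      have := hθs; rw [← hθz] at this; linarith
    have hPu0 : θ < P 0 := by rw [← hθz]; exact hPpos 0
    have hP01 : P 0 < P 1 := hPmono one_pos
    set kv : ℝ := (N 1)^4*(r*(1-N 1)+1) with hkv
    clear_value kv
    have hεpos : m < kv := by
      have h1 := aux_hmono hr0 hr4 hNinfmem (hNmem 1) (hNgt 1)
      simp only at h1
      rw [hmdef, hkv]; exact h1
    have hδ : 0 < gdF s (P 1) - gdF s (P 0) := by
      have hFTCf : gdF s (P 1) - gdF s (P 0) = ∫ p in (P 0)..(P 1), gdf s p :=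
        (integral_eq_sub_of_hasDerivAt (fun p _ => gdf_deriv s p)
          ((gdf_cont s).intervalIntegrable _ _)).symm
      rw [hFTCf]
      apply intervalIntegral.intervalIntegral_pos_of_pos_on
        ((gdf_cont s).intervalIntegrable _ _) _ hP01
      intro p hp
      exact hgdf_pos p (lt_trans hPu0 hp.1) (lt_trans hp.2 (hPlt1 1))
    set κ : ℝ := (kv - m) * (gdF s (P 1) - gdF s (P 0)) with hκdef
    clear_value κ
    have hκpos : 0 < κ := by rw [hκdef]; exact mul_pos (by linarith) hδ
    have hm1 : (0:ℝ) < m + 1 := by linarith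
    obtain ⟨b, hvb, hbF⟩ := hbsel 1 (κ/(2*(m+1))) (by positivity)
    obtain ⟨a, ha0, haP, hada⟩ := hsel 0 (min 1 (κ/4)) (κ/(4*(m+1))) (by positivity) (by positivity)
    have hub := hUpper a b (by linarith)
    have hd2 : (deriv P a)^2/2 < κ/8 := by
      have h0 := hPderiv0 a
      have h1 : deriv P a < 1 := lt_of_lt_of_le hada (min_le_left _ _)
      have h2 : deriv P a < κ/4 := lt_of_lt_of_le hada (min_le_right _ _)
      have h3 : deriv P a * deriv P a ≤ deriv P a * 1 := mul_le_mul_of_nonneg_left h1.le h0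
      linarith [h3]
    have hI2 : m * (gdF s (P 0) - gdF s (P a)) ≤ ∫ x in a..(0:ℝ), J x := by
      apply hPiece a 0 m ha0.le
      intro x hx
      exact hpt_pos m x hm0 (hk_gem x) (by rw [← hθz]; exact (hPnn x))
    have hI3 : kv * (gdF s (P 1) - gdF s (P 0)) ≤ ∫ x in (0:ℝ)..1, J x := by
      apply hPiece _ _ _ (by norm_num)
      intro x hx
      apply hpt_pos kv x (by rw [hkv]; exact hk_ge0 1) ?_ (by rw [← hθz]; exact (hPnn x))
      have h1 := (aux_hmono hr0 hr4).monotoneOn (hNmem 1) (hNmem x) (hNanti.antitone hx.2)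
      rw [hkv]; exact h1
    have hI4 : m * (gdF s (P b) - gdF s (P 1)) ≤ ∫ x in (1:ℝ)..b, J x := by
      apply hPiece _ _ _ hvb
      intro x hx
      exact hpt_pos m x hm0 (hk_gem x) (by rw [← hθz]; exact (hPnn x))
    have hsp1 : (∫ x in a..(0:ℝ), J x) + (∫ x in (0:ℝ)..(1:ℝ), J x) = ∫ x in a..(1:ℝ), J x :=
      intervalIntegral.integral_add_adjacent_intervals
        (hJc.intervalIntegrable a 0) (hJc.intervalIntegrable 0 1)
    have hsp2 : (∫ x in a..(1:ℝ), J x) + (∫ x in (1:ℝ)..b, J x) = ∫ x in a..b, J x :=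
      intervalIntegral.integral_add_adjacent_intervals
        (hJc.intervalIntegrable a 1) (hJc.intervalIntegrable 1 b)
    have hmb : -(κ/2) ≤ m * (gdF s (P b) - gdF s 1) := by
      have h1 : -(κ/(2*(m+1))) ≤ gdF s (P b) - gdF s 1 := by linarith
      have h2 : m * (κ/(2*(m+1))) ≤ (m+1) * (κ/(2*(m+1))) :=
        mul_le_mul_of_nonneg_right (by linarith) (by positivity)
      have hη : (m+1) * (κ/(2*(m+1))) = κ/2 := by field_simp
      linarith [mul_le_mul_of_nonneg_left h1 hm0, h2, hη]
    have hF1nn : 0 ≤ gdF s 1 := by rw [hgdF1]; linarith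
    have hmF1 : 0 ≤ m * gdF s 1 := mul_nonneg hm0 hF1nn
    have hgPa : gdF s (P a) ≤ P a := by
      rw [hshalf]
      exact gdF_half_le _ (hPnn a) (hPlt1 a).le
    have hma : m * gdF s (P a) ≤ κ/4 := by
      have h1 : m * gdF s (P a) ≤ m * P a := mul_le_mul_of_nonneg_left hgPa hm0
      have h2 : m * P a ≤ m * (κ/(4*(m+1))) :=
        mul_le_mul_of_nonneg_left haP.le hm0
      have h3 : m * (κ/(4*(m+1))) ≤ (m+1) * (κ/(4*(m+1))) :=
        mul_le_mul_of_nonneg_right (by linarith) (by positivity)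
      have hη : (m+1) * (κ/(4*(m+1))) = κ/4 := by field_simp
      linarith
    have e1 : m * (gdF s (P 0) - gdF s (P a)) + kv * (gdF s (P 1) - gdF s (P 0))
        + m * (gdF s (P b) - gdF s (P 1))
        = m * (gdF s (P b) - gdF s 1) + m * gdF s 1 - m * gdF s (P a) + κ := by
      rw [hκdef]; ring
    linarith [hub, hd2, hI2, hI3, hI4, hsp1, hsp2, hmb, hmF1, hma, e1, hκpos]
  · -- θ > 0
    obtain ⟨a₀, ha₀⟩ := (hPlim.eventually_lt_const hθpos).exists
    have hθ1 : θ < 1 := lt_of_le_of_lt hθh (by norm_num)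
    obtain ⟨b₀, hb₀⟩ := (hPlim'.eventually_const_lt hθ1).exists
    have ha₁b : min a₀ b₀ ≤ b₀ := min_le_right _ _
    have ha₁ : P (min a₀ b₀) < θ :=
      lt_of_le_of_lt (hPmono.monotone (min_le_left _ _)) ha₀
    obtain ⟨xs, hxsmem, hPxs⟩ := intermediate_value_Icc ha₁b hPc.continuousOn
      (⟨ha₁.le, hb₀.le⟩ : θ ∈ Icc (P (min a₀ b₀)) (P b₀))
    have hPu : θ < P (xs+1) := by rw [← hPxs]; exact hPmono (by linarith)
    have hPuv : P (xs+1) < P (xs+2) := hPmono (by linarith)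
    set kv : ℝ := (N (xs+2))^4*(r*(1-N (xs+2))+1) with hkv
    clear_value kv
    have hεpos : m < kv := by
      have h1 := aux_hmono hr0 hr4 hNinfmem (hNmem (xs+2)) (hNgt (xs+2))
      simp only at h1
      rw [hmdef, hkv]; exact h1
    have hδ : 0 < gdF s (P (xs+2)) - gdF s (P (xs+1)) := by
      have hFTCf : gdF s (P (xs+2)) - gdF s (P (xs+1))
          = ∫ p in (P (xs+1))..(P (xs+2)), gdf s p :=
        (integral_eq_sub_of_hasDerivAt (fun p _ => gdf_deriv s p)
          ((gdf_cont s).intervalIntegrable _ _)).symm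
      rw [hFTCf]
      apply intervalIntegral.intervalIntegral_pos_of_pos_on
        ((gdf_cont s).intervalIntegrable _ _) _ hPuv
      intro p hp
      exact hgdf_pos p (lt_trans hPu hp.1) (lt_trans hp.2 (hPlt1 (xs+2)))
    set κ : ℝ := (kv - m) * (gdF s (P (xs+2)) - gdF s (P (xs+1))) with hκdef
    clear_value κ
    have hκpos : 0 < κ := by rw [hκdef]; exact mul_pos (by linarith) hδ
    have hm1 : (0:ℝ) < m + 1 := by linarith
    obtain ⟨b, hvb, hbF⟩ := hbsel (xs+2) (κ/(2*(m+1))) (by positivity)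
    obtain ⟨a, haxs, haP, hada⟩ := hsel xs (min 1 (κ/4)) 1 (by positivity) one_pos
    have hub := hUpper a b (by linarith)
    have hd2 : (deriv P a)^2/2 < κ/8 := by
      have h0 := hPderiv0 a
      have h1 : deriv P a < 1 := lt_of_lt_of_le hada (min_le_left _ _)
      have h2 : deriv P a < κ/4 := lt_of_lt_of_le hada (min_le_right _ _)
      have h3 : deriv P a * deriv P a ≤ deriv P a * 1 := mul_le_mul_of_nonneg_left h1.le h0
      linarith [h3]
    have hI1 : 1 * (gdF s (P xs) - gdF s (P a)) ≤ ∫ x in a..xs, J x := by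
      apply hPiece a xs 1 haxs.le
      intro x hx
      exact hpt_neg x (by rw [← hPxs]; exact hPmono.monotone hx.2)
    have hI2 : m * (gdF s (P (xs+1)) - gdF s (P xs)) ≤ ∫ x in xs..(xs+1), J x := by
      apply hPiece _ _ _ (by linarith)
      intro x hx
      exact hpt_pos m x hm0 (hk_gem x) (by rw [← hPxs]; exact hPmono.monotone hx.1)
    have hI3 : kv * (gdF s (P (xs+2)) - gdF s (P (xs+1))) ≤ ∫ x in (xs+1)..(xs+2), J x := by
      apply hPiece _ _ _ (by linarith)
      intro x hx
      apply hpt_pos kv x (by rw [hkv]; exact hk_ge0 (xs+2)) ?_ ?_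
      · have h1 := (aux_hmono hr0 hr4).monotoneOn (hNmem (xs+2)) (hNmem x) (hNanti.antitone hx.2)
        rw [hkv]; exact h1
      · exact le_trans hPu.le (hPmono.monotone hx.1)
    have hI4 : m * (gdF s (P b) - gdF s (P (xs+2))) ≤ ∫ x in (xs+2)..b, J x := by
      apply hPiece _ _ _ hvb
      intro x hx
      refine hpt_pos m x hm0 (hk_gem x) ?_
      rw [← hPxs]
      exact hPmono.monotone (by linarith [hx.1])
    have hsp1 : (∫ x in a..xs, J x) + (∫ x in xs..(xs+1), J x) = ∫ x in a..(xs+1), J x :=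
      intervalIntegral.integral_add_adjacent_intervals
        (hJc.intervalIntegrable a xs) (hJc.intervalIntegrable xs (xs+1))
    have hsp2 : (∫ x in a..(xs+1), J x) + (∫ x in (xs+1)..(xs+2), J x) = ∫ x in a..(xs+2), J x :=
      intervalIntegral.integral_add_adjacent_intervals
        (hJc.intervalIntegrable a (xs+1)) (hJc.intervalIntegrable (xs+1) (xs+2))
    have hsp3 : (∫ x in a..(xs+2), J x) + (∫ x in (xs+2)..b, J x) = ∫ x in a..b, J x :=
      intervalIntegral.integral_add_adjacent_intervals
        (hJc.intervalIntegrable a (xs+2)) (hJc.intervalIntegrable (xs+2) b)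
    have hFa : gdF s (P a) ≤ 0 := by
      apply hgdF_nonpos (P a) (hPnn a)
      rw [← hPxs]
      exact (hPmono haxs).le
    have hmb : -(κ/2) ≤ m * (gdF s (P b) - gdF s 1) := by
      have h1 : -(κ/(2*(m+1))) ≤ gdF s (P b) - gdF s 1 := by linarith
      have h2 : m * (κ/(2*(m+1))) ≤ (m+1) * (κ/(2*(m+1))) :=
        mul_le_mul_of_nonneg_right (by linarith) (by positivity)
      have hη : (m+1) * (κ/(2*(m+1))) = κ/2 := by field_simp
      linarith [mul_le_mul_of_nonneg_left h1 hm0, h2, hη]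
    have hgxs : gdF s (P xs) = gdF s θ := by rw [hPxs]
    have e1 : m * (gdF s (P (xs+1)) - gdF s θ) + kv * (gdF s (P (xs+2)) - gdF s (P (xs+1)))
        + m * (gdF s (P b) - gdF s (P (xs+2)))
        = m * (gdF s 1 - gdF s θ) + m * (gdF s (P b) - gdF s 1) + κ := by
      rw [hκdef]; ring
    rw [hgxs] at hI1 hI2
    linarith [hub, hd2, hI1, hI2, hI3, hI4, hsp1, hsp2, hsp3, hFa, hmb, e1, hκpos, hkey]
end

section
/- Let s ∈ (1/2, 1), r > 0, c ∈ ℝ, and let (P, N) be a traveling wave of the gene-drive frequency system with speed c such that P(x) → (2s-1)/s as x → +∞. Then the wave is nontrivial and necessarily c > 0. -/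
/-- For `s ∈ (1/2, 1)`, a traveling wave of the gene-drive frequency
system with `P(x) → (2s-1)/s` as `x → +∞` is nontrivial and has speed `c > 0`. -/
theorem stmt9
    (s r c : ℝ) (hs0 : 1 / 2 < s) (hs1 : s < 1) (hr : 0 < r)
    (P N : ℝ → ℝ)
    (hP2 : ContDiff ℝ 2 P) (hN2 : ContDiff ℝ 2 N)
    (hNpos : ∀ x, 0 < N x)
    (hPbd : Bornology.IsBounded (Set.range P))
    (hNbd : Bornology.IsBounded (Set.range N))
    (hPnn : ∀ x, 0 ≤ P x)
    (hPmono : Monotone P) (hNanti : StrictAnti N)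
    (hPlim : Filter.Tendsto P Filter.atBot (nhds 0))
    (hNlim : Filter.Tendsto N Filter.atBot (nhds 1))
    (hPlim' : Filter.Tendsto P Filter.atTop (nhds ((2 * s - 1) / s)))
    (heqP : ∀ x, -deriv (deriv P) x - c * deriv P x - 2 * (deriv N x / N x) * deriv P x
      = (r * (1 - N x) + 1) * P x * (1 - P x) * (s * P x - (2 * s - 1)))
    (heqN : ∀ x, -deriv (deriv N) x - c * deriv N x
      = N x * ((1 - s + s * (1 - P x) ^ 2) * (r * (1 - N x) + 1) - 1)) :
    (∃ x, P x ≠ 0) ∧ 0 < c := by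
  have hspos : (0:ℝ) < s := by linarith
  have hθpos : 0 < (2 * s - 1) / s := div_pos (by linarith) hspos
  -- P is differentiable, deriv P is differentiable
  have hPdiff : Differentiable ℝ P := hP2.differentiable (by norm_num)
  have hNdiff : Differentiable ℝ N := hN2.differentiable (by norm_num)
  have hP2' : ContDiff ℝ (1 + 1) P := by norm_num; exact hP2
  have hP'diff : Differentiable ℝ (deriv P) :=
    ((contDiff_succ_iff_deriv.mp hP2').2.2).differentiable (by norm_num)
  -- nontriviality
  have hnt : ∃ x, P x ≠ 0 := by
    by_contra h
    push_neg at h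
    have h0 : Filter.Tendsto P Filter.atTop (nhds 0) := by
      have : P = fun _ => (0:ℝ) := funext h
      rw [this]; exact tendsto_const_nhds
    have := tendsto_nhds_unique h0 hPlim'
    linarith
  refine ⟨hnt, ?_⟩
  by_contra hc
  push_neg at hc
  -- P ≤ θ everywhere
  have hPle : ∀ x, P x ≤ (2 * s - 1) / s := fun x => hPmono.ge_of_tendsto hPlim' x
  have hPlt1 : ∀ x, P x < 1 := by
    intro x
    have := hPle x
    have : (2 * s - 1) / s < 1 := by rw [div_lt_one hspos]; linarith
    linarith [hPle x]
  -- N < 1 everywhere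
  have hNlt1 : ∀ x, N x < 1 := by
    intro x
    have h1 : N x < N (x - 1) := hNanti (by linarith)
    have h2 : N (x - 1) ≤ 1 := hNanti.antitone.ge_of_tendsto hNlim (x - 1)
    linarith
  -- deriv P ≥ 0
  have hP'nn : ∀ x, 0 ≤ deriv P x := by
    intro x
    have h := (hPdiff x).hasDerivAt
    rw [hasDerivAt_iff_tendsto_slope] at h
    refine ge_of_tendsto h ?_
    filter_upwards [self_mem_nhdsWithin] with y hy
    have hyx : y ≠ x := hy
    rcases lt_or_gt_of_ne hyx with h1 | h1
    · rw [slope_comm, slope_def_field]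
      exact div_nonneg (by linarith [hPmono h1.le]) (by linarith)
    · rw [slope_def_field]
      exact div_nonneg (by linarith [hPmono h1.le]) (by linarith)
  -- the reaction term is nonpositive
  have hFnp : ∀ x, (r * (1 - N x) + 1) * P x * (1 - P x) * (s * P x - (2 * s - 1)) ≤ 0 := by
    intro x
    have h1 : 0 < r * (1 - N x) + 1 := by nlinarith [hNlt1 x]
    have h2 : 0 ≤ P x := hPnn x
    have h3 : 0 ≤ 1 - P x := by linarith [hPlt1 x]
    have h4 : s * P x - (2 * s - 1) ≤ 0 := by
      have := hPle x
      rw [le_div_iff₀ hspos] at this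
      nlinarith
    have h5 : 0 ≤ (r * (1 - N x) + 1) * P x * (1 - P x) := by positivity
    exact mul_nonpos_of_nonneg_of_nonpos h5 h4
  -- g = N^2 * P' has nonnegative derivative when c ≤ 0
  set g : ℝ → ℝ := fun x => N x ^ 2 * deriv P x with hg
  have hgderiv : ∀ x, HasDerivAt g
      (2 * N x ^ 1 * deriv N x * deriv P x + N x ^ 2 * deriv (deriv P) x) x := by
    intro x
    exact ((hNdiff x).hasDerivAt.pow 2).mul (hP'diff x).hasDerivAt
  have hgdiff : Differentiable ℝ g := fun x => (hgderiv x).differentiableAt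
  have hgd_eq : ∀ x, deriv g x
      = N x ^ 2 * (-(c * deriv P x)
        - (r * (1 - N x) + 1) * P x * (1 - P x) * (s * P x - (2 * s - 1))) := by
    intro x
    rw [(hgderiv x).deriv]
    have hN0 : N x ≠ 0 := (hNpos x).ne'
    have hP'' : deriv (deriv P) x = -(c * deriv P x) - 2 * (deriv N x / N x) * deriv P x
        - (r * (1 - N x) + 1) * P x * (1 - P x) * (s * P x - (2 * s - 1)) := by
      have := heqP x; linarith
    rw [hP'']
    field_simp
    ring
  have hgd_nn : ∀ x, 0 ≤ deriv g x := by
    intro x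
    rw [hgd_eq x]
    have h1 : 0 ≤ -(c * deriv P x) := by nlinarith [hP'nn x]
    have h2 := hFnp x
    exact mul_nonneg (sq_nonneg _) (by linarith)
  have hgmono : Monotone g := monotone_of_deriv_nonneg hgdiff hgd_nn
  have hgnn : ∀ x, 0 ≤ g x := fun x => mul_nonneg (sq_nonneg _) (hP'nn x)
  -- g must vanish identically
  have hgzero : ∀ x, g x = 0 := by
    by_contra h
    push_neg at h
    obtain ⟨x₀, hx₀⟩ := h
    have hx₀pos : 0 < g x₀ := lt_of_le_of_ne (hgnn x₀) (Ne.symm hx₀)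
    set δ : ℝ := g x₀ / N x₀ ^ 2 with hδ
    have hδpos : 0 < δ := div_pos hx₀pos (pow_pos (hNpos x₀) 2)
    -- for x ≥ x₀, deriv P x ≥ δ
    have hP'ge : ∀ x, x₀ ≤ x → δ ≤ deriv P x := by
      intro x hx
      have h1 : g x₀ ≤ g x := hgmono hx
      have h2 : N x ≤ N x₀ := hNanti.antitone hx
      have h3 : 0 < N x := hNpos x
      have h4 : N x ^ 2 ≤ N x₀ ^ 2 := by nlinarith
      have h5 : g x₀ ≤ N x ^ 2 * deriv P x := h1
      rw [hδ, div_le_iff₀ (pow_pos (hNpos x₀) 2)]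
      calc g x₀ ≤ N x ^ 2 * deriv P x := h5
        _ ≤ N x₀ ^ 2 * deriv P x := by nlinarith [hP'nn x]
        _ = deriv P x * N x₀ ^ 2 := by ring
    -- hence P grows linearly, contradicting P ≤ θ
    set y : ℝ := x₀ + ((2 * s - 1) / s + 1) / δ with hy
    have hx₀y : x₀ ≤ y := by
      have h : 0 < ((2 * s - 1) / s + 1) / δ := div_pos (by linarith) hδpos
      rw [hy]; linarith
    have key : δ * (y - x₀) ≤ P y - P x₀ := by
      have := Convex.mul_sub_le_image_sub_of_le_deriv (convex_Ici x₀)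
        (hPdiff.continuous.continuousOn) (hPdiff.differentiableOn)
        (fun x hx => hP'ge x (le_of_lt (by simpa [interior_Ici] using hx)))
        x₀ (Set.self_mem_Ici) y hx₀y hx₀y
      exact this
    have hyy : δ * (y - x₀) = (2 * s - 1) / s + 1 := by
      rw [hy]; field_simp [hδpos.ne']; ring
    have : (2 * s - 1) / s + 1 ≤ P y - P x₀ := by rw [← hyy]; exact key
    have := hPle y
    have := hPnn x₀
    linarith
  -- so deriv P ≡ 0, P is constant; contradiction with the limits
  have hP'zero : ∀ x, deriv P x = 0 := by
    intro x
    have := hgzero x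
    have hN2pos : 0 < N x ^ 2 := pow_pos (hNpos x) 2
    have : N x ^ 2 * deriv P x = 0 := this
    rcases mul_eq_zero.mp this with h | h
    · exact absurd h hN2pos.ne'
    · exact h
  have hPconst : ∀ x y, P x = P y := is_const_of_deriv_eq_zero hPdiff hP'zero
  have hPc : P = fun _ => P 0 := funext fun x => hPconst x 0
  have h1 : Filter.Tendsto P Filter.atBot (nhds (P 0)) := by
    rw [hPc]; exact tendsto_const_nhds
  have h2 : Filter.Tendsto P Filter.atTop (nhds (P 0)) := by
    rw [hPc]; exact tendsto_const_nhds
  have e1 : P 0 = 0 := tendsto_nhds_unique h1 hPlim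
  have e2 : P 0 = (2 * s - 1) / s := tendsto_nhds_unique h2 hPlim'
  rw [e1] at e2
  linarith
end

section
/- Let s ∈ (2/3, 1), r > 0, c ∈ ℝ, and let (P, N) be a traveling wave of the gene-drive frequency system with speed c such that P(x) → 1 as x → +∞. If r·((2s-1)³ - s³(3s-2)) < s³(3s-2) (equivalently r < s³(3s-2)/((2s-1)³ - s³(3s-2)) when the denominator is positive), then c > 0. -/
open Filter intervalIntegral

set_option maxHeartbeats 4000000

/-- For `s ∈ (2/3, 1)`, a traveling wave of the gene-drive frequency
system with `P(x) → 1` as `x → +∞` and `r ((2s-1)³ - s³(3s-2)) < s³(3s-2)` has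
speed `c > 0`. -/
theorem stmt10
    (s r c : ℝ) (hs0 : 2 / 3 < s) (hs1 : s < 1) (hr : 0 < r)
    (P N : ℝ → ℝ)
    (hP2 : ContDiff ℝ 2 P) (hN2 : ContDiff ℝ 2 N)
    (hNpos : ∀ x, 0 < N x)
    (hPbd : Bornology.IsBounded (Set.range P))
    (hNbd : Bornology.IsBounded (Set.range N))
    (hPnn : ∀ x, 0 ≤ P x)
    (hPmono : Monotone P) (hNanti : StrictAnti N)
    (hPlim : Filter.Tendsto P Filter.atBot (nhds 0))
    (hNlim : Filter.Tendsto N Filter.atBot (nhds 1))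
    (hPlim' : Filter.Tendsto P Filter.atTop (nhds 1))
    (heqP : ∀ x, -deriv (deriv P) x - c * deriv P x - 2 * (deriv N x / N x) * deriv P x
      = (r * (1 - N x) + 1) * P x * (1 - P x) * (s * P x - (2 * s - 1)))
    (heqN : ∀ x, -deriv (deriv N) x - c * deriv N x
      = N x * ((1 - s + s * (1 - P x) ^ 2) * (r * (1 - N x) + 1) - 1))
    (hineq : r * ((2 * s - 1) ^ 3 - s ^ 3 * (3 * s - 2)) < s ^ 3 * (3 * s - 2)) :
    0 < c := by
  by_contra hc
  push_neg at hc
  have hs : (0:ℝ) < s := by linarith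
  -- regularity facts
  have hPdiff : Differentiable ℝ P := hP2.differentiable (by norm_num)
  have hNdiff : Differentiable ℝ N := hN2.differentiable (by norm_num)
  have hP2' : ContDiff ℝ (1 + 1) P := by norm_num; exact hP2
  have hP'cd : ContDiff ℝ 1 (deriv P) := (contDiff_succ_iff_deriv.mp hP2').2.2
  have hP'diff : Differentiable ℝ (deriv P) := hP'cd.differentiable (by norm_num)
  have hPc : Continuous P := hP2.continuous
  have hNc : Continuous N := hN2.continuous
  have hP'c : Continuous (deriv P) := hP'cd.continuous
  have hN'c : Continuous (deriv N) := hN2.continuous_deriv (by norm_num)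
  have hP''c : Continuous (deriv (deriv P)) := hP'cd.continuous_deriv le_rfl
  -- sign facts for derivatives
  have hP'nn : ∀ x, 0 ≤ deriv P x := by
    intro x
    have h := (hPdiff x).hasDerivAt
    rw [hasDerivAt_iff_tendsto_slope] at h
    refine ge_of_tendsto h (Filter.Eventually.of_forall fun y => ?_)
    rw [slope_def_field]
    rcases le_total x y with hxy | hxy
    · exact div_nonneg (sub_nonneg.2 (hPmono hxy)) (sub_nonneg.2 hxy)
    · exact div_nonneg_iff.2 <| Or.inr ⟨sub_nonpos.2 (hPmono hxy), sub_nonpos.2 hxy⟩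
  have hN'np : ∀ x, deriv N x ≤ 0 := by
    intro x
    have h := (hNdiff x).hasDerivAt
    rw [hasDerivAt_iff_tendsto_slope] at h
    refine le_of_tendsto h (Filter.Eventually.of_forall fun y => ?_)
    rw [slope_def_field]
    rcases le_total x y with hxy | hxy
    · exact div_nonpos_iff.2 <| Or.inr ⟨sub_nonpos.2 (hNanti.antitone hxy), sub_nonneg.2 hxy⟩
    · exact div_nonpos_iff.2 <| Or.inl ⟨sub_nonneg.2 (hNanti.antitone hxy), sub_nonpos.2 hxy⟩
  -- bounds
  have hPle1 : ∀ x, P x ≤ 1 := by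
    intro x
    exact ge_of_tendsto hPlim' (eventually_atTop.2 ⟨x, fun y hy => hPmono hy⟩)
  have hNle1 : ∀ x, N x ≤ 1 := by
    intro x
    refine ge_of_tendsto hNlim (eventually_atBot.2 ⟨x - 1, fun y hy => ?_⟩)
    exact (hNanti (by linarith : y < x)).le
  -- threshold point
  obtain ⟨θ, hθdef⟩ : ∃ θ : ℝ, θ = (2 * s - 1) / s := ⟨_, rfl⟩
  have hθ0 : 0 < θ := by rw [hθdef]; exact div_pos (by linarith) hs
  have hθ1 : θ < 1 := by rw [hθdef]; exact (div_lt_one hs).2 (by linarith)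
  obtain ⟨a₁, ha₁⟩ := eventually_atBot.1 (hPlim.eventually_lt_const hθ0)
  obtain ⟨b₁, hb₁⟩ := eventually_atTop.1 (hPlim'.eventually_const_lt hθ1)
  have hab : a₁ ≤ b₁ := by
    by_contra hab
    push_neg at hab
    have := hPmono hab.le
    have h1 := ha₁ a₁ le_rfl
    have h2 := hb₁ b₁ le_rfl
    linarith
  obtain ⟨x0, _, hx0⟩ : ∃ x0 ∈ Set.Icc a₁ b₁, P x0 = θ := by
    have := intermediate_value_Icc hab hPc.continuousOn
    have hmem : θ ∈ Set.Icc (P a₁) (P b₁) :=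
      ⟨(ha₁ a₁ le_rfl).le, (hb₁ b₁ le_rfl).le⟩
    obtain ⟨x0, hx0m, hx0⟩ := this hmem
    exact ⟨x0, hx0m, hx0⟩
  obtain ⟨m, hmdef⟩ : ∃ m : ℝ, m = N x0 := ⟨_, rfl⟩
  have hm0 : 0 < m := hmdef ▸ hNpos x0
  have hm1 : m ≤ 1 := hmdef ▸ hNle1 x0
  -- antiderivative F and reaction f
  obtain ⟨f, hfdef⟩ : ∃ f : ℝ → ℝ, f = fun p => p * (1 - p) * (s * p - (2 * s - 1)) := ⟨_, rfl⟩
  obtain ⟨F, hFdef⟩ : ∃ F : ℝ → ℝ,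
      F = fun p => -s / 4 * p ^ 4 + (3 * s - 1) / 3 * p ^ 3 + -((2 * s - 1) / 2) * p ^ 2 :=
    ⟨_, rfl⟩
  have hfc : Continuous f := by rw [hfdef]; fun_prop
  have hFc : Continuous F := by rw [hFdef]; fun_prop
  have hF : ∀ p : ℝ, HasDerivAt F (f p) p := by
    intro p
    rw [hFdef, hfdef]
    have h1 : HasDerivAt (fun q : ℝ => q ^ 4) (4 * p ^ 3) p := by
      simpa using hasDerivAt_pow 4 p
    have h2 : HasDerivAt (fun q : ℝ => q ^ 3) (3 * p ^ 2) p := by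
      simpa using hasDerivAt_pow 3 p
    have h3 : HasDerivAt (fun q : ℝ => q ^ 2) (2 * p) p := by
      simpa using hasDerivAt_pow 2 p
    have h := ((h1.const_mul (-s / 4)).add (h2.const_mul ((3 * s - 1) / 3))).add
      (h3.const_mul (-((2 * s - 1) / 2)))
    refine h.congr_deriv ?_
    ring
  have hF0 : F 0 = 0 := by rw [hFdef]; norm_num
  have hF1 : F 1 = (2 - 3 * s) / 12 := by rw [hFdef]; ring
  have hFθ : F θ = -(2 * s - 1) ^ 3 / (12 * s ^ 3) := by
    rw [hFdef, hθdef]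
    field_simp
    ring
  -- the key constant
  obtain ⟨K, hKdef⟩ : ∃ K : ℝ, K = (r + 1) * F 1 - r * F θ := ⟨_, rfl⟩
  have hK : K < 0 := by
    have h12 : 12 * s ^ 3 * K = r * ((2 * s - 1) ^ 3 - s ^ 3 * (3 * s - 2)) - s ^ 3 * (3 * s - 2) := by
      rw [hKdef, hF1, hFθ]
      field_simp
      ring
    nlinarith [pow_pos hs 3]
  obtain ⟨δ, hδdef⟩ : ∃ δ : ℝ, δ = -(m ^ 2 * K) / 2 := ⟨_, rfl⟩
  have hδ0 : 0 < δ := by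
    have h : 0 < m ^ 2 := pow_pos hm0 2
    rw [hδdef]
    nlinarith
  -- choose the left endpoint a
  have hFP0 : Tendsto (fun x => F (P x)) atBot (nhds 0) := by
    have := (hFc.tendsto 0).comp hPlim
    rwa [hF0] at this
  obtain ⟨a₂, ha₂⟩ := eventually_atBot.1 (hFP0.eventually_const_lt (by nlinarith : K / 2 < 0))
  obtain ⟨a, hadef⟩ : ∃ a : ℝ, a = min a₂ x0 := ⟨_, rfl⟩
  have hax0 : a ≤ x0 := hadef ▸ min_le_right _ _
  have hFPa : K / 2 < F (P a) := ha₂ a (hadef ▸ min_le_left _ _)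
  -- energy function and its derivative
  obtain ⟨E, hEdef⟩ : ∃ E : ℝ → ℝ, E = fun x => N x ^ 2 * deriv P x ^ 2 / 2 := ⟨_, rfl⟩
  obtain ⟨Ed, hEddef⟩ : ∃ Ed : ℝ → ℝ,
      Ed = fun x => -(N x * deriv N x * deriv P x ^ 2) - c * N x ^ 2 * deriv P x ^ 2
        - N x ^ 2 * (r * (1 - N x) + 1) * f (P x) * deriv P x := ⟨_, rfl⟩
  have hEdc : Continuous Ed := by
    rw [hEddef]
    apply Continuous.sub
    apply Continuous.sub
    · fun_prop
    · fun_prop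
    · exact ((((hNc.pow 2).mul ((continuous_const.mul (continuous_const.sub hNc)).add
        continuous_const)).mul (hfc.comp hPc)).mul hP'c)
  have hE : ∀ x, HasDerivAt E (Ed x) x := by
    intro x
    rw [hEdef, hEddef]
    have hN : HasDerivAt N (deriv N x) x := (hNdiff x).hasDerivAt
    have hP' : HasDerivAt (deriv P) (deriv (deriv P) x) x := (hP'diff x).hasDerivAt
    have h := (((hN.pow 2).mul (hP'.pow 2)).div_const 2)
    have hPP : deriv (deriv P) x = -(c * deriv P x) - 2 * (deriv N x / N x) * deriv P x
        - (r * (1 - N x) + 1) * P x * (1 - P x) * (s * P x - (2 * s - 1)) := by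
      have := heqP x
      linarith
    refine h.congr_deriv ?_
    rw [hPP, hfdef]
    simp only [Pi.pow_apply]
    have hNx : N x ≠ 0 := (hNpos x).ne'
    field_simp
    ring
  -- pointwise lower bound on Ed (using c ≤ 0)
  obtain ⟨W, hWdef⟩ : ∃ W : ℝ → ℝ, W = fun x => -(N x ^ 2 * (r * (1 - N x) + 1) * f (P x) * deriv P x) := ⟨_, rfl⟩
  have hWc : Continuous W := by
    rw [hWdef]
    exact (((((hNc.pow 2).mul ((continuous_const.mul (continuous_const.sub hNc)).add
        continuous_const)).mul (hfc.comp hPc)).mul hP'c)).neg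
  have hEdW : ∀ x, W x ≤ Ed x := by
    intro x
    rw [hWdef, hEddef]
    simp only
    have h1 : 0 ≤ -(N x * deriv N x * deriv P x ^ 2) := by
      have h1a := mul_nonneg (mul_nonneg (hNpos x).le (neg_nonneg.2 (hN'np x)))
        (sq_nonneg (deriv P x))
      nlinarith [h1a]
    have h2 : 0 ≤ -(c * N x ^ 2 * deriv P x ^ 2) := by
      nlinarith [sq_nonneg (N x * deriv P x)]
    nlinarith
  -- FTC for F ∘ P
  have hFP : ∀ x : ℝ, HasDerivAt (fun y => F (P y)) (f (P x) * deriv P x) x := by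
    intro x
    exact (hF (P x)).comp x (hPdiff x).hasDerivAt
  -- main integral bound : for all b ≥ x0, E b - E a ≥ δ
  have key : ∀ b, x0 ≤ b → δ ≤ E b - E a := by
    intro b hx0b
    have hab' : a ≤ b := le_trans hax0 hx0b
    have hInt1 : IntervalIntegrable Ed MeasureTheory.volume a b := hEdc.intervalIntegrable a b
    have hEab : ∫ x in a..b, Ed x = E b - E a := by
      exact integral_eq_sub_of_hasDerivAt (fun x _ => hE x) hInt1
    -- ∫ W ≤ ∫ Ed
    have hWEd : ∫ x in a..b, W x ≤ ∫ x in a..b, Ed x :=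
      integral_mono_on hab' (hWc.intervalIntegrable a b) hInt1 (fun x _ => hEdW x)
    -- split the G integral
    obtain ⟨G, hGdef⟩ : ∃ G : ℝ → ℝ, G = fun x => N x ^ 2 * (r * (1 - N x) + 1) * f (P x) * deriv P x := ⟨_, rfl⟩
    have hGc : Continuous G := by
      rw [hGdef]
      exact (((hNc.pow 2).mul ((continuous_const.mul (continuous_const.sub hNc)).add
        continuous_const)).mul (hfc.comp hPc)).mul hP'c
    have hsplit : ∫ x in a..b, G x = (∫ x in a..x0, G x) + ∫ x in x0..b, G x :=
      (integral_add_adjacent_intervals (hGc.intervalIntegrable a x0)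
        (hGc.intervalIntegrable x0 b)).symm
    -- left piece
    have hleft : ∫ x in a..x0, G x ≤ m ^ 2 * (F θ - F (P a)) := by
      have hmono : ∫ x in a..x0, G x ≤ ∫ x in a..x0, m ^ 2 * (f (P x) * deriv P x) := by
        refine integral_mono_on hax0 (hGc.intervalIntegrable a x0)
          (((continuous_const.mul ((hfc.comp hPc).mul hP'c))).intervalIntegrable a x0) ?_
        intro x hx
        have hPx : P x ≤ θ := hx0 ▸ hPmono hx.2
        have hfnp : f (P x) ≤ 0 := by
          have h1 : s * P x - (2 * s - 1) ≤ 0 := by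
            have h1a : s * P x ≤ s * θ := mul_le_mul_of_nonneg_left hPx hs.le
            have h1b : s * θ = 2 * s - 1 := by rw [hθdef]; field_simp
            linarith
          have h2 : 0 ≤ P x * (1 - P x) := mul_nonneg (hPnn x) (by linarith [hPle1 x])
          rw [hfdef]
          simp only
          exact mul_nonpos_of_nonneg_of_nonpos h2 h1
        have hNx : m ≤ N x := hmdef ▸ hNanti.antitone hx.2
        have hw : m ^ 2 ≤ N x ^ 2 * (r * (1 - N x) + 1) := by
          have h1 : m ^ 2 ≤ N x ^ 2 := by nlinarith
          have h2 : 1 ≤ r * (1 - N x) + 1 := by nlinarith [hNle1 x]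
          nlinarith [sq_nonneg (N x)]
        rw [hGdef]
        simp only
        have := mul_le_mul_of_nonpos_right hw hfnp
        have := mul_le_mul_of_nonneg_right this (hP'nn x)
        linarith
      have hFTC : ∫ x in a..x0, f (P x) * deriv P x = F (P x0) - F (P a) :=
        integral_eq_sub_of_hasDerivAt (fun x _ => hFP x)
          (((hfc.comp hPc).mul hP'c).intervalIntegrable a x0)
      rw [integral_const_mul, hFTC, hx0] at hmono
      linarith
    -- right piece
    have hright : ∫ x in x0..b, G x ≤ m ^ 2 * (r + 1) * (F 1 - F θ) := by
      have hmono : ∫ x in x0..b, G x ≤ ∫ x in x0..b, m ^ 2 * (r + 1) * (f (P x) * deriv P x) := by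
        refine integral_mono_on hx0b (hGc.intervalIntegrable x0 b)
          (((continuous_const.mul ((hfc.comp hPc).mul hP'c))).intervalIntegrable x0 b) ?_
        intro x hx
        have hPx : θ ≤ P x := hx0 ▸ hPmono hx.1
        have hfn : 0 ≤ f (P x) := by
          have h1 : 0 ≤ s * P x - (2 * s - 1) := by
            have h1a : s * θ ≤ s * P x := mul_le_mul_of_nonneg_left hPx hs.le
            have h1b : s * θ = 2 * s - 1 := by rw [hθdef]; field_simp
            linarith
          have h2 : 0 ≤ P x * (1 - P x) := mul_nonneg (hPnn x) (by linarith [hPle1 x])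
          rw [hfdef]
          simp only
          exact mul_nonneg h2 h1
        have hNx : N x ≤ m := hmdef ▸ hNanti.antitone hx.1
        have hw : N x ^ 2 * (r * (1 - N x) + 1) ≤ m ^ 2 * (r + 1) := by
          have h0 := hNpos x
          have h1 : N x ^ 2 ≤ m ^ 2 := by nlinarith
          have h2 : r * (1 - N x) + 1 ≤ r + 1 := by nlinarith
          nlinarith
        rw [hGdef]
        simp only
        have := mul_le_mul_of_nonneg_right (mul_le_mul_of_nonneg_right hw hfn) (hP'nn x)
        linarith
      have hFTC : ∫ x in x0..b, f (P x) * deriv P x = F (P b) - F (P x0) :=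
        integral_eq_sub_of_hasDerivAt (fun x _ => hFP x)
          (((hfc.comp hPc).mul hP'c).intervalIntegrable x0 b)
      have hFPb : F (P b) ≤ F 1 := by
        have hPbθ : θ ≤ P b := hx0 ▸ hPmono hx0b
        have h1 : F 1 - F (P b) = ∫ p in (P b)..1, f p :=
          (integral_eq_sub_of_hasDerivAt (fun p _ => hF p) (hfc.intervalIntegrable _ _)).symm
        have h2 : 0 ≤ ∫ p in (P b)..1, f p := by
          refine integral_nonneg (hPle1 b) ?_
          intro p hp
          have hpθ : θ ≤ p := le_trans hPbθ hp.1
          have h3 : 0 ≤ s * p - (2 * s - 1) := by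
            have h3a : s * θ ≤ s * p := mul_le_mul_of_nonneg_left hpθ hs.le
            have h3b : s * θ = 2 * s - 1 := by rw [hθdef]; field_simp
            linarith
          have h4 : 0 ≤ p * (1 - p) := mul_nonneg (le_trans hθ0.le hpθ) (by linarith [hp.2])
          rw [hfdef]
          simp only
          exact mul_nonneg h4 h3
        linarith
      rw [integral_const_mul, hFTC, hx0] at hmono
      have hm2 : (0:ℝ) ≤ m ^ 2 * (r + 1) := by positivity
      nlinarith
    -- combine
    have hG : ∫ x in a..b, G x ≤ -δ := by
      rw [hsplit]
      have : m ^ 2 * (F θ - F (P a)) + m ^ 2 * (r + 1) * (F 1 - F θ)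
          = m ^ 2 * (K - F (P a)) := by rw [hKdef]; ring
      have hFPa' : F (P a) ≥ K / 2 := hFPa.le
      have hm2 : (0:ℝ) < m ^ 2 := pow_pos hm0 2
      have : m ^ 2 * (K - F (P a)) ≤ -δ := by
        rw [hδdef]
        nlinarith
      linarith
    have hWint : ∫ x in a..b, W x = -(∫ x in a..b, G x) := by
      rw [hWdef, hGdef, ← integral_neg]
    linarith
  -- derive a uniform positive lower bound on deriv P on [x0, ∞)
  have hEa : 0 ≤ E a := by
    rw [hEdef]
    positivity
  obtain ⟨σ, hσdef⟩ : ∃ σ : ℝ, σ = Real.sqrt (2 * δ) := ⟨_, rfl⟩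
  have hσ0 : 0 < σ := hσdef ▸ Real.sqrt_pos.2 (by linarith)
  have hP'big : ∀ b, x0 ≤ b → σ ≤ deriv P b := by
    intro b hb
    have h1 := key b hb
    have h2 : 2 * δ ≤ N b ^ 2 * deriv P b ^ 2 := by
      rw [hEdef] at h1
      simp only at h1
      nlinarith [sq_nonneg (N a * deriv P a)]
    have h3 : N b ^ 2 * deriv P b ^ 2 ≤ deriv P b ^ 2 := by
      have h4 := hNpos b
      have h5 := hNle1 b
      nlinarith [mul_nonneg (mul_nonneg (sub_nonneg.2 h5) (by linarith : (0:ℝ) ≤ 1 + N b))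
        (sq_nonneg (deriv P b))]
    have h6 : 2 * δ ≤ deriv P b ^ 2 := le_trans h2 h3
    have h7 : σ ≤ Real.sqrt (deriv P b ^ 2) := hσdef ▸ Real.sqrt_le_sqrt h6
    rwa [Real.sqrt_sq (hP'nn b)] at h7
  -- contradiction: P grows without bound
  obtain ⟨b, hbdef⟩ : ∃ b : ℝ, b = x0 + 2 / σ := ⟨_, rfl⟩
  have hx0b : x0 ≤ b := by
    have : 0 < 2 / σ := by positivity
    linarith
  have hPb : P b - P x0 = ∫ x in x0..b, deriv P x :=
    (integral_eq_sub_of_hasDerivAt (fun x _ => (hPdiff x).hasDerivAt)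
      (hP'c.intervalIntegrable x0 b)).symm
  have hlow : (b - x0) * σ ≤ ∫ x in x0..b, deriv P x := by
    have := integral_mono_on hx0b (_root_.intervalIntegrable_const (μ := MeasureTheory.volume) (a := x0) (b := b) (c := σ))
      (hP'c.intervalIntegrable x0 b) (fun x hx => hP'big x hx.1)
    rwa [integral_const, smul_eq_mul] at this
  have hbx : (b - x0) * σ = 2 := by
    rw [hbdef]
    field_simp
    ring
  have : 2 ≤ P b - P x0 := by rw [hPb]; rw [← hbx]; exact hlow
  have h1 := hPle1 b
  rw [hx0] at this
  linarith
end

section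
/- Let s ∈ [2/3, 1), 0 < r ≤ 4, c ∈ ℝ, and let (P, N) be a traveling wave of the gene-drive frequency system with speed c such that P is strictly increasing and P(x) → 1 as x → +∞. Then c > 0. -/
open Filter Set intervalIntegral MeasureTheory

lemma aux_mul_nn {a t : ℝ} (ha : a ≤ 0) (ht : t ≤ 0) : 0 ≤ a * t := by nlinarith

lemma aux_sign (wsv wv t q : ℝ) (h1 : 0 ≤ q) (h2 : 0 ≤ (wsv - wv) * t) :
    0 ≤ q - wv * t + wsv * t := by nlinarith

lemma aux_sign' (wsv wv t q : ℝ) (h1 : 0 ≤ q) (h2 : 0 < (wsv - wv) * t) :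
    0 < q - wv * t + wsv * t := by nlinarith

lemma aux_div1 (d w : ℝ) : d/(4*w) + d/(4*w) = d/(2*w) := by ring

lemma aux_div2 (d w : ℝ) (hw : w ≠ 0) : w * (d/(2*w)) = d/2 := by
  field_simp

lemma aux_pos_integral {f : ℝ → ℝ} (hf : Continuous f) (hnn : ∀ x, 0 ≤ f x)
    {a b y : ℝ} (hy : y ∈ Set.Ioo a b) (hfy : 0 < f y) :
    0 < ∫ x in a..b, f x := by
  obtain ⟨ε, hε, hball⟩ : ∃ ε > 0, Metric.ball y ε ⊆ {x | 0 < f x} :=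
    Metric.mem_nhds_iff.mp ((isOpen_lt continuous_const hf).mem_nhds hfy)
  set m : ℝ := min (ε/2) (min ((y - a)/2) ((b - y)/2)) with hm
  have hm0 : 0 < m := by
    apply lt_min (by linarith) (lt_min (by linarith [hy.1]) (by linarith [hy.2]))
  have hii : ∀ u v : ℝ, IntervalIntegrable f volume u v := fun u v =>
    hf.intervalIntegrable u v
  have hmid : 0 < ∫ x in (y - m)..(y + m), f x := by
    apply intervalIntegral_pos_of_pos_on (hii _ _) _ (by linarith)
    intro x hx
    apply hball
    simp only [Metric.mem_ball, Real.dist_eq]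
    have h1 : m ≤ ε/2 := min_le_left _ _
    rw [abs_lt]
    constructor <;> [skip; skip] <;> cases hx with
    | intro h2 h3 => linarith
  have h1 : 0 ≤ ∫ x in a..(y - m), f x := by
    apply intervalIntegral.integral_nonneg (by
      have : m ≤ (y - a)/2 := le_trans (min_le_right _ _) (min_le_left _ _)
      linarith) (fun u _ => hnn u)
  have h2 : 0 ≤ ∫ x in (y + m)..b, f x := by
    apply intervalIntegral.integral_nonneg (by
      have : m ≤ (b - y)/2 := le_trans (min_le_right _ _) (min_le_right _ _)
      linarith) (fun u _ => hnn u)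
  have e1 := intervalIntegral.integral_add_adjacent_intervals (hii a (y-m)) (hii (y-m) b)
  have e2 := intervalIntegral.integral_add_adjacent_intervals (hii (y-m) (y+m)) (hii (y+m) b)
  rw [← e1, ← e2]
  linarith

set_option maxHeartbeats 2000000 in
/-- For `s ∈ [2/3, 1)` and `0 < r ≤ 4`, a traveling wave of the
gene-drive frequency system with strictly increasing `P` and `P(x) → 1` as
`x → +∞` has speed `c > 0`. -/
theorem stmt11
    (s r c : ℝ) (hs0 : 2 / 3 ≤ s) (hs1 : s < 1) (hr : 0 < r) (hr4 : r ≤ 4)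
    (P N : ℝ → ℝ)
    (hP2 : ContDiff ℝ 2 P) (hN2 : ContDiff ℝ 2 N)
    (hNpos : ∀ x, 0 < N x)
    (hPbd : Bornology.IsBounded (Set.range P))
    (hNbd : Bornology.IsBounded (Set.range N))
    (hPnn : ∀ x, 0 ≤ P x)
    (hPmono : StrictMono P) (hNanti : StrictAnti N)
    (hPlim : Filter.Tendsto P Filter.atBot (nhds 0))
    (hNlim : Filter.Tendsto N Filter.atBot (nhds 1))
    (hPlim' : Filter.Tendsto P Filter.atTop (nhds 1))
    (heqP : ∀ x, -deriv (deriv P) x - c * deriv P x - 2 * (deriv N x / N x) * deriv P x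
      = (r * (1 - N x) + 1) * P x * (1 - P x) * (s * P x - (2 * s - 1)))
    (heqN : ∀ x, -deriv (deriv N) x - c * deriv N x
      = N x * ((1 - s + s * (1 - P x) ^ 2) * (r * (1 - N x) + 1) - 1)) :
    0 < c := by
  by_contra hc0
  push_neg at hc0
  -- basic constants
  have hs : (0:ℝ) < s := by linarith
  have h2s : (0:ℝ) < 2*s - 1 := by linarith
  set θ : ℝ := (2*s - 1)/s with hθdef
  have hθ0 : 0 < θ := div_pos h2s hs
  have hθ1 : θ < 1 := (div_lt_one hs).mpr (by linarith)
  have hθs : s * θ = 2*s - 1 := by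
    rw [hθdef]; field_simp
  -- differentiability package
  have hPd : Differentiable ℝ P := hP2.differentiable two_ne_zero
  have h2c : (2 : WithTop ℕ∞) = 1 + 1 := by norm_num
  have hP1 : ContDiff ℝ 1 (deriv P) := (contDiff_succ_iff_deriv.mp (h2c ▸ hP2)).2.2
  have hPd' : Differentiable ℝ (deriv P) := hP1.differentiable one_ne_zero
  have hPc' : Continuous (deriv P) := hPd'.continuous
  have hNd : Differentiable ℝ N := hN2.differentiable two_ne_zero
  have hN1 : ContDiff ℝ 1 (deriv N) := (contDiff_succ_iff_deriv.mp (h2c ▸ hN2)).2.2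
  have hNd' : Differentiable ℝ (deriv N) := hN1.differentiable one_ne_zero
  have hNc' : Continuous (deriv N) := hNd'.continuous
  have hPc : Continuous P := hPd.continuous
  have hNc : Continuous N := hNd.continuous
  -- bounds
  have hP1lt : ∀ x, P x < 1 := by
    intro x
    have h1 : P x < P (x+1) := hPmono (by linarith)
    have h2 : P (x+1) ≤ 1 := by
      refine ge_of_tendsto hPlim' ?_
      filter_upwards [Filter.eventually_ge_atTop (x+1)] with z hz
      exact hPmono.le_iff_le.mpr hz
    linarith
  have hPpos : ∀ x, 0 < P x := by
    intro x
    have := hPmono (show x - 1 < x by linarith)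
    linarith [hPnn (x-1)]
  have hN1lt : ∀ x, N x < 1 := by
    intro x
    have h1 : N x < N (x-1) := hNanti (by linarith)
    have h2 : N (x-1) ≤ 1 := by
      refine ge_of_tendsto hNlim ?_
      filter_upwards [Filter.eventually_le_atBot (x-1)] with z hz
      exact hNanti.le_iff_ge.mpr hz
    linarith
  -- deriv P is nonneg
  have hP'nn : ∀ x, 0 ≤ deriv P x := by
    intro x
    have h := (hPd x).hasDerivAt
    rw [hasDerivAt_iff_tendsto_slope] at h
    refine ge_of_tendsto h ?_
    filter_upwards [self_mem_nhdsWithin] with y hy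
    rcases lt_or_gt_of_ne (hy : y ≠ x) with h1 | h1
    · rw [slope_def_field]
      apply div_nonneg_of_nonpos <;> nlinarith [hPmono h1]
    · rw [slope_def_field]
      apply div_nonneg <;> nlinarith [hPmono h1]
  -- the key auxiliary functions
  set E : ℝ → ℝ := fun x => P x * (1 - P x) * (s * P x - (2*s - 1)) with hE
  set Q : ℝ → ℝ := fun x => (N x)^2 * deriv P x with hQ
  set QD : ℝ → ℝ := fun x =>
    -c * Q x - (N x)^2 * ((r * (1 - N x) + 1) * E x) with hQD
  set W : ℝ → ℝ := fun n => (r+1)*n^4 - r*n^5 with hW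
  have hQderiv : ∀ x, HasDerivAt Q (QD x) x := by
    intro x
    have hN' := (hNd x).hasDerivAt
    have hsq : HasDerivAt (fun x => (N x)^2) (2 * N x * deriv N x) x := by
      simpa [mul_comm, mul_assoc] using hN'.fun_pow 2
    have hp' := (hPd' x).hasDerivAt
    have h1 : HasDerivAt (fun x => (N x)^2 * deriv P x) _ x := hsq.fun_mul hp'
    convert h1 using 1
    have hNx : N x ≠ 0 := (hNpos x).ne'
    have d : N x * (N x)⁻¹ = 1 := mul_inv_cancel₀ hNx
    simp only [hQD, hQ, hE]
    linear_combination ((N x)^2) * (heqP x) + (2 * deriv N x * deriv P x * N x) * d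
  set H : ℝ → ℝ := fun x => Q x ^ 2 / 2 with hHdef
  set HD : ℝ → ℝ := fun x => Q x * QD x with hHD
  have hHderiv : ∀ x, HasDerivAt H (HD x) x := by
    intro x
    have : HasDerivAt (fun x => Q x ^ 2 / 2) _ x := ((hQderiv x).fun_pow 2).div_const 2
    convert this using 1
    simp only [hHD]; ring
  have hHnn : ∀ x, 0 ≤ H x := fun x => by positivity
  have hQnn : ∀ x, 0 ≤ Q x := fun x => mul_nonneg (by positivity) (hP'nn x)
  -- continuity
  have hQc : Continuous Q := ((hNc.pow 2).mul hPc')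
  have hQDc : Continuous QD := by
    simp only [hQD, hE]
    fun_prop
  have hHDc : Continuous HD := hQc.mul hQDc
  have hEc : Continuous (fun x => E x * deriv P x) := by
    simp only [hE]; fun_prop
  -- the antiderivative of E in terms of P
  set F : ℝ → ℝ := fun p => -s*p^4/4 + (3*s-1)*p^3/3 - (2*s-1)*p^2/2 with hF
  have hFderiv : ∀ p : ℝ, HasDerivAt F (p * (1 - p) * (s*p - (2*s-1))) p := by
    intro p
    have h1 : HasDerivAt (fun p : ℝ => -s*p^4/4 + (3*s-1)*p^3/3 - (2*s-1)*p^2/2)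
        (-s*(4*p^3)/4 + (3*s-1)*(3*p^2)/3 - (2*s-1)*(2*p^1)/2) p := by
      apply HasDerivAt.sub
      apply HasDerivAt.add
      · exact ((hasDerivAt_pow 4 p).const_mul (-s)).div_const 4
      · exact ((hasDerivAt_pow 3 p).const_mul (3*s-1)).div_const 3
      · exact ((hasDerivAt_pow 2 p).const_mul (2*s-1)).div_const 2
    convert h1 using 1
    ring
  have hFP : ∀ x, HasDerivAt (fun x => F (P x)) (E x * deriv P x) x := by
    intro x
    exact (hFderiv (P x)).comp x (hPd x).hasDerivAt
  have hFc : Continuous F := by simp only [hF]; fun_prop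
  -- FTC facts
  have hFTC1 : ∀ a b : ℝ, ∫ x in a..b, HD x = H b - H a := fun a b =>
    intervalIntegral.integral_eq_sub_of_hasDerivAt (fun x _ => hHderiv x)
      (hHDc.intervalIntegrable a b)
  have hFTC2 : ∀ a b : ℝ, ∫ x in a..b, E x * deriv P x = F (P b) - F (P a) := fun a b =>
    intervalIntegral.integral_eq_sub_of_hasDerivAt (fun x _ => hFP x)
      (hEc.intervalIntegrable a b)
  -- monotonicity of W on [0,1]
  have hWderiv : ∀ n : ℝ, HasDerivAt W ((r+1)*(4*n^3) - r*(5*n^4)) n := by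
    intro n
    exact ((hasDerivAt_pow 4 n).const_mul (r+1)).sub ((hasDerivAt_pow 5 n).const_mul r)
  have hWc : Continuous W := by simp only [hW]; fun_prop
  have hWmono : MonotoneOn W (Icc (0:ℝ) 1) := by
    apply monotoneOn_of_deriv_nonneg (convex_Icc 0 1) hWc.continuousOn
    · intro x hx
      exact ((hWderiv x).differentiableAt).differentiableWithinAt
    · intro x hx
      rw [interior_Icc] at hx
      rw [(hWderiv x).deriv]
      have h3 : 0 < x^3 := pow_pos hx.1 3
      have h4 : 0 < 4 + 4*r - 5*r*x := by nlinarith [mul_pos hr (sub_pos.mpr hx.2)]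
      nlinarith [mul_pos h3 h4]
  have hWstrict : StrictMonoOn W (Icc (0:ℝ) 1) := by
    apply strictMonoOn_of_deriv_pos (convex_Icc 0 1) hWc.continuousOn
    intro x hx
    rw [interior_Icc] at hx
    rw [(hWderiv x).deriv]
    have h3 : 0 < x^3 := pow_pos hx.1 3
    have h4 : 0 < 4 + 4*r - 5*r*x := by nlinarith [mul_pos hr (sub_pos.mpr hx.2)]
    nlinarith [mul_pos h3 h4]
  have hNmem : ∀ x, N x ∈ Icc (0:ℝ) 1 := fun x => ⟨(hNpos x).le, (hN1lt x).le⟩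
  -- pick the crossing point x* with P x* = θ
  obtain ⟨a₀, ha₀⟩ : ∃ a₀, P a₀ < θ := (hPlim.eventually (gt_mem_nhds hθ0)).exists
  obtain ⟨b₀, hb₀⟩ : ∃ b₀, θ < P b₀ := (hPlim'.eventually (lt_mem_nhds hθ1)).exists
  have hab₀ : a₀ < b₀ := hPmono.lt_iff_lt.mp (by linarith)
  obtain ⟨xs, hxsmem, hxs⟩ : ∃ xs ∈ Icc a₀ b₀, P xs = θ := by
    have := intermediate_value_Icc hab₀.le hPc.continuousOn
    exact this ⟨ha₀.le, hb₀.le⟩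
  set ws : ℝ := W (N xs) with hws
  have hws_eq : ws = (N xs)^4 * (r * (1 - N xs) + 1) := by simp only [hws, hW]; ring
  have hwspos : 0 < ws := by
    rw [hws_eq]
    have h1 := hNpos xs
    have h2 := hN1lt xs
    have h3 : 0 < r * (1 - N xs) + 1 := by nlinarith
    exact mul_pos (pow_pos h1 4) h3
  -- pointwise identity for HD
  have hHDeq : ∀ x, HD x = -c * Q x^2 - W (N x) * (E x * deriv P x) := by
    intro x
    simp only [hHD, hQD, hQ, hW, hE]
    ring
  -- sign of E
  have hEsign_le : ∀ x, x ≤ xs → E x ≤ 0 := by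
    intro x hx
    have hPx : P x ≤ θ := hxs ▸ (hPmono.monotone hx)
    have h1 : 0 ≤ P x := hPnn x
    have h2 : 0 ≤ 1 - P x := by linarith [hP1lt x]
    have h3 : s * P x - (2*s-1) ≤ 0 := by nlinarith [mul_le_mul_of_nonneg_left hPx hs.le, hθs]
    simp only [hE]
    exact mul_nonpos_of_nonneg_of_nonpos (mul_nonneg h1 h2) h3
  have hEsign_ge : ∀ x, xs ≤ x → 0 ≤ E x := by
    intro x hx
    have hPx : θ ≤ P x := hxs ▸ (hPmono.monotone hx)
    have h1 : 0 ≤ P x := hPnn x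
    have h2 : 0 ≤ 1 - P x := by linarith [hP1lt x]
    have h3 : 0 ≤ s * P x - (2*s-1) := by nlinarith [mul_le_mul_of_nonneg_left hPx hs.le, hθs]
    exact mul_nonneg (mul_nonneg h1 h2) h3
  -- W comparisons
  have hWle : ∀ x, x ≤ xs → ws ≤ W (N x) := fun x hx =>
    hWmono (hNmem xs) (hNmem x) (hNanti.antitone hx)
  have hWge : ∀ x, xs ≤ x → W (N x) ≤ ws := fun x hx =>
    hWmono (hNmem x) (hNmem xs) (hNanti.antitone hx)
  -- the nonnegative integrand φ
  set φ : ℝ → ℝ := fun x => HD x + ws * (E x * deriv P x) with hφ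
  have hφc : Continuous φ := hHDc.add (continuous_const.mul hEc)
  have hcQ2 : ∀ x, 0 ≤ -c * Q x^2 := fun x =>
    mul_nonneg (neg_nonneg.mpr hc0) (sq_nonneg _)
  have hφnn : ∀ x, 0 ≤ φ x := by
    intro x
    have hrest : 0 ≤ (ws - W (N x)) * (E x * deriv P x) := by
      rcases le_total x xs with hx | hx
      · have hEP : E x * deriv P x ≤ 0 :=
          mul_nonpos_of_nonpos_of_nonneg (hEsign_le x hx) (hP'nn x)
        exact aux_mul_nn (by linarith [hWle x hx]) hEP
      · exact mul_nonneg (by linarith [hWge x hx])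
          (mul_nonneg (hEsign_ge x hx) (hP'nn x))
    simp only [hφ]
    rw [hHDeq x]
    exact aux_sign ws (W (N x)) _ _ (hcQ2 x) hrest
  -- MVT gives a point where P' is positive in (xs, xs+1)
  obtain ⟨ξ, hξmem, hξ⟩ := exists_hasDerivAt_eq_slope P (deriv P)
      (show xs < xs + 1 by linarith) hPc.continuousOn (fun x _ => (hPd x).hasDerivAt)
  have hξpos : 0 < deriv P ξ := by
    rw [hξ]
    have h1 := hPmono (show xs < xs + 1 by linarith)
    have h2 : xs + 1 - xs = 1 := by ring
    rw [h2]
    simpa using sub_pos.mpr h1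
  have hφξ : 0 < φ ξ := by
    have hWξ : W (N ξ) < ws := hWstrict (hNmem ξ) (hNmem xs) (hNanti hξmem.1)
    have hPξ : θ < P ξ := hxs ▸ hPmono hξmem.1
    have hEξ : 0 < E ξ := by
      have h1 := hPpos ξ
      have h2 : 0 < 1 - P ξ := by linarith [hP1lt ξ]
      have h3 : 0 < s * P ξ - (2*s-1) := by nlinarith [mul_lt_mul_of_pos_left hPξ hs, hθs]
      exact mul_pos (mul_pos h1 h2) h3
    simp only [hφ]
    rw [hHDeq ξ]
    exact aux_sign' ws (W (N ξ)) _ _ (hcQ2 ξ)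
      (by nlinarith [mul_pos (mul_pos (sub_pos.mpr hWξ) hEξ) hξpos])
  set δ : ℝ := ∫ x in xs..(xs+1), φ x with hδdef
  have hδpos : 0 < δ := aux_pos_integral hφc hφnn hξmem hφξ
  clear_value θ E Q QD W H HD F φ δ ws
  -- main integral inequality
  have hmain : ∀ a b : ℝ, a ≤ xs → xs + 1 ≤ b →
      δ ≤ (H b - H a) + ws * (F (P b) - F (P a)) := by
    intro a b ha hb
    have e : ∫ x in a..b, φ x = (H b - H a) + ws * (F (P b) - F (P a)) := by
      have e1 : (∫ x in a..b, φ x)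
          = (∫ x in a..b, HD x) + ∫ x in a..b, ws * (E x * deriv P x) := by
        simp only [hφ]
        exact intervalIntegral.integral_add (hHDc.intervalIntegrable a b)
          ((continuous_const.mul hEc).intervalIntegrable a b)
      rw [e1, hFTC1, intervalIntegral.integral_const_mul, hFTC2]
    rw [← e]
    have hφi : ∀ u v : ℝ, IntervalIntegrable φ volume u v := fun u v =>
      hφc.intervalIntegrable u v
    have i1 := intervalIntegral.integral_add_adjacent_intervals (hφi a xs) (hφi xs b)
    have i2 := intervalIntegral.integral_add_adjacent_intervals
      (hφi xs (xs+1)) (hφi (xs+1) b)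
    have n1 : 0 ≤ ∫ x in a..xs, φ x :=
      intervalIntegral.integral_nonneg ha (fun u _ => hφnn u)
    have n2 : 0 ≤ ∫ x in (xs+1)..b, φ x :=
      intervalIntegral.integral_nonneg hb (fun u _ => hφnn u)
    rw [← i1, ← i2]
    linarith
  -- limits of F ∘ P
  have hF0 : F 0 = 0 := by simp [hF]
  have hF1 : F 1 ≤ 0 := by
    have : F 1 = -s/4 + (3*s-1)/3 - (2*s-1)/2 := by simp [hF]
    rw [this]; linarith
  have htb : Tendsto (fun a => F (P a)) atBot (nhds 0) := by
    have := (hFc.tendsto 0).comp hPlim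
    rw [hF0] at this
    exact this
  have htt : Tendsto (fun b => F (P b)) atTop (nhds (F 1)) := (hFc.tendsto 1).comp hPlim'
  have hq4 : (0:ℝ) < δ/(4*ws) := by positivity
  have hev1 : ∀ᶠ a in atBot, -(δ/(4*ws)) < F (P a) :=
    htb.eventually (lt_mem_nhds (show -(δ/(4*ws)) < (0:ℝ) by linarith))
  obtain ⟨A, hA1, hA2⟩ : ∃ A, -(δ/(4*ws)) < F (P A) ∧ A ≤ xs := by
    obtain ⟨A, h⟩ := (hev1.and (Filter.eventually_le_atBot xs)).exists
    exact ⟨A, h.1, h.2⟩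
  have hev2 : ∀ᶠ b in atTop, F (P b) < F 1 + δ/(4*ws) :=
    htt.eventually (gt_mem_nhds (show F 1 < F 1 + δ/(4*ws) by linarith))
  obtain ⟨B, hB⟩ := Filter.eventually_atTop.mp (hev2.and (Filter.eventually_ge_atTop (xs+1)))
  set sd : ℝ := Real.sqrt δ with hsd
  have hsdpos : 0 < sd := Real.sqrt_pos.mpr hδpos
  have hlow : ∀ b, B ≤ b → sd ≤ deriv P b := by
    intro b hb
    obtain ⟨hb1, hb2⟩ := hB b hb
    have hm := hmain A b hA2 hb2
    have hdiv : δ/(4*ws) + δ/(4*ws) = δ/(2*ws) := aux_div1 δ ws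
    have h1 : F (P b) - F (P A) ≤ δ/(2*ws) := by linarith
    have hws4 : ws * (F (P b) - F (P A)) ≤ δ/2 := by
      have h2 : ws * (F (P b) - F (P A)) ≤ ws * (δ/(2*ws)) :=
        mul_le_mul_of_nonneg_left h1 hwspos.le
      have h3 : ws * (δ/(2*ws)) = δ/2 := aux_div2 δ ws hwspos.ne'
      linarith
    have hHb : δ/2 ≤ H b := by linarith [hHnn A]
    have hq1 : δ ≤ Q b^2 := by
      simp only [hHdef] at hHb
      linarith
    have hQb : sd ≤ Q b := by
      calc sd ≤ Real.sqrt (Q b^2) := Real.sqrt_le_sqrt hq1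
        _ = Q b := Real.sqrt_sq (hQnn b)
    have h2 : Q b ≤ deriv P b := by
      have hN2le : (N b)^2 ≤ 1 := by nlinarith [hNpos b, hN1lt b]
      have h3 := hP'nn b
      simp only [hQ]
      nlinarith
    linarith
  -- final contradiction via MVT on [B, B + 3/sd]
  have hTpos : (0:ℝ) < 3/sd := by positivity
  obtain ⟨ξ2, hξ2mem, hξ2⟩ := exists_hasDerivAt_eq_slope P (deriv P)
      (show B < B + 3/sd by linarith) hPc.continuousOn (fun x _ => (hPd x).hasDerivAt)
  have h3 : sd ≤ deriv P ξ2 := hlow ξ2 hξ2mem.1.le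
  rw [hξ2] at h3
  have hden : B + 3/sd - B = 3/sd := by ring
  rw [hden, le_div_iff₀ hTpos] at h3
  have hsd3 : sd * (3/sd) = 3 := by field_simp
  have h5 := hP1lt (B + 3/sd)
  have h6 := hPpos B
  nlinarith [h3]
end
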